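/- arXiv:1310.1386 — 7 statements merged into one kernel-verified Lean document; each statement's English description precedes it below -/
import Mathlib

section
/- Let r ≥ 2 and k ≥ 1 be integers, let Δ: ℕ^(r) ↠ [k] be a surjective colouring, and let m ∈ F_Δ with m ≥ 2. Let a = a(m,Δ) be as guaranteed by the main lemma (so Σ_{i=0}^{r} C(a,i) ≥ m). If m = Σ_{i=t+1}^{r} C(a,i) + s + 1 for some integers s ≥ 0 and t with 0 ≤ t + 1 ≤ r, then there exists m' ∈ F_Δ with Σ_{i=t+1}^{r} C(a-1,i) + (1 - t/a)·s + 1 ≤ m' < m, where the left inequality is over the rationals. -/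
open Finset

/-- The set of colours attained by `Δ` on `r`-element subsets of `X`. -/
def coloursOn {α : Type*} (r : ℕ) (Δ : Finset ℕ → α) (X : Set ℕ) : Set α :=
  Δ '' {e : Finset ℕ | ↑e ⊆ X ∧ e.card = r}

/-- `γ(X)`: the number of colours attained by `Δ` on `r`-element subsets of `X`. -/
noncomputable def gamma {α : Type*} (r : ℕ) (Δ : Finset ℕ → α) (X : Set ℕ) : ℕ :=
  (coloursOn r Δ X).ncard

/-- `F_Δ`: the set of values `γ(X)` over infinite subsets `X ⊆ ℕ`. -/
def Fdelta {α : Type*} (r : ℕ) (Δ : Finset ℕ → α) : Set ℕ :=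
  {m | ∃ X : Set ℕ, X.Infinite ∧ gamma r Δ X = m}

/-- `Δ` is a surjective colouring of `ℕ^(r)`, the `r`-element subsets of `ℕ`,
onto the colour set `[k] = {1, …, k}`. -/
def IsColouring (r k : ℕ) (Δ : Finset ℕ → ℕ) : Prop :=
  (∀ e : Finset ℕ, e.card = r → Δ e ∈ Finset.Icc 1 k) ∧
  ∀ c ∈ Finset.Icc 1 k, ∃ e : Finset ℕ, e.card = r ∧ Δ e = c

/-- **Lemma 5, final part (Claim C).** Let `m ∈ F_Δ` with `m ≥ 2`, and let `X`, `A` be as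
guaranteed by the main lemma, with `a = |A|` (so that `Σ_{i=0}^{r} C(a,i) ≥ m`). If
`m = Σ_{i=t+1}^{r} C(a,i) + s + 1` with `s ≥ 0` and `0 ≤ t + 1 ≤ r`, then `F_Δ` meets
`[Σ_{i=t+1}^{r} C(a-1,i) + (1 - t/a)·s + 1, m)`. -/
theorem main_lemma_rep (r k : ℕ) (hr : 2 ≤ r) (hk : 1 ≤ k) (Δ : Finset ℕ → ℕ)
    (hΔ : IsColouring r k Δ) (m : ℕ) (hm : m ∈ Fdelta r Δ) (hm2 : 2 ≤ m)
    (X : Set ℕ) (hX : X.Infinite) (hXm : gamma r Δ X = m)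
    (A : Finset ℕ) (hAX : ↑A ⊆ X) (hAne : A.Nonempty)
    (hdet : ∀ e₁ e₂ : Finset ℕ, ↑e₁ ⊆ X → e₁.card = r → ↑e₂ ⊆ X → e₂.card = r →
      e₁ ∩ A = e₂ ∩ A → Δ e₁ = Δ e₂)
    (hdel : ∀ v ∈ A, gamma r Δ (X \ {v}) < m)
    (a : ℕ) (ha : a = A.card)
    (s t : ℕ) (ht : t + 1 ≤ r)
    (hrep : m = (∑ i ∈ Finset.Icc (t + 1) r, Nat.choose a i) + s + 1) :
    ∃ m' ∈ Fdelta r Δ,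
      ((∑ i ∈ Finset.Icc (t + 1) r, Nat.choose (a - 1) i : ℕ) : ℚ)
          + (1 - (t : ℚ) / (a : ℚ)) * (s : ℚ) + 1 ≤ (m' : ℚ) ∧
      m' < m := by
  classical
  have ha1 : 1 ≤ a := by rw [ha]; exact hAne.card_pos
  -- a finset D of r elements in X \ A
  have hXA : (X \ ↑A).Infinite := hX.diff A.finite_toSet
  obtain ⟨D, hDsub, hDcard⟩ := hXA.exists_subset_card_eq r
  -- representative sets: for each B ⊆ A with |B| ≤ r, an r-set e ⊆ X with e ∩ A = B
  have hkey : ∀ B : Finset ℕ, ∃ e : Finset ℕ,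
      B ⊆ A → B.card ≤ r → ↑e ⊆ X ∧ e.card = r ∧ e ∩ A = B := by
    intro B
    by_cases h : B ⊆ A ∧ B.card ≤ r
    · obtain ⟨hBA, hBr⟩ := h
      obtain ⟨D', hD'sub, hD'card⟩ : ∃ D' ⊆ D, D'.card = r - B.card :=
        Finset.exists_subset_card_eq (by omega)
      have hD'X : ∀ x ∈ D', x ∈ X \ ↑A := fun x hx => hDsub (hD'sub hx)
      have hdisj : Disjoint B D' := by
        rw [Finset.disjoint_left]
        intro x hxB hxD'
        exact (hD'X x hxD').2 (hBA hxB)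
      refine ⟨B ∪ D', fun _ _ => ⟨?_, ?_, ?_⟩⟩
      · intro x hx
        rcases Finset.mem_union.mp (by exact_mod_cast hx) with h | h
        · exact hAX (hBA h)
        · exact (hD'X x h).1
      · rw [Finset.card_union_of_disjoint hdisj, hD'card]; omega
      · rw [Finset.union_inter_distrib_right, Finset.inter_eq_left.mpr hBA]
        have : D' ∩ A = ∅ := by
          rw [Finset.eq_empty_iff_forall_notMem]
          intro x hx
          exact (hD'X x (Finset.mem_inter.mp hx).1).2
            (by exact_mod_cast (Finset.mem_inter.mp hx).2)
        rw [this, Finset.union_empty]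
    · exact ⟨∅, fun h1 h2 => absurd ⟨h1, h2⟩ h⟩
  choose E hE using hkey
  set c : Finset ℕ → ℕ := fun B => Δ (E B) with hc
  set P : Finset (Finset ℕ) := A.powerset.filter (fun B => B.card ≤ r) with hP
  have hmemP : ∀ B : Finset ℕ, B ∈ P ↔ B ⊆ A ∧ B.card ≤ r := by
    intro B; simp [hP, Finset.mem_filter, Finset.mem_powerset]
  set C : Finset ℕ := P.image c with hC
  -- colours on X are exactly the image of P under c
  have hcol : coloursOn r Δ X = ↑C := by
    ext χ
    constructor
    · rintro ⟨e, ⟨heX, her⟩, rfl⟩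
      have hBA : e ∩ A ⊆ A := Finset.inter_subset_right
      have hBr : (e ∩ A).card ≤ r := her ▸ Finset.card_le_card Finset.inter_subset_left
      obtain ⟨h1, h2, h3⟩ := hE (e ∩ A) hBA hBr
      have : Δ e = c (e ∩ A) := hdet e (E (e ∩ A)) heX her h1 h2 (by rw [h3])
      rw [this]
      exact Finset.mem_coe.mpr (Finset.mem_image.mpr ⟨e ∩ A, (hmemP _).mpr ⟨hBA, hBr⟩, rfl⟩)
    · intro hχ
      obtain ⟨B, hB, rfl⟩ := Finset.mem_image.mp (Finset.mem_coe.mp hχ)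
      obtain ⟨hBA, hBr⟩ := (hmemP B).mp hB
      obtain ⟨h1, h2, _⟩ := hE B hBA hBr
      exact ⟨E B, ⟨h1, h2⟩, rfl⟩
  -- colours on X \ {v} are exactly the image of Pv under c
  set Pv : ℕ → Finset (Finset ℕ) :=
    fun v => (A.erase v).powerset.filter (fun B => B.card ≤ r) with hPv
  set Cv : ℕ → Finset ℕ := fun v => (Pv v).image c with hCv
  have hmemPv : ∀ v, ∀ B : Finset ℕ, B ∈ Pv v ↔ B ⊆ A.erase v ∧ B.card ≤ r := by
    intro v B; simp [hPv, Finset.mem_filter, Finset.mem_powerset]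
  have hcolv : ∀ v ∈ A, coloursOn r Δ (X \ {v}) = ↑(Cv v) := by
    intro v hv
    ext χ
    constructor
    · rintro ⟨e, ⟨heX, her⟩, rfl⟩
      have heX' : ↑e ⊆ X := heX.trans Set.diff_subset
      have hvne : v ∉ e := by
        intro hve
        exact (heX hve).2 rfl
      have hBA : e ∩ A ⊆ A.erase v := by
        intro x hx
        obtain ⟨hx1, hx2⟩ := Finset.mem_inter.mp hx
        exact Finset.mem_erase.mpr ⟨fun h => hvne (h ▸ hx1), hx2⟩
      have hBA' : e ∩ A ⊆ A := Finset.inter_subset_right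
      have hBr : (e ∩ A).card ≤ r := her ▸ Finset.card_le_card Finset.inter_subset_left
      obtain ⟨h1, h2, h3⟩ := hE (e ∩ A) hBA' hBr
      have : Δ e = c (e ∩ A) := hdet e (E (e ∩ A)) heX' her h1 h2 (by rw [h3])
      rw [this]
      exact Finset.mem_coe.mpr (Finset.mem_image.mpr ⟨e ∩ A, (hmemPv v _).mpr ⟨hBA, hBr⟩, rfl⟩)
    · intro hχ
      obtain ⟨B, hB, rfl⟩ := Finset.mem_image.mp (Finset.mem_coe.mp hχ)
      obtain ⟨hBA, hBr⟩ := (hmemPv v B).mp hB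
      obtain ⟨h1, h2, h3⟩ := hE B (hBA.trans (Finset.erase_subset v A)) hBr
      refine ⟨E B, ⟨?_, h2⟩, rfl⟩
      intro x hx
      refine ⟨h1 hx, ?_⟩
      intro hxv
      simp only [Set.mem_singleton_iff] at hxv
      subst hxv
      have : x ∈ B := by
        rw [← h3]; exact Finset.mem_inter.mpr ⟨by exact_mod_cast hx, hv⟩
      exact (Finset.mem_erase.mp (hBA this)).1 rfl
  have hmC : C.card = m := by
    rw [← hXm]
    unfold gamma
    rw [hcol, Set.ncard_coe_finset]
  have hγv : ∀ v ∈ A, gamma r Δ (X \ {v}) = (Cv v).card := by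
    intro v hv
    unfold gamma
    rw [hcolv v hv, Set.ncard_coe_finset]
  -- minimal representatives
  have gmin : ∀ χ : ℕ, ∃ B : Finset ℕ, χ ∈ C →
      B ∈ P ∧ c B = χ ∧ ∀ B' ∈ P, c B' = χ → B.card ≤ B'.card := by
    intro χ
    by_cases h : χ ∈ C
    · obtain ⟨B₀, hB₀, hcB₀⟩ := Finset.mem_image.mp h
      have hne : (P.filter (fun B => c B = χ)).Nonempty :=
        ⟨B₀, Finset.mem_filter.mpr ⟨hB₀, hcB₀⟩⟩
      obtain ⟨B, hBmem, hBmin⟩ := Finset.exists_min_image _ Finset.card hne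
      obtain ⟨hB1, hB2⟩ := Finset.mem_filter.mp hBmem
      exact ⟨B, fun _ => ⟨hB1, hB2,
        fun B' hB' hcB' => hBmin B' (Finset.mem_filter.mpr ⟨hB', hcB'⟩)⟩⟩
    · exact ⟨∅, fun h' => absurd h' h⟩
  choose g hg using gmin
  have hgP : ∀ χ ∈ C, g χ ∈ P := fun χ hχ => (hg χ hχ).1
  have hgc : ∀ χ ∈ C, c (g χ) = χ := fun χ hχ => (hg χ hχ).2.1
  have hgmin : ∀ χ ∈ C, ∀ B' ∈ P, c B' = χ → (g χ).card ≤ B'.card :=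
    fun χ hχ => (hg χ hχ).2.2
  -- the key per-vertex bound
  have hvert : ∀ v ∈ A, m ≤ (Cv v).card + (C.filter (fun χ => v ∈ g χ)).card := by
    intro v hv
    have hCsub : C ⊆ Cv v ∪ C.filter (fun χ => v ∈ g χ) := by
      intro χ hχ
      by_cases hvg : v ∈ g χ
      · exact Finset.mem_union_right _ (Finset.mem_filter.mpr ⟨hχ, hvg⟩)
      · apply Finset.mem_union_left
        obtain ⟨hgA, hgr⟩ := (hmemP (g χ)).mp (hgP χ hχ)
        have : g χ ∈ Pv v := (hmemPv v _).mpr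
          ⟨fun x hx => Finset.mem_erase.mpr ⟨fun h => hvg (h ▸ hx), hgA hx⟩, hgr⟩
        exact Finset.mem_image.mpr ⟨g χ, this, hgc χ hχ⟩
    calc m = C.card := hmC.symm
      _ ≤ (Cv v ∪ C.filter (fun χ => v ∈ g χ)).card := Finset.card_le_card hCsub
      _ ≤ _ := Finset.card_union_le _ _
  -- double counting
  have hdouble : ∑ v ∈ A, (C.filter (fun χ => v ∈ g χ)).card
      = ∑ χ ∈ C, (g χ).card := by
    have : ∀ v, (C.filter (fun χ => v ∈ g χ)).card
        = ∑ χ ∈ C, if v ∈ g χ then 1 else 0 := by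
      intro v; rw [Finset.card_filter]
    simp_rw [this]
    rw [Finset.sum_comm]
    apply Finset.sum_congr rfl
    intro χ hχ
    have hgA : g χ ⊆ A := ((hmemP (g χ)).mp (hgP χ hχ)).1
    calc (∑ v ∈ A, if v ∈ g χ then 1 else 0)
        = (A.filter (fun v => v ∈ g χ)).card := (Finset.card_filter _ _).symm
      _ = (g χ).card := by
          congr 1
          rw [Finset.filter_mem_eq_inter, Finset.inter_eq_right.mpr hgA]
  -- bound on ∑ |g χ|
  set K : ℕ := ∑ i ∈ Finset.Icc (t + 1) r, (i - t) * Nat.choose a i with hK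
  have hbound : ∑ χ ∈ C, (g χ).card ≤ t * (m - 1) + K := by
    have hsplit : ∀ χ ∈ C, (g χ).card = min (g χ).card t + ((g χ).card - t) := by
      intro χ _; omega
    rw [Finset.sum_congr rfl hsplit, Finset.sum_add_distrib]
    have hEmptyP : (∅ : Finset ℕ) ∈ P := (hmemP ∅).mpr ⟨Finset.empty_subset A, by simp⟩
    have hχ₀ : c ∅ ∈ C := Finset.mem_image.mpr ⟨∅, hEmptyP, rfl⟩
    have hgz : (g (c ∅)).card = 0 := Nat.le_zero.mp (by
      simpa using hgmin (c ∅) hχ₀ ∅ hEmptyP rfl)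
    have hpartA : ∑ χ ∈ C, min (g χ).card t ≤ t * (m - 1) := by
      rw [← Finset.add_sum_erase _ _ hχ₀, hgz]
      simp only [Nat.zero_min, Nat.min_zero, zero_add]
      calc ∑ χ ∈ C.erase (c ∅), min (g χ).card t
          ≤ ∑ _χ ∈ C.erase (c ∅), t := Finset.sum_le_sum (fun χ _ => min_le_right _ _)
        _ = (C.erase (c ∅)).card * t := by rw [Finset.sum_const, smul_eq_mul]
        _ = (m - 1) * t := by rw [Finset.card_erase_of_mem hχ₀, hmC]
        _ = t * (m - 1) := Nat.mul_comm _ _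
    have hpartB : ∑ χ ∈ C, ((g χ).card - t) ≤ K := by
      have hinj : ∀ x ∈ C, ∀ y ∈ C, g x = g y → x = y := by
        intro x hx y hy hxy
        rw [← hgc x hx, ← hgc y hy, hxy]
      have h1 : ∑ χ ∈ C, ((g χ).card - t) = ∑ B ∈ C.image g, (B.card - t) := by
        rw [Finset.sum_image hinj]
      have h2 : C.image g ⊆ P := by
        intro B hB
        obtain ⟨χ, hχ, rfl⟩ := Finset.mem_image.mp hB
        exact hgP χ hχ
      have h3 : ∑ B ∈ C.image g, (B.card - t) ≤ ∑ B ∈ P, (B.card - t) :=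
        Finset.sum_le_sum_of_subset h2
      have h4 : ∑ B ∈ P, (B.card - t)
          = ∑ i ∈ Finset.range (r + 1), (i - t) * Nat.choose a i := by
        have hPbu : P = (Finset.range (r + 1)).biUnion (fun i => A.powersetCard i) := by
          ext B
          simp only [hmemP, Finset.mem_biUnion, Finset.mem_range, Finset.mem_powersetCard]
          constructor
          · rintro ⟨h1, h2⟩; exact ⟨B.card, by omega, h1, rfl⟩
          · rintro ⟨i, hi, h1, rfl⟩; exact ⟨h1, by omega⟩
        rw [hPbu, Finset.sum_biUnion]
        · apply Finset.sum_congr rfl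
          intro i _
          calc ∑ B ∈ A.powersetCard i, (B.card - t)
              = ∑ _B ∈ A.powersetCard i, (i - t) := by
                apply Finset.sum_congr rfl
                intro B hB
                rw [(Finset.mem_powersetCard.mp hB).2]
            _ = (A.powersetCard i).card * (i - t) := by rw [Finset.sum_const, smul_eq_mul]
            _ = (i - t) * Nat.choose a i := by
                rw [Finset.card_powersetCard, ← ha, Nat.mul_comm]
        · intro i _ j _ hij
          simp only [Function.onFun, Finset.disjoint_left]
          intro B hBi hBj
          exact hij ((Finset.mem_powersetCard.mp hBi).2.symm.trans
            (Finset.mem_powersetCard.mp hBj).2)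
      have h5 : ∑ i ∈ Finset.range (r + 1), (i - t) * Nat.choose a i = K := by
        rw [hK]
        symm
        apply Finset.sum_subset
        · intro i hi
          rw [Finset.mem_Icc] at hi
          rw [Finset.mem_range]; omega
        · intro i hi hni
          rw [Finset.mem_range] at hi
          rw [Finset.mem_Icc] at hni
          have : i - t = 0 := by omega
          rw [this, Nat.zero_mul]
      omega
    omega
  -- pick the best vertex
  obtain ⟨v₀, hv₀A, hv₀max⟩ := Finset.exists_max_image A (fun v => (Cv v).card) hAne
  have hmain : a * m ≤ a * (Cv v₀).card + (t * (m - 1) + K) := by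
    have h1 : ∑ v ∈ A, m ≤ ∑ v ∈ A, ((Cv v).card + (C.filter (fun χ => v ∈ g χ)).card) :=
      Finset.sum_le_sum hvert
    rw [Finset.sum_add_distrib, hdouble] at h1
    have h2 : ∑ v ∈ A, (Cv v).card ≤ ∑ _v ∈ A, (Cv v₀).card :=
      Finset.sum_le_sum (fun v hv => hv₀max v hv)
    simp only [Finset.sum_const, smul_eq_mul] at h1 h2 ⊢
    rw [ha]
    omega
  -- conclude
  refine ⟨gamma r Δ (X \ {v₀}), ⟨X \ {v₀}, hX.diff (Set.finite_singleton v₀), rfl⟩,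
    ?_, hdel v₀ hv₀A⟩
  rw [hγv v₀ hv₀A]
  set m' : ℕ := (Cv v₀).card with hm'
  -- rational arithmetic
  have haq : (0 : ℚ) < (a : ℚ) := by exact_mod_cast ha1
  set S1 : ℚ := ∑ i ∈ Finset.Icc (t + 1) r, (Nat.choose a i : ℚ) with hS1
  set S2 : ℚ := ∑ i ∈ Finset.Icc (t + 1) r, (i : ℚ) * (Nat.choose a i : ℚ) with hS2
  set S3 : ℚ := ∑ i ∈ Finset.Icc (t + 1) r, (Nat.choose (a - 1) i : ℚ) with hS3
  have hKq : (K : ℚ) = S2 - (t : ℚ) * S1 := by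
    rw [hK, hS2, hS1, Finset.mul_sum, ← Finset.sum_sub_distrib, Nat.cast_sum]
    apply Finset.sum_congr rfl
    intro i hi
    rw [Finset.mem_Icc] at hi
    have : ((i - t : ℕ) : ℚ) = (i : ℚ) - (t : ℚ) := by
      have := hi.1; push_cast [Nat.cast_sub (by omega : t ≤ i)]; ring
    rw [Nat.cast_mul, this]; ring
  have hS3q : (a : ℚ) * S3 = (a : ℚ) * S1 - S2 := by
    rw [hS3, hS1, hS2, Finset.mul_sum, Finset.mul_sum, ← Finset.sum_sub_distrib]
    apply Finset.sum_congr rfl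
    intro i _
    rcases le_or_gt i a with hia | hia
    · have hnat : Nat.choose (a - 1) i * a = Nat.choose a i * (a - i) := by
        have := Nat.choose_mul_succ_eq (a - 1) i
        have h1 : a - 1 + 1 = a := by omega
        rwa [h1] at this
      have : ((Nat.choose (a - 1) i * a : ℕ) : ℚ)
          = ((Nat.choose a i * (a - i) : ℕ) : ℚ) := by exact_mod_cast hnat
      push_cast [Nat.cast_sub hia] at this
      linarith [this]
    · rw [Nat.choose_eq_zero_of_lt hia, Nat.choose_eq_zero_of_lt (by omega : a - 1 < i)]
      push_cast; ring
  have hmq : (m : ℚ) = S1 + (s : ℚ) + 1 := by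
    rw [hrep]; push_cast [hS1]; ring
  have hmainq : (a : ℚ) * m ≤ (a : ℚ) * m' + (t : ℚ) * ((m : ℚ) - 1) + (K : ℚ) := by
    have h1 : ((m - 1 : ℕ) : ℚ) = (m : ℚ) - 1 := by
      push_cast [Nat.cast_sub (by omega : 1 ≤ m)]; ring
    have := hmain
    have h2 : ((a * m : ℕ) : ℚ) ≤ ((a * (Cv v₀).card + (t * (m - 1) + K) : ℕ) : ℚ) := by
      exact_mod_cast this
    push_cast [h1] at h2
    linarith
  have key : (a : ℚ) * (S3 + (1 - (t : ℚ) / (a : ℚ)) * (s : ℚ) + 1) ≤ (a : ℚ) * m' := by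
    have e1 : (a : ℚ) * (S3 + (1 - (t : ℚ) / (a : ℚ)) * (s : ℚ) + 1)
        = (a : ℚ) * S3 + ((a : ℚ) - t) * s + a := by
      field_simp
    rw [e1, hS3q]
    rw [hmq, hKq] at hmainq
    nlinarith [hmainq]
  have := le_of_mul_le_mul_left key haq
  have hgoal : ((∑ i ∈ Finset.Icc (t + 1) r, Nat.choose (a - 1) i : ℕ) : ℚ) = S3 := by
    rw [hS3]; push_cast; rfl
  rw [hgoal]
  linarith
end

section
/- Let r ≥ 2 and k ≥ 1 be integers, let Δ: ℕ^(r) ↠ [k] be a surjective colouring, and let m ∈ F_Δ. Then there exists an infinite set X ⊆ ℕ with γ(X) = m and a finite subset A ⊆ X such that: (i) for all r-element subsets e₁, e₂ of X, if e₁ ∩ A = e₂ ∩ A then Δ(e₁) = Δ(e₂); and (ii) γ(X \ {v}) < m for every v ∈ A. -/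
open Finset

/-- Infinite Ramsey theorem: any finite colouring of the `n`-element subsets of an
infinite set `S ⊆ ℕ` has an infinite monochromatic subset. -/
lemma ramsey_inf (N : ℕ) (n : ℕ) (f : Finset ℕ → Fin N) (S : Set ℕ) (hS : S.Infinite) :
    ∃ T : Set ℕ, T ⊆ S ∧ T.Infinite ∧ ∃ c, ∀ t : Finset ℕ, ↑t ⊆ T → t.card = n → f t = c := by
  induction n generalizing f S with
  | zero =>
    refine ⟨S, subset_rfl, hS, f ∅, fun t _ ht => ?_⟩
    rw [Finset.card_eq_zero] at ht; rw [ht]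
  | succ n ih =>
    classical
    -- the one-step construction
    have key : ∀ S' : Set ℕ, S'.Infinite →
        ∃ (x : ℕ) (c : Fin N) (T' : Set ℕ), x ∈ S' ∧ T' ⊆ S' ∧ T'.Infinite ∧
          (∀ y ∈ T', x < y) ∧
          ∀ t : Finset ℕ, ↑t ⊆ T' → t.card = n → f (insert x t) = c := by
      intro S' hS'
      have hne : S'.Nonempty := hS'.nonempty
      set x := sInf S' with hx
      have hxS : x ∈ S' := Nat.sInf_mem hne
      have hinf2 : (S' \ Set.Iic x).Infinite := hS'.diff (Set.finite_Iic x)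
      obtain ⟨T', hT'sub, hT'inf, c, hc⟩ := ih (fun t => f (insert x t)) (S' \ Set.Iic x) hinf2
      refine ⟨x, c, T', hxS, fun y hy => (hT'sub hy).1, hT'inf, ?_, hc⟩
      intro y hy
      have := (hT'sub hy).2
      simp only [Set.mem_Iic, not_le] at this
      exact this
    choose xf cf Tf hmem hsub hinf hlt hconst using fun S' (h : S'.Infinite) => key S' h
    -- iterate
    let State := {S' : Set ℕ // S'.Infinite ∧ S' ⊆ S}
    let step : State → State := fun st => ⟨Tf st.1 st.2.1, hinf st.1 st.2.1,
      (hsub st.1 st.2.1).trans st.2.2⟩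
    let g : ℕ → State := fun i => Nat.rec (⟨S, hS, subset_rfl⟩ : State) (fun _ prev => step prev) i
    have hg : ∀ i, g (i + 1) = step (g i) := fun i => rfl
    set X : ℕ → Set ℕ := fun i => (g i).1 with hX
    set xs : ℕ → ℕ := fun i => xf (g i).1 (g i).2.1 with hxs
    set cs : ℕ → Fin N := fun i => cf (g i).1 (g i).2.1 with hcs
    have hXsucc : ∀ i, X (i + 1) = Tf (g i).1 (g i).2.1 := fun i => rfl
    have hXmono : ∀ i j, i ≤ j → X j ⊆ X i := by
      intro i j hij
      induction j with
      | zero => obtain rfl : i = 0 := Nat.le_zero.mp hij; exact subset_rfl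
      | succ j ihj =>
        rcases Nat.lt_or_ge i (j+1) with h | h
        · have h1 : X (j+1) ⊆ X j := by rw [hXsucc]; exact hsub _ _
          exact h1.trans (ihj (by omega))
        · have : i = j + 1 := by omega
          subst this; exact subset_rfl
    have hxX : ∀ i, xs i ∈ X i := fun i => hmem _ _
    have hlt' : ∀ i, ∀ y ∈ X (i+1), xs i < y := by
      intro i y hy; rw [hXsucc] at hy; exact hlt _ _ y hy
    have hconst' : ∀ i, ∀ t : Finset ℕ, ↑t ⊆ X (i+1) → t.card = n →
        f (insert (xs i) t) = cs i := by
      intro i t ht hcard; rw [hXsucc] at ht; exact hconst _ _ t ht hcard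
    have hmono : StrictMono xs := by
      apply strictMono_nat_of_lt_succ
      intro i
      exact hlt' i (xs (i+1)) (hxX (i+1))
    -- pigeonhole on colours
    obtain ⟨c, hc⟩ := Finite.exists_infinite_fiber cs
    rw [Set.infinite_coe_iff] at hc
    refine ⟨xs '' (cs ⁻¹' {c}), ?_, hc.image (hmono.injective.injOn), c, ?_⟩
    · rintro y ⟨i, _, rfl⟩
      exact hXmono 0 i (Nat.zero_le i) (hxX i)
    · intro t ht hcard
      have htne : t.Nonempty := Finset.card_pos.mp (by omega)
      have hmin : t.min' htne ∈ t := Finset.min'_mem t htne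
      obtain ⟨i, hi, hxi⟩ := ht hmin
      have herase : (t.erase (t.min' htne)).card = n := by
        simp [Finset.card_erase_of_mem hmin, hcard]
      have hsub2 : ↑(t.erase (t.min' htne)) ⊆ X (i + 1) := by
        intro y hy
        have hyt : y ∈ t := Finset.mem_of_mem_erase hy
        have hyne : y ≠ t.min' htne := Finset.ne_of_mem_erase hy
        obtain ⟨j, hj, hxj⟩ := ht hyt
        have : xs i < xs j := by
          rw [hxi, hxj]
          exact lt_of_le_of_ne (Finset.min'_le t y hyt) (fun h => hyne h.symm)
        have hij : i < j := hmono.lt_iff_lt.mp this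
        rw [← hxj]
        exact hXmono (i+1) j hij (hxX j)
      have := hconst' i _ hsub2 herase
      rw [hxi, Finset.insert_erase hmin] at this
      rw [this]
      exact hi

/-- Simultaneous Ramsey: shrink `S` so that for each `s` in a finite family `F` of finite
sets disjoint from `S`, the colour `Δ (s ∪ t)` is constant over `(r - |s|)`-subsets `t`. -/
lemma multi_ramsey (k r : ℕ) (Δ : Finset ℕ → ℕ)
    (hΔ : ∀ e : Finset ℕ, e.card = r → Δ e ≤ k)
    (F : Finset (Finset ℕ)) (S : Set ℕ) (hS : S.Infinite)
    (hdisj : ∀ s ∈ F, ∀ y ∈ S, y ∉ s) (hcard : ∀ s ∈ F, s.card ≤ r) :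
    ∃ T : Set ℕ, T ⊆ S ∧ T.Infinite ∧ ∀ s ∈ F, ∃ c, ∀ t : Finset ℕ,
      ↑t ⊆ T → t.card = r - s.card → Δ (s ∪ t) = c := by
  classical
  induction F using Finset.induction_on generalizing S with
  | empty => exact ⟨S, subset_rfl, hS, by simp⟩
  | insert a F' hanotmem ih =>
    obtain ⟨T₁, hT₁sub, hT₁inf, hT₁⟩ := ih S hS
      (fun s hs => hdisj s (Finset.mem_insert_of_mem hs))
      (fun s hs => hcard s (Finset.mem_insert_of_mem hs))
    obtain ⟨T₂, hT₂sub, hT₂inf, c, hc⟩ := ramsey_inf (k + 1) (r - a.card)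
      (fun t => ⟨min (Δ (a ∪ t)) k, by omega⟩) T₁ hT₁inf
    refine ⟨T₂, hT₂sub.trans hT₁sub, hT₂inf, ?_⟩
    intro s hs
    rcases Finset.mem_insert.mp hs with rfl | hs'
    · refine ⟨(c : ℕ), fun t ht hcardt => ?_⟩
      have hdisj' : Disjoint s t := by
        rw [Finset.disjoint_left]
        intro x hx hxt
        exact hdisj s (Finset.mem_insert_self s F') x (hT₁sub (hT₂sub (ht hxt))) hx
      have hcardu : (s ∪ t).card = r := by
        rw [Finset.card_union_of_disjoint hdisj', hcardt]
        have := hcard s (Finset.mem_insert_self s F')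
        omega
      have hle := hΔ _ hcardu
      have := hc t ht hcardt
      have h2 : min (Δ (s ∪ t)) k = (c : ℕ) := congrArg Fin.val this
      rw [min_eq_left hle] at h2
      exact h2
    · obtain ⟨c', hc'⟩ := hT₁ s hs'
      exact ⟨c', fun t ht hcardt => hc' t (fun x hx => hT₂sub (ht hx)) hcardt⟩

lemma coloursOn_mono {α : Type*} (r : ℕ) (Δ : Finset ℕ → α) {X Y : Set ℕ} (h : X ⊆ Y) :
    coloursOn r Δ X ⊆ coloursOn r Δ Y :=
  Set.image_mono (fun e he => ⟨(Set.Subset.trans he.1 h), he.2⟩)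

lemma coloursOn_finite (r k : ℕ) (Δ : Finset ℕ → ℕ)
    (hΔ : ∀ e : Finset ℕ, e.card = r → Δ e ∈ Finset.Icc 1 k) (X : Set ℕ) :
    (coloursOn r Δ X).Finite := by
  apply Set.Finite.subset (Finset.Icc 1 k).finite_toSet
  rintro c ⟨e, ⟨_, hcard⟩, rfl⟩
  exact hΔ e hcard

/-- The key construction: inside any infinite set one finds an infinite subset attaining
exactly the same colours, on which the colouring is canonical w.r.t. a finite set `A`. -/
lemma canonical_exists (r k : ℕ) (Δ : Finset ℕ → ℕ)
    (hΔ1 : ∀ e : Finset ℕ, e.card = r → Δ e ∈ Finset.Icc 1 k)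
    (Y : Set ℕ) (hYinf : Y.Infinite) :
    ∃ (X : Set ℕ) (A : Finset ℕ), X.Infinite ∧ X ⊆ Y ∧
      coloursOn r Δ X = coloursOn r Δ Y ∧ ↑A ⊆ X ∧
      (∀ e₁ e₂ : Finset ℕ, ↑e₁ ⊆ X → e₁.card = r → ↑e₂ ⊆ X → e₂.card = r →
        e₁ ∩ A = e₂ ∩ A → Δ e₁ = Δ e₂) := by
  classical
  have hfin : (coloursOn r Δ Y).Finite := coloursOn_finite r k Δ hΔ1 Y
  have hwit : ∀ c : ℕ, c ∈ coloursOn r Δ Y → ∃ e : Finset ℕ, ↑e ⊆ Y ∧ e.card = r ∧ Δ e = c := by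
    rintro c ⟨e, ⟨h1, h2⟩, rfl⟩; exact ⟨e, h1, h2, rfl⟩
  set g : ℕ → Finset ℕ := fun c => if h : c ∈ coloursOn r Δ Y then (hwit c h).choose else ∅
    with hgdef
  have hgspec : ∀ c, ∀ h : c ∈ coloursOn r Δ Y, ↑(g c) ⊆ Y ∧ (g c).card = r ∧ Δ (g c) = c := by
    intro c h; rw [hgdef]; simp only [dif_pos h]; exact (hwit c h).choose_spec
  set W : Finset ℕ := hfin.toFinset.biUnion g with hWdef
  have hgW : ∀ c, c ∈ coloursOn r Δ Y → g c ⊆ W :=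
    fun c h => Finset.subset_biUnion_of_mem g (hfin.mem_toFinset.mpr h)
  have hWY : ↑W ⊆ Y := by
    intro x hx
    obtain ⟨c, hc, hxc⟩ := Finset.mem_biUnion.mp hx
    exact (hgspec c (hfin.mem_toFinset.mp hc)).1 hxc
  -- Ramsey shrinking
  have hΔk : ∀ e : Finset ℕ, e.card = r → Δ e ≤ k := fun e h => (Finset.mem_Icc.mp (hΔ1 e h)).2
  obtain ⟨T, hTsub, hTinf, hT⟩ := multi_ramsey k r Δ hΔk
    (W.powerset.filter (fun s => s.card < r)) (Y \ ↑W) (hYinf.diff W.finite_toSet)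
    (by
      intro s hs y hy hys
      have hsW : s ⊆ W := Finset.mem_powerset.mp (Finset.mem_filter.mp hs).1
      exact hy.2 (hsW hys))
    (fun s hs => (Finset.mem_filter.mp hs).2.le)
  refine ⟨↑W ∪ T, W, hTinf.mono Set.subset_union_right, ?_, ?_, Set.subset_union_left, ?_⟩
  · exact Set.union_subset hWY (hTsub.trans Set.diff_subset)
  · apply Set.Subset.antisymm
    · exact coloursOn_mono r Δ (Set.union_subset hWY (hTsub.trans Set.diff_subset))
    · intro c hc
      obtain ⟨h1, h2, h3⟩ := hgspec c hc
      exact ⟨g c, ⟨fun x hx => Or.inl (hgW c hc hx), h2⟩, h3⟩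
  · intro e₁ e₂ h1 hc1 h2 hc2 heq
    have hsle : (e₁ ∩ W).card ≤ r := by
      have := Finset.card_le_card (Finset.inter_subset_left (s₂ := W) (s₁ := e₁))
      omega
    rcases eq_or_lt_of_le hsle with heqr | hlt
    · have h1e : e₁ ∩ W = e₁ :=
        Finset.eq_of_subset_of_card_le Finset.inter_subset_left (by omega)
      have h2e : e₂ ∩ W = e₂ :=
        Finset.eq_of_subset_of_card_le Finset.inter_subset_left (by rw [← heq]; omega)
      rw [← h1e, ← h2e, heq]
    · have hsF : e₁ ∩ W ∈ W.powerset.filter (fun s => s.card < r) :=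
        Finset.mem_filter.mpr ⟨Finset.mem_powerset.mpr Finset.inter_subset_right, hlt⟩
      obtain ⟨c, hc⟩ := hT (e₁ ∩ W) hsF
      have key : ∀ e : Finset ℕ, ↑e ⊆ ↑W ∪ T → e.card = r → e ∩ W = e₁ ∩ W → Δ e = c := by
        intro e he hce hes
        have htsub : ↑(e \ W) ⊆ T := by
          intro x hx
          rw [Finset.coe_sdiff, Set.mem_diff] at hx
          rcases he hx.1 with hxW | hxT
          · exact absurd hxW hx.2
          · exact hxT
        have hcard' : (e \ W).card = r - (e₁ ∩ W).card := by
          have h := Finset.card_inter_add_card_sdiff e W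
          rw [hes] at h
          omega
        have := hc (e \ W) htsub hcard'
        rw [← hes, Finset.union_comm, Finset.sdiff_union_inter] at this
        exact this
      rw [key e₁ h1 hc1 rfl, key e₂ h2 hc2 heq.symm]

/-- **Claim A.** For `m ∈ F_Δ` there is an infinite `m`-coloured set `X ⊆ ℕ` with a finite
subset `A ⊆ X` such that (i) the colour of every `r`-subset of `X` is determined by its
intersection with `A`, and (ii) `γ(X \ {v}) < m` for all `v ∈ A`. -/
theorem claim_A (r k : ℕ) (hr : 2 ≤ r) (hk : 1 ≤ k) (Δ : Finset ℕ → ℕ)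
    (hΔ : IsColouring r k Δ) (m : ℕ) (hm : m ∈ Fdelta r Δ) :
    ∃ X : Set ℕ, X.Infinite ∧ gamma r Δ X = m ∧
      ∃ A : Finset ℕ, ↑A ⊆ X ∧
        (∀ e₁ e₂ : Finset ℕ, ↑e₁ ⊆ X → e₁.card = r → ↑e₂ ⊆ X → e₂.card = r →
          e₁ ∩ A = e₂ ∩ A → Δ e₁ = Δ e₂) ∧
        ∀ v ∈ A, gamma r Δ (X \ {v}) < m := by
  classical
  obtain ⟨Y, hYinf, hgam⟩ := hm
  obtain ⟨X0, A0, hX0inf, hX0sub, hcol, hA0sub, hcanon⟩ := canonical_exists r k Δ hΔ.1 Y hYinf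
  have hg0 : gamma r Δ X0 = m := by
    unfold gamma at hgam ⊢; rw [hcol]; exact hgam
  have main : ∀ n (X : Set ℕ) (A : Finset ℕ), A.card = n → X.Infinite → gamma r Δ X = m →
      ↑A ⊆ X → (∀ e₁ e₂ : Finset ℕ, ↑e₁ ⊆ X → e₁.card = r → ↑e₂ ⊆ X → e₂.card = r →
        e₁ ∩ A = e₂ ∩ A → Δ e₁ = Δ e₂) →
      ∃ X : Set ℕ, X.Infinite ∧ gamma r Δ X = m ∧
        ∃ A : Finset ℕ, ↑A ⊆ X ∧
          (∀ e₁ e₂ : Finset ℕ, ↑e₁ ⊆ X → e₁.card = r → ↑e₂ ⊆ X → e₂.card = r →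
            e₁ ∩ A = e₂ ∩ A → Δ e₁ = Δ e₂) ∧
          ∀ v ∈ A, gamma r Δ (X \ {v}) < m := by
    intro n
    induction n using Nat.strong_induction_on with
    | _ n ih =>
      intro X A hAcard hXinf' hgam' hAX hcan
      by_cases hall : ∀ v ∈ A, gamma r Δ (X \ {v}) < m
      · exact ⟨X, hXinf', hgam', A, hAX, hcan, hall⟩
      · push_neg at hall
        obtain ⟨v, hvA, hge⟩ := hall
        have hle : gamma r Δ (X \ {v}) ≤ m := by
          rw [← hgam']
          exact Set.ncard_le_ncard (coloursOn_mono r Δ Set.diff_subset)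
            (coloursOn_finite r k Δ hΔ.1 X)
        have hAne : A.card ≠ 0 := Finset.card_ne_zero_of_mem hvA
        have key : ∀ e : Finset ℕ, ↑e ⊆ X \ {v} → e ∩ A.erase v = e ∩ A := by
          intro e he
          ext x
          simp only [Finset.mem_inter, Finset.mem_erase]
          constructor
          · rintro ⟨hxe, _, hxA⟩; exact ⟨hxe, hxA⟩
          · rintro ⟨hxe, hxA⟩
            exact ⟨hxe, fun h => (he hxe).2 (by simp [h]), hxA⟩
        refine ih (A.erase v).card (by rw [Finset.card_erase_of_mem hvA, hAcard]; omega)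
          (X \ {v}) (A.erase v) rfl (hXinf'.diff (Set.finite_singleton v))
          (le_antisymm hle hge) ?_ ?_
        · intro x hx
          have hxA := Finset.mem_of_mem_erase hx
          exact ⟨hAX hxA, by simpa using Finset.ne_of_mem_erase hx⟩
        · intro e₁ e₂ h1 hc1 h2 hc2 heq2
          exact hcan e₁ e₂ (h1.trans Set.diff_subset) hc1 (h2.trans Set.diff_subset) hc2
            (by rw [← key e₁ h1, ← key e₂ h2, heq2])
  exact main A0.card X0 A0 rfl hX0inf hg0 hA0sub hcanon
end

section
/- Let r ≥ 2 and k ≥ 1 be integers and Δ: ℕ^(r) ↠ [k] a surjective colouring. Let m ≥ 2, let X ⊆ ℕ be infinite with γ(X) = m, and let A ⊆ X be a finite set of size a such that the colour of every r-subset e of X is determined by e ∩ A, and γ(X \ {v}) < m for all v ∈ A. Then: (1) for every v ∈ A, the set X₁ = X \ {v} satisfies m - Σ_{i=0}^{r-1} C(a-1,i) ≤ γ(X₁) < m; and (2) there exists v ∈ A such that X₂ = X \ {v} satisfies m - r(m-1)/a ≤ γ(X₂) < m, where the lower bound is an inequality of rationals. -/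
open Finset

/-- **Claim B.** Let `X` be infinite with `γ(X) = m ≥ 2` and let `A ⊆ X` be finite of size
`a` such that colours of `r`-subsets of `X` are determined by their intersection with `A`
and `γ(X \ {v}) < m` for all `v ∈ A`. Then (1) for every `v ∈ A`,
`m - Σ_{i=0}^{r-1} C(a-1,i) ≤ γ(X \ {v}) < m`, and (2) there is `v ∈ A` with
`m - r(m-1)/a ≤ γ(X \ {v}) < m`. -/
theorem claim_B (r k : ℕ) (hr : 2 ≤ r) (hk : 1 ≤ k) (Δ : Finset ℕ → ℕ)
    (hΔ : IsColouring r k Δ) (m : ℕ) (hm2 : 2 ≤ m)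
    (X : Set ℕ) (hX : X.Infinite) (hXm : gamma r Δ X = m)
    (A : Finset ℕ) (hAX : ↑A ⊆ X) (a : ℕ) (ha : a = A.card)
    (hdet : ∀ e₁ e₂ : Finset ℕ, ↑e₁ ⊆ X → e₁.card = r → ↑e₂ ⊆ X → e₂.card = r →
      e₁ ∩ A = e₂ ∩ A → Δ e₁ = Δ e₂)
    (hdel : ∀ v ∈ A, gamma r Δ (X \ {v}) < m) :
    (∀ v ∈ A,
      (m : ℚ) - ((∑ i ∈ Finset.range r, Nat.choose (a - 1) i : ℕ) : ℚ)
          ≤ (gamma r Δ (X \ {v}) : ℚ) ∧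
      gamma r Δ (X \ {v}) < m) ∧
    ∃ v ∈ A,
      (m : ℚ) - (r : ℚ) * ((m : ℚ) - 1) / (a : ℚ) ≤ (gamma r Δ (X \ {v}) : ℚ) ∧
      gamma r Δ (X \ {v}) < m := by
  classical
  -- the colours on X form a finite set
  have hCfin : (coloursOn r Δ X).Finite := by
    apply Set.Finite.subset (Finset.Icc 1 k).finite_toSet
    rintro c ⟨e, ⟨heX, her⟩, rfl⟩
    exact hΔ.1 e her
  set C : Finset ℕ := hCfin.toFinset with hCdef
  have hmemC : ∀ c, c ∈ C ↔ c ∈ coloursOn r Δ X := fun c => hCfin.mem_toFinset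
  have hCcard : C.card = m := by
    rw [← hXm]
    exact (Set.ncard_eq_toFinset_card _ hCfin).symm
  -- choose an edge for each colour
  have hedge : ∀ c ∈ coloursOn r Δ X,
      ∃ e : Finset ℕ, ↑e ⊆ X ∧ e.card = r ∧ Δ e = c := by
    rintro c ⟨e, ⟨h1, h2⟩, rfl⟩; exact ⟨e, h1, h2, rfl⟩
  choose! edge hedge1 hedge2 hedge3 using hedge
  -- lost colours
  set L : ℕ → Finset ℕ := fun v => C.filter (fun c => c ∉ coloursOn r Δ (X \ {v}))
    with hLdef
  -- key lemma: a lost colour only appears on edges through v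
  have keyL : ∀ v, ∀ c ∈ L v, ∀ e : Finset ℕ, ↑e ⊆ X → e.card = r → Δ e = c → v ∈ e := by
    intro v c hc e heX her heΔ
    by_contra hv
    have hc2 := (Finset.mem_filter.mp hc).2
    exact hc2 ⟨e, ⟨fun x hx => ⟨heX hx, fun hxv => hv (hxv ▸ hx)⟩, her⟩, heΔ⟩
  -- m ≤ γ(X \ {v}) + |L v|
  have hsub : ∀ v : ℕ, coloursOn r Δ (X \ {v}) ⊆ coloursOn r Δ X := by
    rintro v c ⟨e, ⟨h1, h2⟩, rfl⟩
    exact ⟨e, ⟨fun x hx => (h1 hx).1, h2⟩, rfl⟩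
  have hsplit : ∀ v : ℕ, m ≤ gamma r Δ (X \ {v}) + (L v).card := by
    intro v
    have h1 : coloursOn r Δ X ⊆ coloursOn r Δ (X \ {v}) ∪ ↑(L v) := by
      intro c hc
      by_cases h : c ∈ coloursOn r Δ (X \ {v})
      · exact Or.inl h
      · exact Or.inr (Finset.mem_coe.mpr (Finset.mem_filter.mpr ⟨(hmemC c).mpr hc, h⟩))
    have hfin : (coloursOn r Δ (X \ {v}) ∪ ↑(L v)).Finite :=
      (hCfin.subset (hsub v)).union (L v).finite_toSet
    calc m = (coloursOn r Δ X).ncard := hXm.symm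
      _ ≤ (coloursOn r Δ (X \ {v}) ∪ ↑(L v)).ncard := Set.ncard_le_ncard h1 hfin
      _ ≤ (coloursOn r Δ (X \ {v})).ncard + (↑(L v) : Set ℕ).ncard :=
          Set.ncard_union_le _ _
      _ = gamma r Δ (X \ {v}) + (L v).card := by rw [Set.ncard_coe_finset]; rfl
  -- bound |L v| ≤ Σ_{i<r} C(a-1, i)
  have hL1 : ∀ v ∈ A, (L v).card ≤ ∑ i ∈ Finset.range r, Nat.choose (a - 1) i := by
    intro v hvA
    have hedgeL : ∀ c ∈ L v, v ∈ edge c ∩ A ∧ ↑(edge c) ⊆ X ∧ (edge c).card = r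
        ∧ Δ (edge c) = c := by
      intro c hc
      have hcC : c ∈ coloursOn r Δ X := (hmemC c).mp (Finset.mem_filter.mp hc).1
      have h1 := hedge1 c hcC
      have h2 := hedge2 c hcC
      have h3 := hedge3 c hcC
      exact ⟨Finset.mem_inter.mpr ⟨keyL v c hc _ h1 h2 h3, hvA⟩, h1, h2, h3⟩
    have hcard := Finset.card_le_card_of_injOn
      (f := fun c => (edge c ∩ A).erase v)
      (t := (Finset.range r).biUnion (fun i => (A.erase v).powersetCard i))
      (fun c hc => by
        obtain ⟨hvint, h1, h2, h3⟩ := hedgeL c hc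
        refine Finset.mem_biUnion.mpr ⟨((edge c ∩ A).erase v).card, ?_, ?_⟩
        · refine Finset.mem_range.mpr ?_
          have hle : (edge c ∩ A).card ≤ r := h2 ▸ Finset.card_le_card
            Finset.inter_subset_left
          have := Finset.card_erase_of_mem hvint
          omega
        · exact Finset.mem_powersetCard.mpr
            ⟨Finset.erase_subset_erase v Finset.inter_subset_right, rfl⟩)
      (by
        intro c₁ hc₁ c₂ hc₂ heq
        obtain ⟨hv1, h11, h12, h13⟩ := hedgeL c₁ hc₁
        obtain ⟨hv2, h21, h22, h23⟩ := hedgeL c₂ hc₂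
        have heq' : (edge c₁ ∩ A).erase v = (edge c₂ ∩ A).erase v := heq
        have hint : edge c₁ ∩ A = edge c₂ ∩ A := by
          rw [← Finset.insert_erase hv1, heq', Finset.insert_erase hv2]
        rw [← h13, ← h23]
        exact hdet _ _ h11 h12 h21 h22 hint)
    refine hcard.trans (Finset.card_biUnion_le.trans ?_)
    refine le_of_eq (Finset.sum_congr rfl fun i _ => ?_)
    rw [Finset.card_powersetCard, Finset.card_erase_of_mem hvA, ha]
  -- Part 1
  have part1 : ∀ v ∈ A,
      (m : ℚ) - ((∑ i ∈ Finset.range r, Nat.choose (a - 1) i : ℕ) : ℚ)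
          ≤ (gamma r Δ (X \ {v}) : ℚ) ∧ gamma r Δ (X \ {v}) < m := by
    intro v hv
    refine ⟨?_, hdel v hv⟩
    have h1 := hsplit v
    have h2 := hL1 v hv
    have : m ≤ gamma r Δ (X \ {v}) + ∑ i ∈ Finset.range r, Nat.choose (a - 1) i := by
      omega
    have := (Nat.cast_le (α := ℚ)).mpr this
    push_cast at this ⊢
    linarith
  refine ⟨part1, ?_⟩
  -- an edge disjoint from A
  obtain ⟨e₀, he₀X, he₀r⟩ := (hX.diff A.finite_toSet).exists_subset_card_eq r
  have he₀X' : ↑e₀ ⊆ X := fun x hx => (he₀X hx).1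
  set c₀ : ℕ := Δ e₀ with hc₀def
  have hc₀C : c₀ ∈ C := (hmemC c₀).mpr ⟨e₀, ⟨he₀X', he₀r⟩, rfl⟩
  -- A is nonempty
  have hAne : A.Nonempty := by
    rw [Finset.nonempty_iff_ne_empty]
    rintro rfl
    have hsub1 : coloursOn r Δ X ⊆ {c₀} := by
      rintro c ⟨e, ⟨h1, h2⟩, rfl⟩
      exact hdet e e₀ h1 h2 he₀X' he₀r (by simp)
    have hle : (coloursOn r Δ X).ncard ≤ 1 := by
      simpa using Set.ncard_le_ncard hsub1 (Set.finite_singleton _)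
    have hle2 : gamma r Δ X ≤ 1 := hle
    omega
  have ha1 : 1 ≤ a := by
    rw [ha]; exact Finset.card_pos.mpr hAne
  -- double counting
  have hdc : ∑ v ∈ A, (L v).card ≤ r * (m - 1) := by
    have step1 : ∑ v ∈ A, (L v).card
        = ∑ c ∈ C, (A.filter fun v => c ∈ L v).card := by
      calc ∑ v ∈ A, (L v).card
          = ∑ v ∈ A, ∑ c ∈ C, if c ∈ L v then 1 else 0 := by
            refine Finset.sum_congr rfl fun v _ => ?_
            rw [hLdef]
            simp only [Finset.card_filter]
            refine Finset.sum_congr rfl fun c hc => ?_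
            by_cases h : c ∈ coloursOn r Δ (X \ {v}) <;>
              simp [Finset.mem_filter, hc, h]
        _ = ∑ c ∈ C, ∑ v ∈ A, if c ∈ L v then 1 else 0 := Finset.sum_comm
        _ = ∑ c ∈ C, (A.filter fun v => c ∈ L v).card := by
            refine Finset.sum_congr rfl fun c _ => ?_
            rw [Finset.card_filter]
    have hzero : (A.filter fun v => c₀ ∈ L v) = ∅ := by
      refine Finset.filter_eq_empty_iff.mpr fun v hv hcv => ?_
      have := keyL v c₀ hcv e₀ he₀X' he₀r rfl
      exact (he₀X this).2 hv
    have hbound : ∀ c ∈ C.erase c₀, (A.filter fun v => c ∈ L v).card ≤ r := by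
      intro c hc
      have hcC : c ∈ coloursOn r Δ X := (hmemC c).mp (Finset.mem_of_mem_erase hc)
      have : (A.filter fun v => c ∈ L v) ⊆ edge c := by
        intro v hv
        obtain ⟨hvA, hcv⟩ := Finset.mem_filter.mp hv
        exact keyL v c hcv (edge c) (hedge1 c hcC) (hedge2 c hcC) (hedge3 c hcC)
      exact (Finset.card_le_card this).trans (le_of_eq (hedge2 c hcC))
    calc ∑ v ∈ A, (L v).card
        = ∑ c ∈ C, (A.filter fun v => c ∈ L v).card := step1
      _ = ∑ c ∈ C.erase c₀, (A.filter fun v => c ∈ L v).card := by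
          rw [← Finset.sum_erase_add C _ hc₀C, hzero]
          simp
      _ ≤ ∑ _c ∈ C.erase c₀, r := Finset.sum_le_sum hbound
      _ = (C.erase c₀).card * r := by rw [Finset.sum_const, smul_eq_mul]
      _ = (m - 1) * r := by rw [Finset.card_erase_of_mem hc₀C, hCcard]
      _ = r * (m - 1) := Nat.mul_comm _ _
  -- pigeonhole
  obtain ⟨v, hvA, hvmin⟩ := Finset.exists_min_image A (fun v => (L v).card) hAne
  refine ⟨v, hvA, ?_, hdel v hvA⟩
  have hva : a * (L v).card ≤ r * (m - 1) := by
    calc a * (L v).card = ∑ _w ∈ A, (L v).card := by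
          rw [Finset.sum_const, smul_eq_mul, ha]
      _ ≤ ∑ w ∈ A, (L w).card := Finset.sum_le_sum fun w hw => hvmin w hw
      _ ≤ r * (m - 1) := hdc
  have haQ : (0 : ℚ) < a := by exact_mod_cast Nat.lt_of_lt_of_le Nat.zero_lt_one ha1
  have hm1 : 1 ≤ m := by omega
  have h1 : (a : ℚ) * ((L v).card : ℚ) ≤ (r : ℚ) * ((m : ℚ) - 1) := by
    have := (Nat.cast_le (α := ℚ)).mpr hva
    push_cast [Nat.cast_sub hm1] at this
    linarith
  have h2 : ((L v).card : ℚ) ≤ (r : ℚ) * ((m : ℚ) - 1) / (a : ℚ) := by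
    rw [le_div_iff₀ haQ]
    nlinarith
  have h3 : (m : ℚ) ≤ (gamma r Δ (X \ {v}) : ℚ) + ((L v).card : ℚ) := by
    exact_mod_cast hsplit v
  linarith
end

section
/- Let k and n be natural numbers with k ≥ C(n,2) + 1, and let Δ: ℕ^(2) ↠ [k] be a surjective colouring. Then |F_Δ| ≥ n. -/
open Finset

namespace FdeltaAux

open Classical in
noncomputable instance : ∀ (p : Prop), Decidable p := fun p => Classical.propDecidable p

variable {k : ℕ} {Δ : Finset ℕ → ℕ}

lemma pair_card {x y : ℕ} (h : x ≠ y) : ({x, y} : Finset ℕ).card = 2 := by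
  rw [Finset.card_insert_of_notMem (by simpa using h), Finset.card_singleton]

lemma pair_coe_subset {x y : ℕ} {X : Set ℕ} (hx : x ∈ X) (hy : y ∈ X) :
    ↑({x, y} : Finset ℕ) ⊆ X := by
  intro z hz
  simp only [Finset.coe_insert, Finset.coe_singleton, Set.mem_insert_iff,
    Set.mem_singleton_iff] at hz
  rcases hz with rfl | rfl <;> assumption

lemma pair_mem_coloursOn {x y : ℕ} {X : Set ℕ} (hx : x ∈ X) (hy : y ∈ X) (hxy : x ≠ y) :
    Δ {x, y} ∈ coloursOn 2 Δ X :=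
  ⟨{x, y}, ⟨pair_coe_subset hx hy, pair_card hxy⟩, rfl⟩

lemma pigeon {A : Set ℕ} (hA : A.Infinite) (f : ℕ → ℕ)
    (hf : ∀ a ∈ A, f a ∈ Finset.Icc 1 k) :
    ∃ c, {a | a ∈ A ∧ f a = c}.Infinite := by
  by_contra h
  push_neg at h
  have hsub : A ⊆ ⋃ c ∈ (Finset.Icc 1 k : Finset ℕ), {a | a ∈ A ∧ f a = c} := by
    intro a ha
    exact Set.mem_biUnion (hf a ha) ⟨ha, rfl⟩
  exact hA (((Finset.Icc 1 k).finite_toSet.biUnion (fun c _ => h c)).subset hsub)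

lemma ramsey (hcol : ∀ e : Finset ℕ, e.card = 2 → Δ e ∈ Finset.Icc 1 k) :
    ∃ Y : Set ℕ, Y.Infinite ∧ ∃ c0 : ℕ, ∀ x ∈ Y, ∀ y ∈ Y, x ≠ y → Δ {x, y} = c0 := by
  have step : ∀ A : Set ℕ, A.Infinite →
      ∃ B : Set ℕ, B ⊆ A ∧ B.Infinite ∧ (∀ b ∈ B, sInf A < b) ∧
        ∀ b ∈ B, Δ {sInf A, b} = Δ {sInf A, sInf B} := by
    intro A hA
    have h1 : {y | y ∈ A ∧ sInf A < y}.Infinite := by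
      refine (hA.diff (Set.finite_Iic (sInf A))).mono ?_
      rintro y ⟨hyA, hy⟩
      exact ⟨hyA, by simpa using hy⟩
    obtain ⟨c, hc⟩ := pigeon h1 (fun y => Δ {sInf A, y})
      (fun y hy => hcol _ (pair_card hy.2.ne))
    refine ⟨{a | a ∈ {y | y ∈ A ∧ sInf A < y} ∧ Δ {sInf A, a} = c},
      fun b hb => hb.1.1, hc, fun b hb => hb.1.2, ?_⟩
    intro b hb
    have hmem := Nat.sInf_mem hc.nonempty
    rw [hb.2, hmem.2]
  let A : ℕ → {S : Set ℕ // S.Infinite} := fun n =>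
    Nat.rec ⟨Set.univ, Set.infinite_univ⟩
      (fun _ p => ⟨(step p.1 p.2).choose, ((step p.1 p.2).choose_spec).2.1⟩) n
  let a : ℕ → ℕ := fun t => sInf (A t).1
  have hspec : ∀ t, (A (t + 1)).1 ⊆ (A t).1 ∧ (∀ b ∈ (A (t + 1)).1, a t < b) ∧
      ∀ b ∈ (A (t + 1)).1, Δ {a t, b} = Δ {a t, a (t + 1)} := by
    intro t
    have h := (step (A t).1 (A t).2).choose_spec
    exact ⟨h.1, h.2.2.1, h.2.2.2⟩
  have hmemA : ∀ t, a t ∈ (A t).1 := fun t => Nat.sInf_mem (A t).2.nonempty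
  have hchain : ∀ s t : ℕ, s ≤ t → (A t).1 ⊆ (A s).1 := by
    intro s t hst
    induction t with
    | zero => simp_all
    | succ t ih =>
      rcases Nat.lt_or_ge s (t + 1) with h | h
      · exact ((hspec t).1).trans (ih (Nat.lt_succ_iff.mp h))
      · have : s = t + 1 := le_antisymm hst h
        subst this; exact subset_rfl
  have hamono : ∀ s t : ℕ, s < t → a s < a t := by
    intro s t hst
    exact (hspec s).2.1 _ (hchain (s + 1) t hst (hmemA t))
  have hcolst : ∀ s t : ℕ, s < t → Δ {a s, a t} = Δ {a s, a (s + 1)} := by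
    intro s t hst
    exact (hspec s).2.2 _ (hchain (s + 1) t hst (hmemA t))
  obtain ⟨c, hc⟩ := pigeon (Set.infinite_univ : (Set.univ : Set ℕ).Infinite)
    (fun s => Δ {a s, a (s + 1)})
    (fun s _ => hcol _ (pair_card (hamono s (s + 1) (Nat.lt_succ_self s)).ne))
  refine ⟨a '' {s | s ∈ Set.univ ∧ Δ {a s, a (s + 1)} = c}, ?_, c, ?_⟩
  · have ha_sm : StrictMono a := fun s t h => hamono s t h
    exact hc.image (ha_sm.injective.injOn)
  · rintro x ⟨s, hs, rfl⟩ y ⟨t, ht, rfl⟩ hxy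
    have hst : s ≠ t := fun h => hxy (by rw [h])
    rcases hst.lt_or_gt with h | h
    · rw [hcolst s t h, hs.2]
    · rw [Finset.pair_comm, hcolst t s h, ht.2]

lemma refine (hcol : ∀ e : Finset ℕ, e.card = 2 → Δ e ∈ Finset.Icc 1 k)
    {Y : Set ℕ} (hY : Y.Infinite) (F : Finset ℕ) :
    ∃ Y' : Set ℕ, Y' ⊆ Y ∧ Y'.Infinite ∧
      ∀ x ∈ F, ∃ c, ∀ y ∈ Y', y ≠ x → Δ {x, y} = c := by
  induction F using Finset.induction_on with
  | empty => exact ⟨Y, subset_rfl, hY, by simp⟩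
  | @insert x F hx ih =>
    obtain ⟨Y', hsub, hinf, hlink⟩ := ih
    obtain ⟨c, hc⟩ := pigeon (hinf.diff (Set.finite_singleton x)) (fun y => Δ {x, y})
      (fun y hy => hcol _ (pair_card (fun h => hy.2 (by simp [← h]))))
    refine ⟨{a | (a ∈ Y' \ {x}) ∧ Δ {x, a} = c}, fun y hy => hsub hy.1.1, hc, ?_⟩
    intro x' hx'
    rcases Finset.mem_insert.mp hx' with rfl | hx'F
    · exact ⟨c, fun y hy _ => hy.2⟩
    · obtain ⟨c', hc'⟩ := hlink x' hx'F
      exact ⟨c', fun y hy hyx => hc' y hy.1.1 hyx⟩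

lemma coloursOn_mono {X X' : Set ℕ} (h : X ⊆ X') : coloursOn 2 Δ X ⊆ coloursOn 2 Δ X' :=
  Set.image_mono (fun e he => ⟨he.1.trans h, he.2⟩)

lemma coloursOn_subset_Icc (hcol : ∀ e : Finset ℕ, e.card = 2 → Δ e ∈ Finset.Icc 1 k)
    (X : Set ℕ) : coloursOn 2 Δ X ⊆ ↑(Finset.Icc 1 k) := by
  rintro c ⟨e, ⟨_, hcard⟩, rfl⟩
  exact_mod_cast hcol e hcard

lemma coloursOn_finite (hcol : ∀ e : Finset ℕ, e.card = 2 → Δ e ∈ Finset.Icc 1 k)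
    (X : Set ℕ) : (coloursOn 2 Δ X).Finite :=
  (Finset.Icc 1 k).finite_toSet.subset (coloursOn_subset_Icc hcol X)

lemma gamma_le_k (hcol : ∀ e : Finset ℕ, e.card = 2 → Δ e ∈ Finset.Icc 1 k)
    (X : Set ℕ) : gamma 2 Δ X ≤ k := by
  have h1 := Set.ncard_le_ncard (coloursOn_subset_Icc hcol X) (Finset.Icc 1 k).finite_toSet
  have h2 : (↑(Finset.Icc 1 k) : Set ℕ).ncard = k := by
    rw [Set.ncard_coe_finset, Nat.card_Icc]; omega
  rw [gamma]; omega

lemma gamma_mono (hcol : ∀ e : Finset ℕ, e.card = 2 → Δ e ∈ Finset.Icc 1 k)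
    {X X' : Set ℕ} (h : X ⊆ X') : gamma 2 Δ X ≤ gamma 2 Δ X' :=
  Set.ncard_le_ncard (coloursOn_mono h) (coloursOn_finite hcol X')

lemma gamma_mono_one {Y : Set ℕ} (hY : Y.Infinite) {c0 : ℕ}
    (hmono : ∀ x ∈ Y, ∀ y ∈ Y, x ≠ y → Δ {x, y} = c0) : gamma 2 Δ Y = 1 := by
  have hcolours : coloursOn 2 Δ Y = {c0} := by
    apply Set.eq_singleton_iff_unique_mem.mpr
    constructor
    · obtain ⟨x, hx⟩ := hY.nonempty
      obtain ⟨y, hy, hxy⟩ := hY.exists_gt x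
      exact hmono x hx y hy hxy.ne ▸ pair_mem_coloursOn hx hy hxy.ne
    · rintro c ⟨e, ⟨hsub, hcard⟩, rfl⟩
      obtain ⟨x, y, hxy, rfl⟩ := Finset.card_eq_two.mp hcard
      have hx : x ∈ Y := hsub (by simp)
      have hy : y ∈ Y := hsub (by simp)
      exact hmono x hx y hy hxy
  rw [gamma, hcolours, Set.ncard_singleton]


lemma gamma_erase_decomp (hcol : ∀ e : Finset ℕ, e.card = 2 → Δ e ∈ Finset.Icc 1 k)
    (Y : Set ℕ) (S : Finset ℕ) (i : ℕ) :
    gamma 2 Δ (Y ∪ ↑(S.erase i)) +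
      (coloursOn 2 Δ (Y ∪ ↑S) \ coloursOn 2 Δ (Y ∪ ↑(S.erase i))).ncard
      = gamma 2 Δ (Y ∪ ↑S) := by
  rw [gamma, gamma, add_comm]
  exact Set.ncard_diff_add_ncard_of_subset
    (coloursOn_mono (Set.union_subset_union_right _
      (Finset.coe_subset.mpr (Finset.erase_subset i S))))
    (coloursOn_finite hcol _)

lemma jump_le (hcol : ∀ e : Finset ℕ, e.card = 2 → Δ e ∈ Finset.Icc 1 k)
    {Y : Set ℕ} {S : Finset ℕ} {i : ℕ} (hiS : i ∈ S)
    (hlink : ∃ c, ∀ y ∈ Y, y ≠ i → Δ {i, y} = c) :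
    gamma 2 Δ (Y ∪ ↑S) ≤ gamma 2 Δ (Y ∪ ↑(S.erase i)) + S.card := by
  by_cases hiY : i ∈ Y
  · have heq : Y ∪ (↑S : Set ℕ) = Y ∪ ↑(S.erase i) := by
      apply Set.Subset.antisymm
      · rintro z (hz | hz)
        · exact Or.inl hz
        · by_cases hzi : z = i
          · exact Or.inl (hzi ▸ hiY)
          · exact Or.inr (Finset.mem_coe.mpr (Finset.mem_erase.mpr ⟨hzi, Finset.mem_coe.mp hz⟩))
      · exact Set.union_subset_union_right _ (Finset.coe_subset.mpr (Finset.erase_subset i S))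
    rw [heq]
    exact Nat.le_add_right _ _
  · obtain ⟨ci, hci⟩ := hlink
    have hkey : ∀ z, z ≠ i → z ∈ Y ∪ (↑S : Set ℕ) →
        Δ {i, z} ∈ (coloursOn 2 Δ (Y ∪ ↑(S.erase i)) ∪ {ci}) ∪
          (fun z => Δ {i, z}) '' ↑(S.erase i) := by
      intro z hzi hz
      rcases hz with hz | hz
      · exact Or.inl (Or.inr (by simp [hci z hz hzi]))
      · exact Or.inr ⟨z, Finset.mem_coe.mpr (Finset.mem_erase.mpr ⟨hzi, Finset.mem_coe.mp hz⟩), rfl⟩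
    have hsub : coloursOn 2 Δ (Y ∪ ↑S) ⊆
        (coloursOn 2 Δ (Y ∪ ↑(S.erase i)) ∪ {ci}) ∪ (fun z => Δ {i, z}) '' ↑(S.erase i) := by
      rintro c ⟨e, ⟨hesub, hcard⟩, rfl⟩
      by_cases hie : i ∈ e
      · obtain ⟨u, v, huv, rfl⟩ := Finset.card_eq_two.mp hcard
        rcases Finset.mem_insert.mp hie with rfl | hv
        · exact hkey v huv.symm (hesub (by simp))
        · have hvi : i = v := by simpa using hv
          subst hvi
          rw [Finset.pair_comm]
          exact hkey u huv (hesub (by simp))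
      · refine Or.inl (Or.inl ⟨e, ⟨?_, hcard⟩, rfl⟩)
        intro z hz
        rcases hesub hz with h | h
        · exact Or.inl h
        · exact Or.inr (Finset.mem_coe.mpr (Finset.mem_erase.mpr
            ⟨fun hzi => hie (by rwa [hzi] at hz), Finset.mem_coe.mp h⟩))
    have h1 : gamma 2 Δ (Y ∪ ↑S) ≤
        ((coloursOn 2 Δ (Y ∪ ↑(S.erase i)) ∪ {ci}) ∪
          (fun z => Δ {i, z}) '' ↑(S.erase i)).ncard := by
      exact Set.ncard_le_ncard hsub
        ((((coloursOn_finite hcol _).union (Set.finite_singleton ci)).union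
        ((S.erase i).finite_toSet.image _)))
    have h2 : ((coloursOn 2 Δ (Y ∪ ↑(S.erase i)) ∪ {ci}) ∪
          (fun z => Δ {i, z}) '' ↑(S.erase i)).ncard ≤
        (gamma 2 Δ (Y ∪ ↑(S.erase i)) + 1) + (S.erase i).card := by
      refine (Set.ncard_union_le _ _).trans (Nat.add_le_add ?_ ?_)
      · refine (Set.ncard_union_le _ _).trans (Nat.add_le_add_left ?_ _)
        simp [Set.ncard_singleton]
      · exact (Set.ncard_image_le (S.erase i).finite_toSet).trans
          (le_of_eq (Set.ncard_coe_finset _))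
    have h3 : (S.erase i).card + 1 = S.card := Finset.card_erase_add_one hiS
    omega


lemma exists_gamma_between (hΔ : IsColouring 2 k Δ) {j : ℕ} (hj : 1 ≤ j)
    (hjk : Nat.choose j 2 + 1 ≤ k) :
    ∃ v ∈ Fdelta 2 Δ, Nat.choose j 2 + 1 ≤ v ∧ v ≤ Nat.choose j 2 + j := by
  obtain ⟨hcol, hsurj⟩ := hΔ
  obtain ⟨Y0, hY0inf, c0, hY0mono⟩ := ramsey hcol
  set E : ℕ → Finset ℕ :=
    fun c => if h : ∃ e : Finset ℕ, e.card = 2 ∧ Δ e = c then h.choose else ∅ with hEdef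
  have hEprop : ∀ c ∈ Finset.Icc 1 k, (E c).card = 2 ∧ Δ (E c) = c := by
    intro c hc
    have h := hsurj c hc
    simp only [hEdef, dif_pos h]
    exact h.choose_spec
  set F0 : Finset ℕ := (Finset.Icc 1 k).biUnion E with hF0def
  obtain ⟨Y, hYsub, hYinf, hlink⟩ := refine hcol hY0inf F0
  have hmono : ∀ x ∈ Y, ∀ y ∈ Y, x ≠ y → Δ {x, y} = c0 :=
    fun x hx y hy h => hY0mono x (hYsub hx) y (hYsub hy) h
  have hgY : gamma 2 Δ Y = 1 := gamma_mono_one hYinf hmono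
  have hc0mem : ∀ W : Set ℕ, Y ⊆ W → c0 ∈ coloursOn 2 Δ W := by
    intro W hW
    obtain ⟨x, hx⟩ := hYinf.nonempty
    obtain ⟨y, hy, hxy⟩ := hYinf.exists_gt x
    exact hmono x hx y hy hxy.ne ▸ pair_mem_coloursOn (hW hx) (hW hy) hxy.ne
  set m := Nat.choose j 2 + 1 with hmdef
  have hfF0 : m ≤ gamma 2 Δ (Y ∪ ↑F0) := by
    have hsub : (↑(Finset.Icc 1 k) : Set ℕ) ⊆ coloursOn 2 Δ (Y ∪ ↑F0) := by
      intro c hc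
      have hc' : c ∈ Finset.Icc 1 k := by exact_mod_cast hc
      obtain ⟨hcard, hval⟩ := hEprop c hc'
      refine ⟨E c, ⟨?_, hcard⟩, hval⟩
      intro z hz
      exact Or.inr (Finset.mem_coe.mpr (Finset.mem_biUnion.mpr ⟨c, hc', hz⟩))
    have h1 := Set.ncard_le_ncard hsub (coloursOn_finite hcol _)
    rw [Set.ncard_coe_finset, Nat.card_Icc] at h1
    rw [gamma]
    omega
  have hne : (F0.powerset.filter (fun S : Finset ℕ => m ≤ gamma 2 Δ (Y ∪ (↑S : Set ℕ)))).Nonempty :=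
    ⟨F0, Finset.mem_filter.mpr ⟨Finset.mem_powerset.mpr subset_rfl, hfF0⟩⟩
  obtain ⟨S, hSmem, hSmin⟩ := Finset.exists_min_image _ Finset.card hne
  have hSk : m ≤ gamma 2 Δ (Y ∪ ↑S) := (Finset.mem_filter.mp hSmem).2
  have hSsub : S ⊆ F0 := Finset.mem_powerset.mp (Finset.mem_filter.mp hSmem).1
  have hXinf : (Y ∪ (↑S : Set ℕ)).Infinite := hYinf.mono Set.subset_union_left
  have hgammaempty : gamma 2 Δ (Y ∪ (↑(∅ : Finset ℕ) : Set ℕ)) = 1 := by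
    rw [show (Y ∪ (↑(∅ : Finset ℕ) : Set ℕ)) = Y by simp]
    exact hgY
  rcases Finset.eq_empty_or_nonempty S with rfl | hSne
  · refine ⟨1, ⟨Y, hYinf, hgY⟩, ?_, ?_⟩
    · rw [hgammaempty] at hSk; omega
    · omega
  · have hm2 : 2 ≤ m := by
      by_contra h
      have hmem : (∅ : Finset ℕ) ∈ F0.powerset.filter (fun S : Finset ℕ => m ≤ gamma 2 Δ (Y ∪ (↑S : Set ℕ))) :=
        Finset.mem_filter.mpr ⟨Finset.mem_powerset.mpr (Finset.empty_subset _),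
          by rw [hgammaempty]; omega⟩
      have := hSmin _ hmem
      simp only [Finset.card_empty, Nat.le_zero, Finset.card_eq_zero] at this
      exact hSne.ne_empty this
    have hj2 : 2 ≤ j := by
      by_contra h
      have : j < 2 := by omega
      have := Nat.choose_eq_zero_of_lt this
      omega
    have hminimal : ∀ i ∈ S, gamma 2 Δ (Y ∪ ↑(S.erase i)) + 1 ≤ m := by
      intro i hi
      by_contra h
      push_neg at h
      have hmem : S.erase i ∈ F0.powerset.filter (fun S : Finset ℕ => m ≤ gamma 2 Δ (Y ∪ (↑S : Set ℕ))) :=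
        Finset.mem_filter.mpr ⟨Finset.mem_powerset.mpr ((Finset.erase_subset i S).trans hSsub),
          by omega⟩
      have h1 := hSmin _ hmem
      have h2 : (S.erase i).card < S.card := Finset.card_erase_lt_of_mem hi
      omega
    set g := gamma 2 Δ (Y ∪ (↑S : Set ℕ)) with hgdef
    set D : ℕ → Set ℕ :=
      fun i => coloursOn 2 Δ (Y ∪ ↑S) \ coloursOn 2 Δ (Y ∪ ↑(S.erase i)) with hDdef
    have hdecomp : ∀ i, gamma 2 Δ (Y ∪ ↑(S.erase i)) + (D i).ncard = g :=
      fun i => gamma_erase_decomp hcol Y S i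
    have hjumpS : ∀ i ∈ S, (D i).ncard ≤ S.card := by
      intro i hi
      have h1 := jump_le hcol hi (hlink i (hSsub hi))
      have h2 := hdecomp i
      omega
    have hDfin : ∀ i, (D i).Finite := fun i => (coloursOn_finite hcol _).diff
    have hsmall : ∃ i ∈ S, (D i).ncard ≤ j := by
      by_contra hcon
      push_neg at hcon
      obtain ⟨i0, hi0⟩ := hSne
      rcases le_or_gt S.card j with hsj | hsj
      · exact absurd (hjumpS i0 hi0) (by have := hcon i0 hi0; omega)
      · -- double counting
        obtain ⟨jj, rfl⟩ : ∃ jj, j = jj + 2 := ⟨j - 2, by omega⟩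
        set T' : Set ℕ := coloursOn 2 Δ (Y ∪ ↑S) \ {c0} with hT'def
        have hT'fin : T'.Finite := (coloursOn_finite hcol _).diff
        set Tf : Finset ℕ := hT'fin.toFinset with hTfdef
        have hDsub : ∀ i ∈ S, D i ⊆ T' := by
          intro i hi c hc
        -- c ∈ colours(Y∪S), c ∉ colours(Y∪erase i); c0 ∈ colours(Y∪erase i)
          refine ⟨hc.1, ?_⟩
          intro hcc0
          rw [Set.mem_singleton_iff] at hcc0
          exact hc.2 (hcc0 ▸ hc0mem _ Set.subset_union_left)
        have hDcard : ∀ i ∈ S, (D i).ncard = (Tf.filter (fun c => c ∈ D i)).card := by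
          intro i hi
          rw [← Set.ncard_coe_finset]
          congr 1
          ext c
          simp only [Finset.coe_filter, Set.mem_setOf_eq, hTfdef, Set.Finite.mem_toFinset]
          exact ⟨fun hc => ⟨hDsub i hi hc, hc⟩, fun hc => hc.2⟩
        have hTfcard : Tf.card + 1 = g := by
          have h1 : T'.ncard + ({c0} : Set ℕ).ncard = (coloursOn 2 Δ (Y ∪ ↑S)).ncard :=
            Set.ncard_diff_add_ncard_of_subset
              (Set.singleton_subset_iff.mpr (hc0mem _ Set.subset_union_left))
              (coloursOn_finite hcol _)
          rw [Set.ncard_singleton] at h1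
          have h2 : Tf.card = T'.ncard := by
            rw [← Set.ncard_coe_finset Tf, hT'fin.coe_toFinset]
          rw [hgdef, gamma]
          omega
        have hmle : ∀ i ∈ S, jj + 3 ≤ (Tf.bipartiteAbove (fun i c => c ∈ D i) i).card := by
          intro i hi
          have h1 := hcon i hi
          rw [Finset.bipartiteAbove]
          rw [hDcard i hi] at h1
          omega
        have hnle : ∀ c ∈ Tf, (S.bipartiteBelow (fun i c => c ∈ D i) c).card ≤ 2 := by
          intro c hc
          have hcmem : c ∈ coloursOn 2 Δ (Y ∪ ↑S) := by
            rw [hTfdef, Set.Finite.mem_toFinset] at hc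
            exact hc.1
          obtain ⟨e, ⟨hesub, hecard⟩, rfl⟩ := hcmem
          have hsubE : S.bipartiteBelow (fun i c => c ∈ D i) (Δ e) ⊆ e := by
            intro i hi
            rw [Finset.bipartiteBelow, Finset.mem_filter] at hi
            by_contra hie
            refine hi.2.2 ⟨e, ⟨?_, hecard⟩, rfl⟩
            intro z hz
            rcases hesub hz with h | h
            · exact Or.inl h
            · exact Or.inr (Finset.mem_coe.mpr (Finset.mem_erase.mpr
                ⟨fun hzi => hie (by rwa [hzi] at hz), Finset.mem_coe.mp h⟩))
          exact (Finset.card_le_card hsubE).trans (le_of_eq hecard)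
        have hdc := Finset.card_mul_le_card_mul (fun i c => c ∈ D i) hmle hnle
        -- S.card * (jj+3) ≤ Tf.card * 2
        have hb : jj + 3 ≤ S.card := hsj
        have f3 : g + 1 ≤ m + S.card := by
          have h1 := hminimal i0 hi0
          have h2 := hdecomp i0
          have h3 := hjumpS i0 hi0
          omega
        have f4 : 2 * m = (jj + 2) * (jj + 1) + 2 := by
          have hch : (jj + 2).choose 2 * 2 = (jj + 2) * (jj + 1) := by
            rw [Nat.choose_two_right]
            have heven : 2 ∣ (jj + 2) * (jj + 2 - 1) := by
              have hsub1 : jj + 2 - 1 = jj + 1 := rfl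
              rw [hsub1, Nat.mul_comm]
              exact (Nat.even_mul_succ_self (jj + 1)).two_dvd
            exact Nat.div_mul_cancel heven
          rw [hmdef]
          omega
        have f5 : S.card * (jj + 3) = S.card * (jj + 1) + 2 * S.card := by ring
        have f6 : (jj + 3) * (jj + 1) ≤ S.card * (jj + 1) :=
          Nat.mul_le_mul_right _ hb
        have f7 : (jj + 2) * (jj + 1) < (jj + 3) * (jj + 1) := by nlinarith
        linarith [hdc, hTfcard, f3, f4, f5, f6, f7]
    obtain ⟨i, hiS, hji⟩ := hsmall
    refine ⟨g, ⟨Y ∪ ↑S, hXinf, rfl⟩, hSk, ?_⟩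
    have h1 := hminimal i hiS
    have h2 := hdecomp i
    omega

end FdeltaAux


/-- If `Δ : ℕ^(2) ↠ [k]` is a surjective colouring with `k ≥ C(n,2) + 1`, then `|F_Δ| ≥ n`. -/
theorem Fdelta_card_lower_bound_graphs (k n : ℕ) (Δ : Finset ℕ → ℕ)
    (hΔ : IsColouring 2 k Δ) (hk : Nat.choose n 2 + 1 ≤ k) :
    n ≤ (Fdelta 2 Δ).ncard := by
  obtain ⟨hcol, hsurj⟩ := hΔ
  have key : ∀ j : ℕ, ∃ v : ℕ, 1 ≤ j → j ≤ n →
      v ∈ Fdelta 2 Δ ∧ Nat.choose j 2 + 1 ≤ v ∧ v ≤ Nat.choose j 2 + j := by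
    intro j
    by_cases h : 1 ≤ j ∧ j ≤ n
    · have hjk : Nat.choose j 2 + 1 ≤ k := by
        have := Nat.choose_le_choose 2 h.2
        omega
      obtain ⟨v, hv1, hv2⟩ := FdeltaAux.exists_gamma_between ⟨hcol, hsurj⟩ h.1 hjk
      exact ⟨v, fun _ _ => ⟨hv1, hv2⟩⟩
    · exact ⟨0, fun h1 h2 => absurd ⟨h1, h2⟩ h⟩
  choose w hw using key
  have hwmono : ∀ j1 ∈ Finset.Icc 1 n, ∀ j2 ∈ Finset.Icc 1 n, j1 < j2 → w j1 < w j2 := by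
    intro j1 hj1 j2 hj2 hlt
    simp only [Finset.mem_Icc] at hj1 hj2
    obtain ⟨_, _, hub1⟩ := hw j1 hj1.1 hj1.2
    obtain ⟨_, hlb2, _⟩ := hw j2 hj2.1 hj2.2
    have h1 : Nat.choose (j1 + 1) 2 = Nat.choose j1 2 + j1 := by
      rw [Nat.choose_succ_succ, Nat.choose_one_right, Nat.add_comm]
    have h2 : Nat.choose (j1 + 1) 2 ≤ Nat.choose j2 2 := Nat.choose_le_choose 2 hlt
    omega
  have hinj : Set.InjOn w ↑(Finset.Icc 1 n) := by
    intro a ha b hb hab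
    by_contra hne
    rcases Nat.lt_or_ge a b with h | h
    · exact absurd hab (hwmono a ha b hb h).ne
    · have hba : b < a := lt_of_le_of_ne h (Ne.symm hne)
      exact absurd hab.symm (hwmono b hb a ha hba).ne
  have himgsub : ↑((Finset.Icc 1 n).image w) ⊆ Fdelta 2 Δ := by
    intro v hv
    simp only [Finset.coe_image, Set.mem_image, Finset.mem_coe, Finset.mem_Icc] at hv
    obtain ⟨j, hj, rfl⟩ := hv
    exact (hw j hj.1 hj.2).1
  have hFfin : (Fdelta 2 Δ).Finite := by
    refine (Set.finite_Iic k).subset ?_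
    rintro v ⟨X, hX, rfl⟩
    exact Set.mem_Iic.mpr (FdeltaAux.gamma_le_k hcol X)
  have hcard : ((Finset.Icc 1 n).image w).card = n := by
    rw [Finset.card_image_of_injOn hinj, Nat.card_Icc]
    omega
  calc n = ((Finset.Icc 1 n).image w).card := hcard.symm
  _ = (↑((Finset.Icc 1 n).image w) : Set ℕ).ncard := (Set.ncard_coe_finset _).symm
  _ ≤ (Fdelta 2 Δ).ncard := Set.ncard_le_ncard himgsub hFfin
end

section
/- For integers r ≥ 2 and a ≥ r, let Δ be the 'small-set colouring' of ℕ^(r): the colouring that assigns to each r-element subset e of ℕ the colour e ∩ [a] (a surjective colouring with k = Σ_{i=0}^{r} C(a,i) colours). Then F_Δ = { Σ_{i=0}^{r} C(n,i) : n a natural number with n ≤ a }. -/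
open Finset

open Classical in
lemma colours_eq_aux (r a : ℕ) (X : Set ℕ) (hX : X.Infinite) :
    coloursOn r (fun e : Finset ℕ => e ∩ Finset.Icc 1 a) X =
      ↑((Finset.range (r+1)).biUnion fun i =>
        ((Finset.Icc 1 a).filter (· ∈ X)).powersetCard i) := by
  ext s
  simp only [coloursOn, Set.mem_image, Set.mem_setOf_eq, Finset.coe_biUnion,
    Set.mem_iUnion, Finset.mem_coe, Finset.mem_powersetCard, Finset.mem_range]
  constructor
  · rintro ⟨e, ⟨heX, hec⟩, rfl⟩
    refine ⟨(e ∩ Finset.Icc 1 a).card, ?_, ?_, rfl⟩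
    · have := Finset.card_le_card (Finset.inter_subset_left (s₁ := e)
        (s₂ := Finset.Icc 1 a))
      omega
    · intro x hx
      simp only [Finset.mem_inter] at hx
      simp only [Finset.mem_filter]
      exact ⟨hx.2, heX hx.1⟩
  · rintro ⟨i, hi, hsub, hcard⟩
    have hsX : ↑s ⊆ X := fun x hx => (Finset.mem_filter.mp (hsub hx)).2
    have hsI : s ⊆ Finset.Icc 1 a := fun x hx => (Finset.mem_filter.mp (hsub hx)).1
    have hY : (X \ ↑(Finset.Icc 1 a) : Set ℕ).Infinite :=
      hX.diff (Finset.finite_toSet _)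
    obtain ⟨u, huY, hucard⟩ := hY.exists_subset_card_eq (r - i)
    have hdisj : Disjoint s u := by
      rw [Finset.disjoint_left]
      intro x hxs hxu
      exact (huY hxu).2 (Finset.mem_coe.mpr (hsI hxs))
    refine ⟨s ∪ u, ⟨?_, ?_⟩, ?_⟩
    · intro x hx
      rcases Finset.mem_union.mp hx with h | h
      · exact hsX h
      · exact (huY h).1
    · rw [Finset.card_union_of_disjoint hdisj, hcard, hucard]; omega
    · ext x
      simp only [Finset.mem_inter, Finset.mem_union]
      constructor
      · rintro ⟨h1 | h1, h2⟩
        · exact h1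
        · exact absurd (Finset.mem_coe.mpr h2) (huY h1).2
      · intro hx; exact ⟨Or.inl hx, hsI hx⟩

lemma gamma_eq_aux (r a : ℕ) (X : Set ℕ) (hX : X.Infinite) :
    gamma r (fun e : Finset ℕ => e ∩ Finset.Icc 1 a) X =
      ∑ i ∈ Finset.range (r + 1), Nat.choose (X ∩ Set.Icc 1 a).ncard i := by
  classical
  have hset : (X ∩ Set.Icc 1 a) = ↑((Finset.Icc 1 a).filter (· ∈ X)) := by
    ext x
    simp only [Set.mem_inter_iff, Finset.coe_filter, Set.mem_setOf_eq, Finset.mem_Icc,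
      Set.mem_Icc]
    tauto
  rw [gamma, colours_eq_aux r a X hX, Set.ncard_coe_finset, hset, Set.ncard_coe_finset]
  rw [Finset.card_biUnion]
  · exact Finset.sum_congr rfl fun i _ => Finset.card_powersetCard i _
  · intro i _ j _ hij
    rw [Function.onFun, Finset.disjoint_left]
    intro t hti htj
    rw [Finset.mem_powersetCard] at hti htj
    exact hij (hti.2.symm.trans htj.2)

/-- **Small-set colouring.** For `r ≥ 2` and `a ≥ r`, the colouring of `ℕ^(r)` assigning to
each `r`-set `e` the colour `e ∩ [a]` satisfies `F_Δ = { Σ_{i=0}^{r} C(n,i) : n ≤ a }`. -/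
theorem small_set_colouring (r a : ℕ) (hr : 2 ≤ r) (ha : r ≤ a) :
    Fdelta r (fun e : Finset ℕ => e ∩ Finset.Icc 1 a) =
      {m : ℕ | ∃ n : ℕ, n ≤ a ∧ m = ∑ i ∈ Finset.range (r + 1), Nat.choose n i} := by
  ext m
  simp only [Fdelta, Set.mem_setOf_eq]
  constructor
  · rintro ⟨X, hX, rfl⟩
    refine ⟨(X ∩ Set.Icc 1 a).ncard, ?_, (gamma_eq_aux r a X hX)⟩
    calc (X ∩ Set.Icc 1 a).ncard ≤ (Set.Icc 1 a).ncard :=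
          Set.ncard_le_ncard Set.inter_subset_right (Set.finite_Icc 1 a)
      _ = a := by
          rw [← Finset.coe_Icc, Set.ncard_coe_finset, Nat.card_Icc]; omega
  · rintro ⟨n, hn, rfl⟩
    refine ⟨↑(Finset.Icc 1 n) ∪ Set.Ioi a, ?_, ?_⟩
    · exact Set.Infinite.mono Set.subset_union_right (Set.Ioi_infinite a)
    · rw [gamma_eq_aux _ _ _ (Set.Infinite.mono Set.subset_union_right (Set.Ioi_infinite a))]
      have hset : ((↑(Finset.Icc 1 n) ∪ Set.Ioi a : Set ℕ) ∩ Set.Icc 1 a)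
          = ↑(Finset.Icc 1 n) := by
        ext x
        simp only [Set.mem_inter_iff, Set.mem_union, Finset.coe_Icc, Set.mem_Icc,
          Set.mem_Ioi]
        omega
      rw [hset, Set.ncard_coe_finset, Nat.card_Icc, Nat.add_sub_cancel]
end

section
/- For every integer r ≥ 3 there exists N such that for every natural number n ≥ N with (r-1) dividing (n+1), there exists a surjective colouring Δ: ℕ^(r) ↠ [k] with k = Σ_{i=0}^{r} C(n,i) + 1 such that every m' ∈ F_Δ with m' < k satisfies m' ≤ Σ_{i=0}^{r} C(n-1,i); in particular F_Δ ∩ ( Σ_{i=0}^{r} C(n-1,i), Σ_{i=0}^{r} C(n,i) ] = ∅. -/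
open Finset

namespace AP

/-! ### Modular arithmetic helpers -/

lemma mod1 {M z x : ℕ} (hz : z < M) (hx : x ≤ M) : ((z + (M - x)) % M + x) % M = z := by
  rw [Nat.mod_add_mod, Nat.add_assoc, Nat.sub_add_cancel hx, Nat.add_mod_right,
    Nat.mod_eq_of_lt hz]

lemma mod2 {M p x : ℕ} (hp : p < M) (hx : x ≤ M) : ((p + x) % M + (M - x)) % M = p := by
  rw [Nat.mod_add_mod, Nat.add_assoc, Nat.add_sub_cancel' hx, Nat.add_mod_right,
    Nat.mod_eq_of_lt hp]

lemma modshift {M z x k : ℕ} :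
    ((z + k) % M + (M - x)) % M = ((z + (M - x)) % M + k) % M := by
  rw [Nat.mod_add_mod, Nat.mod_add_mod]
  congr 1
  omega

/-! ### Cyclic translates -/

/-- Translate a subset of `range M` by `x`, cyclically mod `M`. -/
def tr (M : ℕ) (Q : Finset ℕ) (x : ℕ) : Finset ℕ := Q.image (fun p => (p + x) % M)

lemma mem_tr {M : ℕ} {Q : Finset ℕ} (hQ : Q ⊆ range M) {x : ℕ} (hx : x < M) {z : ℕ} :
    z ∈ tr M Q x ↔ z < M ∧ (z + (M - x)) % M ∈ Q := by
  constructor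
  · intro h
    rw [tr, mem_image] at h
    obtain ⟨p, hp, rfl⟩ := h
    have hpM := mem_range.mp (hQ hp)
    have hM : 0 < M := lt_of_le_of_lt (Nat.zero_le _) hpM
    refine ⟨Nat.mod_lt _ hM, ?_⟩
    rw [mod2 hpM hx.le]
    exact hp
  · rintro ⟨hz, hp⟩
    rw [tr, mem_image]
    exact ⟨_, hp, mod1 hz hx.le⟩

lemma tr_subset_range {M : ℕ} (hM : 0 < M) (Q : Finset ℕ) (x : ℕ) : tr M Q x ⊆ range M := by
  intro z hz
  rw [tr, mem_image] at hz
  obtain ⟨p, _, rfl⟩ := hz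
  exact mem_range.mpr (Nat.mod_lt _ hM)

lemma tr_card {M : ℕ} {Q : Finset ℕ} (hQ : Q ⊆ range M) {x : ℕ} (hx : x < M) :
    (tr M Q x).card = Q.card := by
  apply Finset.card_image_of_injOn
  intro p hp p' hp' h
  have h1 := mem_range.mp (hQ hp)
  have h2 := mem_range.mp (hQ hp')
  have := congrArg (fun y => (y + (M - x)) % M) h
  simpa [mod2 h1 hx.le, mod2 h2 hx.le] using this

lemma tr_inj_base {M : ℕ} {Q Q' : Finset ℕ} (hQ : Q ⊆ range M) (hQ' : Q' ⊆ range M)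
    {x : ℕ} (hx : x < M) (h : tr M Q x = tr M Q' x) : Q = Q' := by
  ext p
  constructor
  · intro hp
    have hpM := mem_range.mp (hQ hp)
    have : (p + x) % M ∈ tr M Q' x := by
      rw [← h, tr, mem_image]; exact ⟨p, hp, rfl⟩
    rw [mem_tr hQ' hx] at this
    rw [mod2 hpM hx.le] at this
    exact this.2
  · intro hp
    have hpM := mem_range.mp (hQ' hp)
    have : (p + x) % M ∈ tr M Q x := by
      rw [h, tr, mem_image]; exact ⟨p, hp, rfl⟩
    rw [mem_tr hQ hx] at this
    rw [mod2 hpM hx.le] at this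
    exact this.2

/-- Key uniqueness : if `Q` contains `0,1` and no other cyclically-consecutive pair,
then the unique `z` in `tr M Q x` with `(z+1) % M ∈ tr M Q x` is `z = x`. -/
lemma uniq_adj {M : ℕ} {Q : Finset ℕ} (hQ : Q ⊆ range M) {x : ℕ} (hx : x < M)
    (h0 : 0 ∈ Q) (h1 : 1 ∈ Q) (hno : ∀ p ∈ Q, p ≠ 0 → (p + 1) % M ∉ Q) (z : ℕ) :
    (z ∈ tr M Q x ∧ (z + 1) % M ∈ tr M Q x) ↔ z = x := by
  constructor
  · rintro ⟨hz, hz1⟩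
    rw [mem_tr hQ hx] at hz hz1
    obtain ⟨hzM, hp⟩ := hz
    rw [modshift] at hz1
    by_cases hp0 : (z + (M - x)) % M = 0
    · have hz' := mod1 hzM hx.le
      rw [hp0] at hz'
      simp only [Nat.zero_add] at hz'
      rw [Nat.mod_eq_of_lt hx] at hz'
      exact hz'.symm
    · exact absurd hz1.2 (hno ((z + (M - x)) % M) hp hp0)
  · rintro rfl
    have hM : 0 < M := lt_of_le_of_lt (Nat.zero_le _) hx
    have h1M : 1 < M := mem_range.mp (hQ h1)
    have hxQ : (z + (M - z)) % M ∈ Q := by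
      rw [Nat.add_sub_cancel' hx.le, Nat.mod_self]; exact h0
    constructor
    · rw [mem_tr hQ hx]; exact ⟨hx, hxQ⟩
    · rw [mem_tr hQ hx]
      refine ⟨Nat.mod_lt _ hM, ?_⟩
      rw [modshift, Nat.add_sub_cancel' hx.le, Nat.mod_self]
      simpa [Nat.mod_eq_of_lt h1M] using h1


/-- No cyclically-adjacent pair in a translate of a "spread" set. -/
lemma no_adj {M : ℕ} {Q : Finset ℕ} (hQ : Q ⊆ range M) {x : ℕ} (hx : x < M)
    (hno : ∀ p ∈ Q, (p + 1) % M ∉ Q) (z : ℕ) :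
    ¬(z ∈ tr M Q x ∧ (z + 1) % M ∈ tr M Q x) := by
  rintro ⟨hz, hz1⟩
  rw [mem_tr hQ hx] at hz hz1
  rw [modshift] at hz1
  exact hno _ hz.2 hz1.2

/-- Uniqueness gadget for the special shape `{0, 2, …}`:
unique `z` with `z ∈ S`, `(z+2) % M ∈ S`, `(z+1) % M ∉ S` is `z = x`. -/
lemma uniq_adj2 {M : ℕ} {Q : Finset ℕ} (hQ : Q ⊆ range M) {x : ℕ} (hx : x < M)
    (h0 : 0 ∈ Q) (h2 : 2 ∈ Q) (h1 : (1:ℕ) ∉ Q)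
    (hno : ∀ p ∈ Q, p ≠ 0 → ¬((p + 2) % M ∈ Q ∧ (p + 1) % M ∉ Q)) (z : ℕ) :
    (z ∈ tr M Q x ∧ (z + 2) % M ∈ tr M Q x ∧ (z + 1) % M ∉ tr M Q x) ↔ z = x := by
  have h2M : 2 < M := mem_range.mp (hQ h2)
  constructor
  · rintro ⟨hz, hz2, hz1⟩
    rw [mem_tr hQ hx] at hz hz2
    obtain ⟨hzM, hp⟩ := hz
    rw [modshift] at hz2
    have hz1' : ¬((z + 1) % M < M ∧ ((z + (M - x)) % M + 1) % M ∈ Q) := by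
      rw [← modshift, ← mem_tr hQ hx]
      exact hz1
    by_cases hp0 : (z + (M - x)) % M = 0
    · have hz' := mod1 hzM hx.le
      rw [hp0] at hz'
      simp only [Nat.zero_add] at hz'
      rw [Nat.mod_eq_of_lt hx] at hz'
      exact hz'.symm
    · exfalso
      refine hno ((z + (M - x)) % M) hp hp0 ⟨hz2.2, ?_⟩
      intro hmem
      exact hz1' ⟨Nat.mod_lt _ (lt_of_le_of_lt (Nat.zero_le _) hx), hmem⟩
  · rintro rfl
    have hM : 0 < M := lt_of_le_of_lt (Nat.zero_le _) hx
    have hxQ : (z + (M - z)) % M ∈ Q := by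
      rw [Nat.add_sub_cancel' hx.le, Nat.mod_self]; exact h0
    refine ⟨?_, ?_, ?_⟩
    · rw [mem_tr hQ hx]; exact ⟨hx, hxQ⟩
    · rw [mem_tr hQ hx]
      refine ⟨Nat.mod_lt _ hM, ?_⟩
      rw [modshift, Nat.add_sub_cancel' hx.le, Nat.mod_self]
      simpa [Nat.mod_eq_of_lt h2M] using h2
    · rw [mem_tr hQ hx]
      rintro ⟨-, hmem⟩
      rw [modshift, Nat.add_sub_cancel' hx.le, Nat.mod_self] at hmem
      rw [Nat.mod_eq_of_lt (by omega : (0:ℕ) + 1 < M)] at hmem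
      exact h1 (by simpa using hmem)

/-! ### The spread-set gadget `ψ` -/

/-- `gm A a = 3 + a + |{b ∈ A : b < a}|`. -/
def gm (A : Finset ℕ) (a : ℕ) : ℕ := 3 + a + (A.filter (· < a)).card

/-- The "spread" image of `A`. -/
def ψ (A : Finset ℕ) : Finset ℕ := A.image (gm A)

lemma gm_lt {A : Finset ℕ} {a a' : ℕ} (ha : a ∈ A) (h : a < a') :
    gm A a + 2 ≤ gm A a' := by
  have hsub : insert a (A.filter (· < a)) ⊆ A.filter (· < a') := by
    intro b hb
    rcases mem_insert.mp hb with rfl | hb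
    · exact mem_filter.mpr ⟨ha, h⟩
    · obtain ⟨hbA, hba⟩ := mem_filter.mp hb
      exact mem_filter.mpr ⟨hbA, lt_trans hba h⟩
  have hnot : a ∉ A.filter (· < a) := by simp
  have hcard : (A.filter (· < a)).card + 1 ≤ (A.filter (· < a')).card := by
    rw [← Finset.card_insert_of_notMem hnot]
    exact card_le_card hsub
  unfold gm
  omega

lemma gm_injOn {A : Finset ℕ} : ∀ a ∈ A, ∀ a' ∈ A, gm A a = gm A a' → a = a' := by
  intro a ha a' ha' h
  rcases lt_trichotomy a a' with hl | he | hl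
  · have := gm_lt ha hl; omega
  · exact he
  · have := gm_lt ha' hl; omega

lemma psi_card {A : Finset ℕ} : (ψ A).card = A.card :=
  card_image_of_injOn (fun a ha a' ha' h => gm_injOn a ha a' ha' h)

lemma mem_psi_ge {A : Finset ℕ} {b : ℕ} (hb : b ∈ ψ A) : 3 ≤ b := by
  rw [ψ, mem_image] at hb
  obtain ⟨a, _, rfl⟩ := hb
  unfold gm; omega

lemma mem_psi_le {A : Finset ℕ} {K b : ℕ} (hA : A ⊆ range K) (hb : b ∈ ψ A) :
    b + 2 ≤ 3 + K + A.card := by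
  rw [ψ, mem_image] at hb
  obtain ⟨a, ha, rfl⟩ := hb
  have h1 : a < K := mem_range.mp (hA ha)
  have h2 : (A.filter (· < a)).card + 1 ≤ A.card := by
    have hsub : insert a (A.filter (· < a)) ⊆ A := by
      intro b hb
      rcases mem_insert.mp hb with rfl | hb
      · exact ha
      · exact (mem_filter.mp hb).1
    have hnot : a ∉ A.filter (· < a) := by simp
    rw [← Finset.card_insert_of_notMem hnot]
    exact card_le_card hsub
  unfold gm
  omega

lemma psi_no_consec {A : Finset ℕ} {b : ℕ} (hb : b ∈ ψ A) : b + 1 ∉ ψ A := by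
  intro hb1
  rw [ψ, mem_image] at hb hb1
  obtain ⟨a, ha, rfl⟩ := hb
  obtain ⟨a', ha', he⟩ := hb1
  rcases lt_trichotomy a a' with hl | rfl | hl
  · have := gm_lt ha hl; omega
  · omega
  · have := gm_lt ha' hl; omega

lemma psi_filter {A : Finset ℕ} {a : ℕ} (ha : a ∈ A) :
    (ψ A).filter (· < gm A a) = (A.filter (· < a)).image (gm A) := by
  ext b
  simp only [ψ, mem_filter, mem_image]
  constructor
  · rintro ⟨⟨a2, ha2, rfl⟩, hlt⟩
    refine ⟨a2, ⟨ha2, ?_⟩, rfl⟩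
    by_contra hcon
    push_neg at hcon
    rcases eq_or_lt_of_le hcon with rfl | h
    · omega
    · have := gm_lt ha h; omega
  · rintro ⟨a2, ⟨h2A, h2a⟩, rfl⟩
    have := gm_lt h2A h2a
    exact ⟨⟨a2, h2A, rfl⟩, by omega⟩

lemma psi_rank {A : Finset ℕ} {a : ℕ} (ha : a ∈ A) :
    ((ψ A).filter (· < gm A a)).card = (A.filter (· < a)).card := by
  rw [psi_filter ha]
  exact card_image_of_injOn
    (fun x hx y hy h => gm_injOn x (mem_filter.mp hx).1 y (mem_filter.mp hy).1 h)

lemma psi_inv {A : Finset ℕ} {a : ℕ} (ha : a ∈ A) :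
    gm A a - 3 - ((ψ A).filter (· < gm A a)).card = a := by
  rw [psi_rank ha]
  unfold gm
  omega

lemma psi_recover (A : Finset ℕ) :
    (ψ A).image (fun b => b - 3 - ((ψ A).filter (· < b)).card) = A := by
  ext a
  simp only [mem_image]
  constructor
  · rintro ⟨b, hb, rfl⟩
    have hb' := hb
    rw [ψ, mem_image] at hb'
    obtain ⟨a2, ha2, rfl⟩ := hb'
    rw [psi_inv ha2]
    exact ha2
  · intro ha
    exact ⟨gm A a, mem_image_of_mem _ ha, psi_inv ha⟩

lemma psi_inj {A A' : Finset ℕ} (h : ψ A = ψ A') : A = A' := by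
  rw [← psi_recover A, ← psi_recover A', h]




/-! ### Numeric binomial lemmas -/

lemma double_le {n i : ℕ} (h : 3 * i + 2 ≤ n) : 2 * n.choose i ≤ n.choose (i + 1) := by
  have key := Nat.choose_succ_right_eq n i
  have h1 : n.choose i * (2 * (i + 1)) ≤ n.choose i * (n - i) :=
    Nat.mul_le_mul_left _ (by omega)
  have h2 : 2 * n.choose i * (i + 1) ≤ n.choose (i + 1) * (i + 1) := by
    rw [key]; calc 2 * n.choose i * (i+1) = n.choose i * (2 * (i+1)) := by ring
      _ ≤ n.choose i * (n - i) := h1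
  exact Nat.le_of_mul_le_mul_right h2 (by omega)

lemma mono_choose_bot {n i j : ℕ} (hij : i ≤ j) (h : 3 * j + 2 ≤ n) :
    n.choose i ≤ n.choose j := by
  induction j with
  | zero => simp_all
  | succ j ih =>
    rcases Nat.lt_or_ge i (j+1) with hlt | hge
    · have h1 : n.choose i ≤ n.choose j := ih (by omega) (by omega)
      have h2 := double_le (n := n) (i := j) (by omega)
      omega
    · have : i = j + 1 := by omega
      simp [this]

/-- geometric bound: `Σ_{i<t+1} C(n,i) ≤ 2·C(n,t)`. -/
lemma geo_sum {n t : ℕ} (h : 3 * t + 2 ≤ n) :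
    ∑ i ∈ range (t + 1), n.choose i ≤ 2 * n.choose t := by
  induction t with
  | zero => simp
  | succ t ih =>
    rw [sum_range_succ]
    have h1 := ih (by omega)
    have h2 := double_le (n := n) (i := t) (by omega)
    omega

lemma df_step_le {a t k : ℕ} :
    (a + t).descFactorial (k + 1) ≤ a.descFactorial (k + 1) + (k + 1) * t * (a + t).descFactorial k := by
  induction k with
  | zero =>
    simp only [Nat.descFactorial_succ, Nat.descFactorial_zero, Nat.sub_zero, Nat.mul_one, Nat.one_mul]
    omega
  | succ k ih =>
    rw [Nat.descFactorial_succ (a+t) (k+1), Nat.descFactorial_succ a (k+1)]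
    have hstep : (a - (k+1)) * (a+t).descFactorial k ≤ (a+t).descFactorial (k+1) := by
      rw [Nat.descFactorial_succ]
      exact Nat.mul_le_mul_right _ (by omega)
    calc (a + t - (k+1)) * (a+t).descFactorial (k+1)
        ≤ ((a - (k+1)) + t) * (a+t).descFactorial (k+1) :=
          Nat.mul_le_mul_right _ (by omega)
      _ = (a - (k+1)) * (a+t).descFactorial (k+1) + t * (a+t).descFactorial (k+1) := by ring
      _ ≤ (a - (k+1)) * (a.descFactorial (k+1) + (k + 1) * t * (a + t).descFactorial k)
          + t * (a+t).descFactorial (k+1) :=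
          Nat.add_le_add_right (Nat.mul_le_mul_left _ ih) _
      _ = (a - (k+1)) * a.descFactorial (k+1)
          + (k+1) * t * ((a - (k+1)) * (a+t).descFactorial k)
          + t * (a+t).descFactorial (k+1) := by ring
      _ ≤ (a - (k+1)) * a.descFactorial (k+1)
          + (k+1) * t * (a+t).descFactorial (k+1)
          + t * (a+t).descFactorial (k+1) :=
          Nat.add_le_add_right (Nat.add_le_add_left (Nat.mul_le_mul_left _ hstep) _) _
      _ = (a - (k+1)) * a.descFactorial (k+1) + (k + 1 + 1) * t * (a+t).descFactorial (k+1) := by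
          ring

/-- ratio bound with parameter `s`: `s·C(a+t,k) ≤ (s+1)·C(a,k)` provided `a` is large. -/
lemma ratio_choose {s k t a : ℕ} (h : (s + 1) * k * t + k ≤ a) :
    s * (a + t).choose k ≤ (s + 1) * a.choose k := by
  rcases Nat.eq_zero_or_pos k with rfl | hk
  · simp only [Nat.choose_zero_right, Nat.mul_one]
    omega
  obtain ⟨j, rfl⟩ : ∃ j, k = j + 1 := ⟨k - 1, by omega⟩
  set X := (a + t).descFactorial (j+1) with hX
  set Y := a.descFactorial (j+1) with hY
  have hdf := df_step_le (a := a) (t := t) (k := j)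
  have hge : (a - j) * (a+t).descFactorial j ≤ X := by
    rw [hX, Nat.descFactorial_succ]
    exact Nat.mul_le_mul_right _ (by omega)
  have key : (a - j) * X ≤ (a - j) * Y + ((j+1) * t) * X := by
    calc (a - j) * X ≤ (a - j) * (Y + (j + 1) * t * (a + t).descFactorial j) :=
          Nat.mul_le_mul_left _ hdf
      _ = (a - j) * Y + (j+1) * t * ((a - j) * (a+t).descFactorial j) := by ring
      _ ≤ (a - j) * Y + (j+1) * t * X := Nat.add_le_add_left (Nat.mul_le_mul_left _ hge) _
      _ = (a - j) * Y + ((j+1) * t) * X := by ring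
  have hcond : (s + 1) * ((j + 1) * t) ≤ a - j := by
    have hexp : (s+1) * (j+1) * t + (j+1) ≤ a := h
    have heq : (s+1) * ((j+1) * t) = (s+1) * (j+1) * t := by ring
    omega
  have e1 : (s+1) * ((a - j) * X) ≤ (s+1) * ((a - j) * Y) + (s+1) * (((j+1)*t) * X) := by
    calc (s+1) * ((a - j) * X) ≤ (s+1) * ((a - j) * Y + ((j+1) * t) * X) :=
          Nat.mul_le_mul_left _ key
      _ = (s+1) * ((a - j) * Y) + (s+1) * (((j+1)*t) * X) := by ring
  have e2 : (s+1) * (((j+1)*t) * X) ≤ (a - j) * X := by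
    rw [show (s+1) * (((j+1)*t) * X) = ((s+1) * ((j+1)*t)) * X from by ring]
    exact Nat.mul_le_mul_right _ hcond
  have e3 : (s+1) * ((a - j) * X) ≤ (s+1) * ((a - j) * Y) + (a - j) * X :=
    le_trans e1 (Nat.add_le_add_left e2 _)
  have e4 : s * ((a - j) * X) + (a - j) * X ≤ (s+1) * ((a - j) * Y) + (a - j) * X := by
    rw [show (s+1) * ((a-j) * X) = s * ((a-j)*X) + (a-j)*X from by ring] at e3
    exact e3
  have e5 : s * ((a - j) * X) ≤ (s+1) * ((a - j) * Y) := Nat.le_of_add_le_add_right e4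
  have haj : 0 < a - j := by omega
  have e6 : (a - j) * (s * X) ≤ (a - j) * ((s+1) * Y) := by
    calc (a-j) * (s * X) = s * ((a-j) * X) := by ring
      _ ≤ (s+1) * ((a - j) * Y) := e5
      _ = (a - j) * ((s+1) * Y) := by ring
  have main2 : s * X ≤ (s+1) * Y := Nat.le_of_mul_le_mul_left e6 haj
  rw [hX, hY, Nat.descFactorial_eq_factorial_mul_choose, Nat.descFactorial_eq_factorial_mul_choose]
    at main2
  have e7 : (Nat.factorial (j+1)) * (s * (a+t).choose (j+1)) ≤ (Nat.factorial (j+1)) * ((s+1) * a.choose (j+1)) := by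
    calc (Nat.factorial (j+1)) * (s * (a+t).choose (j+1)) = s * ((Nat.factorial (j+1)) * (a+t).choose (j+1)) := by ring
      _ ≤ (s+1) * ((Nat.factorial (j+1)) * a.choose (j+1)) := main2
      _ = (Nat.factorial (j+1)) * ((s+1) * a.choose (j+1)) := by ring
  exact Nat.le_of_mul_le_mul_left e7 (Nat.factorial_pos _)




/-- Coverage of a point by `k+1`-subsets of `range M`. -/
lemma cov_powersetCard {M k z : ℕ} (hz : z < M) :
    ((powersetCard (k+1) (range M)).filter (fun S => z ∈ S)).card = Nat.choose (M - 1) k := by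
  have hcard : ((range M).erase z).card = M - 1 := by
    rw [card_erase_of_mem (mem_range.mpr hz), card_range]
  have hpc := card_powersetCard k ((range M).erase z)
  rw [hcard] at hpc
  rw [← hpc]
  · refine Finset.card_bij' (fun S _ => S.erase z) (fun T _ => insert z T) ?_ ?_ ?_ ?_
    · intro S hS
      obtain ⟨hS1, hS2⟩ := mem_filter.mp hS
      obtain ⟨hsub, hc⟩ := mem_powersetCard.mp hS1
      refine mem_powersetCard.mpr ⟨?_, ?_⟩
      · exact erase_subset_erase z hsub
      · rw [card_erase_of_mem hS2, hc]
        omega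
    · intro T hT
      obtain ⟨hsub, hc⟩ := mem_powersetCard.mp hT
      have hzT : z ∉ T := fun hzT => (notMem_erase z _) (hsub hzT)
      refine mem_filter.mpr ⟨mem_powersetCard.mpr ⟨?_, ?_⟩, mem_insert_self _ _⟩
      · intro y hy
        rcases mem_insert.mp hy with rfl | hy
        · exact mem_range.mpr hz
        · exact (erase_subset _ _) (hsub hy)
      · rw [card_insert_of_notMem hzT, hc]
    · intro S hS
      exact insert_erase (mem_filter.mp hS).2
    · intro T hT
      apply erase_insert
      intro hzT
      exact (notMem_erase z _) ((mem_powersetCard.mp hT).1 hzT)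

/-- Each point of `range M` is covered by exactly `|Q|` translates of `Q`. -/
lemma tr_cover {M : ℕ} {Q : Finset ℕ} (hQ : Q ⊆ range M) {z : ℕ} (hz : z < M) :
    ((range M).filter (fun x => z ∈ tr M Q x)).card = Q.card := by
  have hM : 0 < M := lt_of_le_of_lt (Nat.zero_le _) hz
  refine Finset.card_bij' (fun x _ => (z + (M - x)) % M) (fun p _ => (z + (M - p)) % M) ?_ ?_ ?_ ?_
  · intro x hx
    obtain ⟨hx1, hx2⟩ := mem_filter.mp hx
    exact ((mem_tr hQ (mem_range.mp hx1)).mp hx2).2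
  · intro p hp
    have hpM : p < M := mem_range.mp (hQ hp)
    have hxM : (z + (M - p)) % M < M := Nat.mod_lt _ hM
    refine mem_filter.mpr ⟨mem_range.mpr hxM, ?_⟩
    rw [tr, mem_image]
    refine ⟨p, hp, ?_⟩
    rw [Nat.add_mod_mod, show p + (z + (M - p)) = z + M by omega, Nat.add_mod_right,
      Nat.mod_eq_of_lt hz]
  · intro x hx
    obtain ⟨hx1, hx2⟩ := mem_filter.mp hx
    have hxM := mem_range.mp hx1
    have hpM : (z + (M - x)) % M < M := Nat.mod_lt _ hM
    have h2 : ((x + (z + (M - x)) % M) % M + (M - ((z + (M - x)) % M))) % M = x :=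
      mod2 hxM hpM.le
    rw [Nat.add_comm x ((z + (M - x)) % M)] at h2
    have h1 : ((z + (M - x)) % M + x) % M = z := mod1 hz hxM.le
    rw [h1] at h2
    exact h2
  · intro p hp
    have hpM : p < M := mem_range.mp (hQ hp)
    have hxM : (z + (M - p)) % M < M := Nat.mod_lt _ hM
    have h1 : (p + (z + (M - p)) % M) % M = z := by
      rw [Nat.add_mod_mod, show p + (z + (M - p)) = z + M by omega, Nat.add_mod_right,
        Nat.mod_eq_of_lt hz]
    have h2 : ((p + (z + (M - p)) % M) % M + (M - ((z + (M - p)) % M))) % M = p :=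
      mod2 hpM hxM.le
    rw [h1] at h2
    exact h2

/-- fiberwise count over a product. -/
lemma card_filter_product {α β : Type*} [DecidableEq α] [DecidableEq β]
    (s : Finset α) (t : Finset β) (P : α → β → Prop) [∀ a b, Decidable (P a b)] :
    ((s ×ˢ t).filter (fun q => P q.1 q.2)).card
      = ∑ a ∈ s, (t.filter (fun b => P a b)).card := by
  rw [Finset.card_eq_sum_card_fiberwise
    (f := Prod.fst) (t := s) (fun q hq => (mem_product.mp (mem_filter.mp hq).1).1)]
  apply Finset.sum_congr rfl
  intro a ha
  refine Finset.card_bij' (fun q _ => q.2) (fun b _ => (a, b)) ?_ ?_ ?_ ?_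
  · intro q hq
    obtain ⟨hq1, hq2⟩ := mem_filter.mp hq
    obtain ⟨hq3, hq4⟩ := mem_filter.mp hq1
    obtain ⟨_, hq5⟩ := mem_product.mp hq3
    refine mem_filter.mpr ⟨hq5, ?_⟩
    rwa [hq2] at hq4
  · intro b hb
    obtain ⟨hb1, hb2⟩ := mem_filter.mp hb
    exact mem_filter.mpr ⟨mem_filter.mpr ⟨mem_product.mpr ⟨ha, hb1⟩, hb2⟩, rfl⟩
  · intro q hq
    obtain ⟨hq1, hq2⟩ := mem_filter.mp hq
    exact Prod.ext hq2.symm rfl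
  · intro b hb
    rfl


/-! ### The colouring construction -/

/-- Base shape `{0,1} ∪ ψ A`. -/
def PA (A : Finset ℕ) : Finset ℕ := insert 0 (insert 1 (ψ A))

/-- The special shape `{0,2,5,8,…}`. -/
def Pstar (r : ℕ) : Finset ℕ := insert 0 (insert 2 ((range (r-3)).image (fun i => 5 + 3*i)))

/-- `m = Σ_{i≤r-2} C(n,i)`. -/
def mS (r n : ℕ) : ℕ := ∑ i ∈ range (r-1), Nat.choose n i

def D1 (n : ℕ) (AA : Finset (Finset ℕ)) : Finset (Finset ℕ) :=
  (AA ×ˢ range (n+1)).image (fun q => tr (n+1) (PA q.1) q.2)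

def D2 (r n : ℕ) : Finset (Finset ℕ) :=
  (range (mS r n % (n+1))).image (fun x => tr (n+1) (Pstar r) x)

def bigC (r n : ℕ) (AA : Finset (Finset ℕ)) : Finset (Finset ℕ) :=
  powersetCard r (range (n+1)) ∪ (D1 n AA ∪ D2 r n)

section Shapes

variable {r n : ℕ}

lemma psi_bounds (hr : 3 ≤ r) (hn : 3 * r + 5 ≤ n) {A : Finset ℕ} (hA : A ∈ powersetCard (r-3) (range (n-r)))
    {b : ℕ} (hb : b ∈ ψ A) : 3 ≤ b ∧ b + 2 ≤ n := by
  obtain ⟨hsub, hcard⟩ := mem_powersetCard.mp hA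
  have h1 := mem_psi_ge hb
  have h2 := mem_psi_le hsub hb
  rw [hcard] at h2
  exact ⟨h1, by omega⟩

lemma PA_subset (hr : 3 ≤ r) (hn : 3 * r + 5 ≤ n) {A : Finset ℕ} (hA : A ∈ powersetCard (r-3) (range (n-r))) :
    PA A ⊆ range (n+1) := by
  intro p hp
  rw [PA] at hp
  rcases mem_insert.mp hp with rfl | hp
  · exact mem_range.mpr (by omega)
  rcases mem_insert.mp hp with rfl | hp
  · exact mem_range.mpr (by omega)
  · have := (psi_bounds hr hn hA hp).2
    exact mem_range.mpr (by omega)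

lemma PA_card (hr : 3 ≤ r) {A : Finset ℕ} (hA : A ∈ powersetCard (r-3) (range (n-r))) :
    (PA A).card = r - 1 := by
  obtain ⟨hsub, hcard⟩ := mem_powersetCard.mp hA
  have h0 : (0:ℕ) ∉ insert 1 (ψ A) := by
    intro h
    rcases mem_insert.mp h with h | h
    · omega
    · have := mem_psi_ge h; omega
  have h1 : (1:ℕ) ∉ ψ A := by
    intro h; have := mem_psi_ge h; omega
  rw [PA, card_insert_of_notMem h0, card_insert_of_notMem h1, psi_card, hcard]
  omega

lemma PA_no_consec (hr : 3 ≤ r) (hn : 3 * r + 5 ≤ n) {A : Finset ℕ} (hA : A ∈ powersetCard (r-3) (range (n-r))) :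
    ∀ p ∈ PA A, p ≠ 0 → (p + 1) % (n+1) ∉ PA A := by
  intro p hp hp0 hmem
  rw [PA] at hp
  rcases mem_insert.mp hp with rfl | hp
  · omega
  rcases mem_insert.mp hp with rfl | hp
  · -- p = 1, so (2) % (n+1) = 2 ∈ PA A : contradiction
    rw [Nat.mod_eq_of_lt (by omega)] at hmem
    rw [PA] at hmem
    rcases mem_insert.mp hmem with h | h
    · omega
    rcases mem_insert.mp h with h | h
    · omega
    · have := mem_psi_ge h; omega
  · have hb := psi_bounds hr hn hA hp
    rw [Nat.mod_eq_of_lt (by omega)] at hmem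
    rw [PA] at hmem
    rcases mem_insert.mp hmem with h | h
    · omega
    rcases mem_insert.mp h with h | h
    · omega
    · exact psi_no_consec hp h

lemma PA_eq_psi_eq {A A' : Finset ℕ} (h : PA A = PA A') : A = A' := by
  apply psi_inj
  have e : ∀ B : Finset ℕ, ((insert 0 (insert 1 (ψ B))).erase 0).erase 1 = ψ B := by
    intro B
    have h0 : (0:ℕ) ∉ insert 1 (ψ B) := by
      intro h
      rcases mem_insert.mp h with h | h
      · omega
      · have := mem_psi_ge h; omega
    have h1 : (1:ℕ) ∉ ψ B := by
      intro h; have := mem_psi_ge h; omega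
    rw [Finset.erase_insert h0, Finset.erase_insert h1]
  have := congrArg (fun S => (S.erase 0).erase 1) h
  simpa only [PA, e] using this

lemma Pstar_mem_iff {r p : ℕ} :
    p ∈ Pstar r ↔ p = 0 ∨ p = 2 ∨ ∃ i < r - 3, p = 5 + 3*i := by
  rw [Pstar]
  simp only [mem_insert, mem_image, mem_range]
  constructor
  · rintro (rfl | rfl | ⟨i, hi, rfl⟩)
    · exact Or.inl rfl
    · exact Or.inr (Or.inl rfl)
    · exact Or.inr (Or.inr ⟨i, hi, rfl⟩)
  · rintro (rfl | rfl | ⟨i, hi, rfl⟩)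
    · exact Or.inl rfl
    · exact Or.inr (Or.inl rfl)
    · exact Or.inr (Or.inr ⟨i, hi, rfl⟩)

lemma Pstar_subset (hr : 3 ≤ r) (hn : 3 * r + 5 ≤ n) : Pstar r ⊆ range (n+1) := by
  intro p hp
  rcases Pstar_mem_iff.mp hp with rfl | rfl | ⟨i, hi, rfl⟩
  · exact mem_range.mpr (by omega)
  · exact mem_range.mpr (by omega)
  · exact mem_range.mpr (by omega)

lemma Pstar_card (hr : 3 ≤ r) : (Pstar r).card = r - 1 := by
  have himg : ((range (r-3)).image (fun i => 5 + 3*i)).card = r - 3 := by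
    rw [Finset.card_image_of_injective _ (fun a b h => by omega), card_range]
  have h2 : (2:ℕ) ∉ (range (r-3)).image (fun i => 5 + 3*i) := by
    intro h
    obtain ⟨i, _, hi⟩ := mem_image.mp h
    omega
  have h0 : (0:ℕ) ∉ insert 2 ((range (r-3)).image (fun i => 5 + 3*i)) := by
    intro h
    rcases mem_insert.mp h with h | h
    · omega
    · obtain ⟨i, _, hi⟩ := mem_image.mp h; omega
  rw [Pstar, card_insert_of_notMem h0, card_insert_of_notMem h2, himg]
  omega

lemma Pstar_no_consec (hn : 3 * r + 5 ≤ n) : ∀ p ∈ Pstar r, (p + 1) % (n+1) ∉ Pstar r := by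
  intro p hp hmem
  have hple : p + 1 < n + 1 := by
    rcases Pstar_mem_iff.mp hp with rfl | rfl | ⟨i, hi, rfl⟩ <;> omega
  rw [Nat.mod_eq_of_lt hple] at hmem
  rcases Pstar_mem_iff.mp hp with rfl | rfl | ⟨i, hi, rfl⟩ <;>
    rcases Pstar_mem_iff.mp hmem with h | h | ⟨j, hj, hh⟩ <;> omega

lemma Pstar_no2 (hn : 3 * r + 5 ≤ n) : ∀ p ∈ Pstar r, p ≠ 0 →
    ¬((p + 2) % (n+1) ∈ Pstar r ∧ (p + 1) % (n+1) ∉ Pstar r) := by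
  rintro p hp hp0 ⟨h2, -⟩
  have hple : p + 2 < n + 1 := by
    rcases Pstar_mem_iff.mp hp with rfl | rfl | ⟨i, hi, rfl⟩ <;> omega
  rw [Nat.mod_eq_of_lt hple] at h2
  rcases Pstar_mem_iff.mp hp with rfl | rfl | ⟨i, hi, rfl⟩ <;>
    rcases Pstar_mem_iff.mp h2 with h | h | ⟨j, hj, hh⟩ <;> omega

end Shapes

section Counting

variable {r n : ℕ} {AA : Finset (Finset ℕ)}

lemma D1_adj (hr : 3 ≤ r) (hn : 3 * r + 5 ≤ n)
    (hAA : ∀ A ∈ AA, A ∈ powersetCard (r-3) (range (n-r))) {S : Finset ℕ}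
    (hS : S ∈ D1 n AA) : ∃ z, z ∈ S ∧ (z + 1) % (n+1) ∈ S := by
  rw [D1, mem_image] at hS
  obtain ⟨⟨A, x⟩, hq, rfl⟩ := hS
  obtain ⟨hqA, hqx⟩ := mem_product.mp hq
  have hx : x < n + 1 := mem_range.mp hqx
  have hA := hAA A hqA
  have h01 : (0:ℕ) ∈ PA A ∧ (1:ℕ) ∈ PA A := by
    constructor
    · exact mem_insert_self _ _
    · exact mem_insert_of_mem (mem_insert_self _ _)
  have := (uniq_adj (PA_subset hr hn hA) hx h01.1 h01.2 (PA_no_consec hr hn hA) x).mpr rfl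
  exact ⟨x, this⟩

lemma D2_no_adj (hr : 3 ≤ r) (hn : 3 * r + 5 ≤ n) {S : Finset ℕ}
    (hS : S ∈ D2 r n) : ∀ z, ¬(z ∈ S ∧ (z + 1) % (n+1) ∈ S) := by
  rw [D2, mem_image] at hS
  obtain ⟨x, hx, rfl⟩ := hS
  have hx' : x < n + 1 := by
    have := mem_range.mp hx
    have h2 : mS r n % (n+1) < n + 1 := Nat.mod_lt _ (by omega)
    omega
  exact no_adj (Pstar_subset hr hn) hx' (Pstar_no_consec hn)

lemma D1_D2_disjoint (hr : 3 ≤ r) (hn : 3 * r + 5 ≤ n)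
    (hAA : ∀ A ∈ AA, A ∈ powersetCard (r-3) (range (n-r))) :
    Disjoint (D1 n AA) (D2 r n) := by
  rw [Finset.disjoint_left]
  intro S h1 h2
  obtain ⟨z, hz⟩ := D1_adj hr hn hAA h1
  exact D2_no_adj hr hn h2 z hz

lemma D1_card_mem (hr : 3 ≤ r) (hn : 3 * r + 5 ≤ n)
    (hAA : ∀ A ∈ AA, A ∈ powersetCard (r-3) (range (n-r))) {S : Finset ℕ}
    (hS : S ∈ D1 n AA) : S.card = r - 1 ∧ S ⊆ range (n+1) := by
  rw [D1, mem_image] at hS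
  obtain ⟨⟨A, x⟩, hq, rfl⟩ := hS
  obtain ⟨hqA, hqx⟩ := mem_product.mp hq
  have hA := hAA A hqA
  constructor
  · rw [tr_card (PA_subset hr hn hA) (mem_range.mp hqx)]
    exact PA_card hr hA
  · exact tr_subset_range (by omega) _ _

lemma D2_card_mem (hr : 3 ≤ r) (hn : 3 * r + 5 ≤ n) {S : Finset ℕ}
    (hS : S ∈ D2 r n) : S.card = r - 1 ∧ S ⊆ range (n+1) := by
  rw [D2, mem_image] at hS
  obtain ⟨x, hx, rfl⟩ := hS
  have hx' : x < n + 1 := by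
    have := mem_range.mp hx
    have h2 : mS r n % (n+1) < n + 1 := Nat.mod_lt _ (by omega)
    omega
  constructor
  · rw [tr_card (Pstar_subset hr hn) hx']
    exact Pstar_card hr
  · exact tr_subset_range (by omega) _ _

lemma D1_injOn (hr : 3 ≤ r) (hn : 3 * r + 5 ≤ n)
    (hAA : ∀ A ∈ AA, A ∈ powersetCard (r-3) (range (n-r))) :
    Set.InjOn (fun q : Finset ℕ × ℕ => tr (n+1) (PA q.1) q.2)
      ((AA ×ˢ range (n+1) : Finset (Finset ℕ × ℕ)) : Set (Finset ℕ × ℕ)) := by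
  rintro ⟨A, x⟩ hq ⟨A', x'⟩ hq' h
  obtain ⟨hqA, hqx⟩ := mem_product.mp (Finset.mem_coe.mp hq)
  obtain ⟨hqA', hqx'⟩ := mem_product.mp (Finset.mem_coe.mp hq')
  have hA := hAA A hqA
  have hA' := hAA A' hqA'
  have hx : x < n+1 := mem_range.mp hqx
  have hx' : x' < n+1 := mem_range.mp hqx'
  simp only at h
  have h0 : (0:ℕ) ∈ PA A := mem_insert_self _ _
  have h1 : (1:ℕ) ∈ PA A := mem_insert_of_mem (mem_insert_self _ _)
  have h0' : (0:ℕ) ∈ PA A' := mem_insert_self _ _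
  have h1' : (1:ℕ) ∈ PA A' := mem_insert_of_mem (mem_insert_self _ _)
  have hxmem := (uniq_adj (PA_subset hr hn hA) hx h0 h1 (PA_no_consec hr hn hA) x).mpr rfl
  rw [h] at hxmem
  have hxx' : x = x' :=
    (uniq_adj (PA_subset hr hn hA') hx' h0' h1' (PA_no_consec hr hn hA') x).mp hxmem
  subst hxx'
  have hPA : PA A = PA A' :=
    tr_inj_base (PA_subset hr hn hA) (PA_subset hr hn hA') hx h
  rw [PA_eq_psi_eq hPA]

lemma D1_card (hr : 3 ≤ r) (hn : 3 * r + 5 ≤ n)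
    (hAA : ∀ A ∈ AA, A ∈ powersetCard (r-3) (range (n-r))) :
    (D1 n AA).card = AA.card * (n+1) := by
  rw [D1, Finset.card_image_of_injOn (D1_injOn hr hn hAA), card_product, card_range]

lemma D2_card (hr : 3 ≤ r) (hn : 3 * r + 5 ≤ n) :
    (D2 r n).card = mS r n % (n+1) := by
  rw [D2, Finset.card_image_of_injOn, card_range]
  intro x hx x' hx' h
  have hmod : mS r n % (n+1) < n + 1 := Nat.mod_lt _ (by omega)
  have hxM : x < n + 1 := by have := mem_range.mp (Finset.mem_coe.mp hx); omega
  have hxM' : x' < n + 1 := by have := mem_range.mp (Finset.mem_coe.mp hx'); omega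
  have h0 : (0:ℕ) ∈ Pstar r := mem_insert_self _ _
  have h2 : (2:ℕ) ∈ Pstar r := mem_insert_of_mem (mem_insert_self _ _)
  have h1 : (1:ℕ) ∉ Pstar r := by
    intro h
    rcases Pstar_mem_iff.mp h with h | h | ⟨i, _, h⟩ <;> omega
  have hxmem := (uniq_adj2 (Pstar_subset hr hn) hxM h0 h2 h1 (Pstar_no2 hn) x).mpr rfl
  simp only at h
  rw [h] at hxmem
  exact (uniq_adj2 (Pstar_subset hr hn) hxM' h0 h2 h1 (Pstar_no2 hn) x).mp hxmem

lemma pows_D_disjoint (hr : 3 ≤ r) (hn : 3 * r + 5 ≤ n)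
    (hAA : ∀ A ∈ AA, A ∈ powersetCard (r-3) (range (n-r))) :
    Disjoint (powersetCard r (range (n+1))) (D1 n AA ∪ D2 r n) := by
  rw [Finset.disjoint_left]
  intro S h1 h2
  have hc : S.card = r := (mem_powersetCard.mp h1).2
  rcases mem_union.mp h2 with h | h
  · have := (D1_card_mem hr hn hAA h).1; omega
  · have := (D2_card_mem hr hn h).1; omega

lemma bigC_card (hr : 3 ≤ r) (hn : 3 * r + 5 ≤ n)
    (hAA : ∀ A ∈ AA, A ∈ powersetCard (r-3) (range (n-r))) :
    (bigC r n AA).card = (n+1).choose r + (AA.card * (n+1) + mS r n % (n+1)) := by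
  rw [bigC, card_union_of_disjoint (pows_D_disjoint hr hn hAA),
    card_union_of_disjoint (D1_D2_disjoint hr hn hAA),
    card_powersetCard, card_range, D1_card hr hn hAA, D2_card hr hn]

lemma bigC_subset_range (hr : 3 ≤ r) (hn : 3 * r + 5 ≤ n)
    (hAA : ∀ A ∈ AA, A ∈ powersetCard (r-3) (range (n-r))) {S : Finset ℕ}
    (hS : S ∈ bigC r n AA) : S ⊆ range (n+1) := by
  rcases mem_union.mp hS with h | h
  · exact (mem_powersetCard.mp h).1
  rcases mem_union.mp h with h | h
  · exact (D1_card_mem hr hn hAA h).2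
  · exact (D2_card_mem hr hn h).2

lemma bigC_card_mem (hr : 3 ≤ r) (hn : 3 * r + 5 ≤ n)
    (hAA : ∀ A ∈ AA, A ∈ powersetCard (r-3) (range (n-r))) {S : Finset ℕ}
    (hS : S ∈ bigC r n AA) : S.card = r ∨ S.card = r - 1 := by
  rcases mem_union.mp hS with h | h
  · exact Or.inl (mem_powersetCard.mp h).2
  rcases mem_union.mp h with h | h
  · exact Or.inr (D1_card_mem hr hn hAA h).1
  · exact Or.inr (D2_card_mem hr hn h).1

lemma cov_bigC (hr : 3 ≤ r) (hn : 3 * r + 5 ≤ n)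
    (hAA : ∀ A ∈ AA, A ∈ powersetCard (r-3) (range (n-r))) {z : ℕ} (hz : z < n + 1) :
    Nat.choose n (r-1) + AA.card * (r-1)
      ≤ ((bigC r n AA).filter (fun S => z ∈ S)).card := by
  have hd1 : Disjoint ((powersetCard r (range (n+1))).filter (fun S => z ∈ S))
      (((D1 n AA ∪ D2 r n)).filter (fun S => z ∈ S)) :=
    Finset.disjoint_filter_filter (pows_D_disjoint hr hn hAA)
  have hd2 : Disjoint ((D1 n AA).filter (fun S => z ∈ S))
      ((D2 r n).filter (fun S => z ∈ S)) :=
    Finset.disjoint_filter_filter (D1_D2_disjoint hr hn hAA)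
  rw [bigC, filter_union, card_union_of_disjoint hd1, filter_union,
    card_union_of_disjoint hd2]
  have hbig : ((powersetCard r (range (n+1))).filter (fun S => z ∈ S)).card
      = Nat.choose n (r-1) := by
    have hrw : r = (r - 1) + 1 := by omega
    rw [hrw, cov_powersetCard hz]
    simp
  have hD1 : ((D1 n AA).filter (fun S => z ∈ S)).card = AA.card * (r-1) := by
    rw [D1, filter_image, Finset.card_image_of_injOn
      ((D1_injOn hr hn hAA).mono (Finset.coe_subset.mpr (filter_subset _ _)))]
    have := card_filter_product AA (range (n+1))
      (fun A x => z ∈ tr (n+1) (PA A) x)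
    rw [this]
    rw [Finset.sum_congr rfl (fun A hA => tr_cover (PA_subset hr hn (hAA A hA)) hz)]
    rw [Finset.sum_congr rfl (fun A hA => PA_card hr (hAA A hA)), Finset.sum_const,
      smul_eq_mul]
  omega

end Counting

/-! ### Arithmetic identities and inequalities -/

/-- `σ = Σ_{i≤r} C(n,i)`. -/
def sS (r n : ℕ) : ℕ := ∑ i ∈ range (r+1), Nat.choose n i

/-- `S'' = Σ_{i≤r-1} C(n,i)`. -/
def sS' (r n : ℕ) : ℕ := ∑ i ∈ range r, Nat.choose n i

lemma E1 (r n : ℕ) (hr : 3 ≤ r) : sS r n = (n+1).choose r + mS r n := by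
  have h2 : r - 1 + 1 = r := by omega
  have key : sS r n = ∑ i ∈ range (r-1), n.choose i + n.choose (r-1) + n.choose (r-1+1) := by
    rw [sS]
    conv_lhs => rw [show r + 1 = (r-1) + 1 + 1 by omega]
    rw [sum_range_succ, sum_range_succ]
  have h3 := Nat.choose_succ_succ n (r-1)
  simp only [Nat.succ_eq_add_one] at h3
  rw [h2] at h3
  rw [key, h2, mS]
  omega

lemma I1 (r n : ℕ) (hn : 1 ≤ n) : sS r n = sS r (n-1) + sS' r (n-1) := by
  obtain ⟨m, rfl⟩ : ∃ m, n = m + 1 := ⟨n - 1, by omega⟩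
  simp only [Nat.add_sub_cancel]
  rw [sS, Finset.sum_range_succ']
  have hsplit : ∀ i, (m+1).choose (i+1) = m.choose i + m.choose (i+1) :=
    fun i => Nat.choose_succ_succ m i
  rw [Finset.sum_congr rfl (fun i _ => hsplit i), Finset.sum_add_distrib]
  have h2 : ∑ i ∈ range r, m.choose (i+1) + m.choose 0 = ∑ i ∈ range (r+1), m.choose i :=
    (Finset.sum_range_succ' _ r).symm
  rw [sS, sS']
  simp only [Nat.choose_zero_right] at h2 ⊢
  omega

lemma E2split (r n : ℕ) (hr : 3 ≤ r) :
    sS' r n = n.choose (r-1) + n.choose (r-2) + ∑ i ∈ range (r-2), n.choose i := by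
  have h2 : r - 2 + 1 = r - 1 := by omega
  have key : sS' r n
      = ∑ i ∈ range (r-2), n.choose i + n.choose (r-2) + n.choose (r-2+1) := by
    rw [sS']
    conv_lhs => rw [show r = (r-2) + 1 + 1 by omega]
    rw [sum_range_succ, sum_range_succ]
  rw [key, h2]
  omega

lemma pascal_r1 (r n : ℕ) (hr : 3 ≤ r) (hn : 1 ≤ n) :
    n.choose (r-1) = (n-1).choose (r-1) + (n-1).choose (r-2) := by
  obtain ⟨m, rfl⟩ : ∃ m, n = m + 1 := ⟨n - 1, by omega⟩
  simp only [Nat.add_sub_cancel]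
  have h2 : r - 2 + 1 = r - 1 := by omega
  have h3 := Nat.choose_succ_succ m (r-2)
  simp only [Nat.succ_eq_add_one] at h3
  rw [h2] at h3
  rw [h3]
  omega

lemma rcube (r n : ℕ) (hr : 3 ≤ r) (hbig : 100 * (r * r * r) ≤ n) : 20 * r + 20 ≤ n := by
  have h1 : 20 * r + 20 ≤ 100 * (r * r * r) := by nlinarith
  omega

lemma num1 (r n : ℕ) (hr : 4 ≤ r) (hbig : 100 * (r * r * r) ≤ n) :
    (n + 1) * r ≤ n.choose (r - 2) := by
  have hrn : 20 * r + 20 ≤ n := rcube r n (by omega) hbig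
  have h2 : n.choose 2 ≤ n.choose (r-2) := by
    apply mono_choose_bot (by omega)
    omega
  have h3 : 2 * n.choose 2 = n * (n - 1) := by
    have := Nat.choose_two_right n
    have hdvd : 2 ∣ n * (n-1) := Nat.even_mul_pred_self n |>.two_dvd
    omega
  obtain ⟨m, rfl⟩ : ∃ m, n = m + 1 := ⟨n - 1, by omega⟩
  have hm : 8 * r ≤ m := by omega
  have h4 : 2 * ((m + 1 + 1) * r) ≤ (m + 1) * ((m + 1) - 1) := by
    simp only [Nat.add_sub_cancel]
    nlinarith
  omega

lemma E3 (r n : ℕ) (hr : 3 ≤ r) (hbig : 100 * (r * r * r) ≤ n) :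
    (∑ i ∈ range (r-2), Nat.choose (n-1) i) + 1 ≤ (mS r n / (n+1)) * (r-1) := by
  have hrn := rcube r n hr hbig
  rcases Nat.eq_or_lt_of_le hr with hr3 | hr4
  · -- r = 3
    have h1 : r - 2 = 1 := by omega
    have h2 : r - 1 = 2 := by omega
    rw [h1, h2]
    have h3 : mS r n = n + 1 := by
      rw [mS, show r - 1 = 2 by omega]
      rw [Finset.sum_range_succ, Finset.sum_range_succ]
      simp [Nat.choose_one_right]
      omega
    rw [h3, Nat.div_self (by omega : 0 < n + 1)]
    simp [Finset.sum_range_succ]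
  · -- 4 ≤ r
    obtain ⟨t, rfl⟩ : ∃ t, r = t + 4 := ⟨r - 4, by omega⟩
    have e1 : t + 4 - 1 = t + 3 := by omega
    have e2 : t + 4 - 2 = t + 2 := by omega
    rw [e1, e2]
    set a := ∑ i ∈ range (t+2), Nat.choose (n-1) i with ha
    set b := mS (t+4) n with hb
    set S2 := ∑ i ∈ range (t+2), n.choose (i+1) with hS2
    set S3 := ∑ i ∈ range (t+2), n.choose i with hS3
    have hn1 : 1 ≤ n := by omega
    have hS1 : n * a = ∑ i ∈ range (t+2), (i+1) * n.choose (i+1) := by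
      rw [ha, Finset.mul_sum]
      apply Finset.sum_congr rfl
      intro i _
      have h := Nat.add_one_mul_choose_eq (n-1) i
      rw [show n - 1 + 1 = n by omega] at h
      rw [h]
      ring
    have t2 : ∑ i ∈ range (t+2), (i+1) * n.choose (i+1) ≤ (t+2) * S2 := by
      rw [hS2, Finset.mul_sum]
      apply Finset.sum_le_sum
      intro i hi
      have : i + 1 ≤ t + 2 := by have := mem_range.mp hi; omega
      exact Nat.mul_le_mul_right _ this
    have t3 : b = S2 + 1 := by
      rw [hb, mS, hS2, show t + 4 - 1 = (t+2) + 1 by omega, Finset.sum_range_succ']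
      simp
    have t4a : a ≤ S3 := by
      rw [ha, hS3]
      exact Finset.sum_le_sum (fun i _ => Nat.choose_le_choose i (by omega))
    have t4 : b = S3 + n.choose (t+2) := by
      rw [hb, mS, hS3, show t + 4 - 1 = (t+2) + 1 by omega, Finset.sum_range_succ]
    set c := n.choose (t+2) with hc
    have hnum : (n+1) * (t+4) ≤ c := by
      have := num1 (t+4) n (by omega) hbig
      rw [e2] at this
      exact this
    set v := (n+1) * (t+4) with hv
    set u := (t+2) * S2 with hu
    set w := n * a with hw
    have mid : w + a + v ≤ u + S3 + v := by
      have h1 : w ≤ u := hS1 ▸ t2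
      omega
    have last : S3 + v ≤ S2 + (t+3) := by omega
    set g := (a + (t+4)) * (n+1) with hg
    set h2 := (t+3) * b with hh2
    have lhs_eq : g = w + a + v := by rw [hg, hw, hv]; ring
    have rhs_eq : h2 = u + S2 + (t+3) := by rw [hh2, t3, hu]; ring
    have main : g ≤ h2 := by
      calc g = w + a + v := lhs_eq
        _ ≤ u + S3 + v := mid
        _ ≤ u + (S2 + (t+3)) := by omega
        _ = h2 := by omega
    -- divide
    set Q := b / (n+1) with hQ
    by_contra hcon
    push_neg at hcon
    have hcon' : Q * (t+3) ≤ a := by omega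
    have hdivb : b ≤ (n+1) * Q + n := by
      have h := Nat.div_add_mod b (n+1)
      rw [← hQ] at h
      have hlt : b % (n+1) < n + 1 := Nat.mod_lt _ (by omega)
      omega
    have c1 : h2 ≤ (t+3) * ((n+1) * Q + n) := by
      rw [hh2]
      exact Nat.mul_le_mul_left _ hdivb
    have c2 : (t+3) * ((n+1) * Q + n) = (Q * (t+3)) * (n+1) + (t+3) * n := by ring
    have c3 : (Q * (t+3)) * (n+1) ≤ a * (n+1) := Nat.mul_le_mul_right _ hcon'
    have c4 : g = a * (n+1) + (t+4) * (n+1) := by rw [hg]; ring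
    have final : a * (n+1) + (t+4) * (n+1) ≤ a * (n+1) + (t+3) * n := by
      calc a * (n+1) + (t+4) * (n+1) = g := c4.symm
        _ ≤ h2 := main
        _ ≤ (t+3) * ((n+1) * Q + n) := c1
        _ = (Q * (t+3)) * (n+1) + (t+3) * n := c2
        _ ≤ a * (n+1) + (t+3) * n := Nat.add_le_add_right c3 _
    have fin2 : (t+4) * (n+1) ≤ (t+3) * n := by omega
    have fin3 : (t+3) * n < (t+4) * (n+1) := by nlinarith
    omega

lemma E4 (r n : ℕ) (hr : 3 ≤ r) (hbig : 100 * (r * r * r) ≤ n) :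
    mS r n / (n+1) ≤ Nat.choose (n-r) (r-3) := by
  have hrn := rcube r n hr hbig
  rcases Nat.eq_or_lt_of_le hr with hr3 | hr4
  · have h1 : r - 3 = 0 := by omega
    have h3 : mS r n = n + 1 := by
      rw [mS, show r - 1 = 2 by omega]
      rw [Finset.sum_range_succ, Finset.sum_range_succ]
      simp [Nat.choose_one_right]
      omega
    rw [h1, h3, Nat.div_self (by omega : 0 < n + 1)]
    simp
  · -- 4 ≤ r : suffices mS ≤ (n+1) * C(n-r, r-3)
    obtain ⟨t, rfl⟩ : ∃ t, r = t + 4 := ⟨r - 4, by omega⟩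
    have e2 : t + 4 - 2 = t + 2 := by omega
    have e3 : t + 4 - 3 = t + 1 := by omega
    rw [e3]
    have hsuff : mS (t+4) n ≤ (n+1) * Nat.choose (n - (t+4)) (t+1) := by
      -- mS ≤ C(n,t+2) + 2 C(n,t+1)
      have hgeo : ∑ i ∈ range (t+2), n.choose i ≤ 2 * n.choose (t+1) := by
        have := geo_sum (n := n) (t := t+1) (by nlinarith)
        exact this
      have hsplit : mS (t+4) n = ∑ i ∈ range (t+2), n.choose i + n.choose (t+2) := by
        rw [mS, show t + 4 - 1 = (t+2) + 1 by omega, Finset.sum_range_succ]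
      have hb1 : mS (t+4) n ≤ n.choose (t+2) + 2 * n.choose (t+1) := by omega
      -- (t+2) * C(n,t+2) = (n - (t+1)) * C(n,t+1)
      have hid : n.choose (t+2) * (t+2) = n.choose (t+1) * (n - (t+1)) :=
        Nat.choose_succ_right_eq n (t+1)
      -- ratio : 4(t+4) C(n,t+1) ≤ (4(t+4)+1) C(n-(t+4), t+1)
      have hratio : (4*(t+4)) * n.choose (t+1) ≤ (4*(t+4)+1) * (n - (t+4)).choose (t+1) := by
        have heq : n = (n - (t+4)) + (t+4) := by omega
        have := ratio_choose (s := 4*(t+4)) (k := t+1) (t := t+4) (a := n - (t+4))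
          (by nlinarith)
        rw [← heq] at this
        exact this
      -- final chain, multiplied by (t+2) and 4(t+4)
      set X := n.choose (t+1) with hX
      set Y := n.choose (t+2) with hY
      set Z := (n - (t+4)).choose (t+1) with hZ
      set m := mS (t+4) n with hm
      -- Y * (t+2) = X * (n - t - 1)
      have hnt : n - (t+1) ≤ n := by omega
      -- m * (t+2) ≤ Y*(t+2) + 2*(t+2)*X = X*(n-(t+1)) + 2(t+2) X = X*(n + t + 3 - ...)
      have c1 : m * (t+2) ≤ X * ((n - (t+1)) + 2*(t+2)) := by
        calc m * (t+2) ≤ (Y + 2 * X) * (t+2) := Nat.mul_le_mul_right _ hb1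
          _ = Y * (t+2) + 2 * (t+2) * X := by ring
          _ = X * (n - (t+1)) + 2 * (t+2) * X := by rw [hid]
          _ = X * ((n - (t+1)) + 2*(t+2)) := by ring
      have c2 : (n - (t+1)) + 2*(t+2) ≤ n + t + 4 := by omega
      have c3 : m * (t+2) * (4*(t+4)) ≤ (n + t + 4) * ((4*(t+4)) * X) := by
        calc m * (t+2) * (4*(t+4)) ≤ (X * (n + t + 4)) * (4*(t+4)) := by
              apply Nat.mul_le_mul_right
              calc m * (t+2) ≤ X * ((n - (t+1)) + 2*(t+2)) := c1
                _ ≤ X * (n + t + 4) := Nat.mul_le_mul_left _ c2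
          _ = (n + t + 4) * ((4*(t+4)) * X) := by ring
      have c4 : (n + t + 4) * ((4*(t+4)) * X) ≤ (n + t + 4) * ((4*(t+4)+1) * Z) :=
        Nat.mul_le_mul_left _ hratio
      have c5 : (n + t + 4) * ((4*(t+4)+1) * Z) ≤ ((n+1) * Z) * ((t+2) * (4*(t+4))) := by
        calc (n + t + 4) * ((4*(t+4)+1) * Z) = ((n + t + 4) * (4*(t+4)+1)) * Z := by ring
          _ ≤ ((n+1) * ((t+2) * (4*(t+4)))) * Z := by
              apply Nat.mul_le_mul_right
              have heq2 : (n+1) * ((t+2) * (4*(t+4))) + (9*t+36)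
                  = (n + t + 4) * (4*(t+4)+1) + (4*(n*t*t) + 20*(n*t) + 15*n) := by ring
              omega
          _ = ((n+1) * Z) * ((t+2) * (4*(t+4))) := by ring
      have c6 : m * ((t+2) * (4*(t+4))) ≤ ((n+1) * Z) * ((t+2) * (4*(t+4))) := by
        calc m * ((t+2) * (4*(t+4))) = m * (t+2) * (4*(t+4)) := by ring
          _ ≤ (n + t + 4) * ((4*(t+4)) * X) := c3
          _ ≤ (n + t + 4) * ((4*(t+4)+1) * Z) := c4
          _ ≤ ((n+1) * Z) * ((t+2) * (4*(t+4))) := c5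
      exact Nat.le_of_mul_le_mul_right c6 (Nat.mul_pos (by omega) (by omega))
    calc mS (t+4) n / (n+1) ≤ ((n+1) * Nat.choose (n - (t+4)) (t+1)) / (n+1) :=
          Nat.div_le_div_right hsuff
      _ = Nat.choose (n - (t+4)) (t+1) := Nat.mul_div_cancel_left _ (by omega)

lemma pad_trace {n r : ℕ} {S t : Finset ℕ} (hS : S ⊆ range (n+1))
    (ht : ∀ x ∈ t, n+1 ≤ x) (hcard : t.card = r - S.card) (hSr : S.card ≤ r) :
    (S ∪ t).card = r ∧ (S ∪ t) ∩ range (n+1) = S := by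
  have hdisj : Disjoint S t := by
    rw [disjoint_left]; intro a haS hat
    have h1 := mem_range.mp (hS haS)
    have h2 := ht a hat
    omega
  constructor
  · rw [card_union_of_disjoint hdisj, hcard]; omega
  · ext z
    simp only [mem_inter, mem_union, mem_range]
    constructor
    · rintro ⟨h1 | h1, h2⟩
      · exact h1
      · have := ht z h1; omega
    · intro hz; exact ⟨Or.inl hz, mem_range.mp (hS hz)⟩

lemma master (r n : ℕ) (hr : 3 ≤ r) (hbig : 100 * (r*r*r) ≤ n) :
    ∃ Δ : Finset ℕ → ℕ,
      IsColouring r (sS r n + 1) Δ ∧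
      (∀ m' ∈ Fdelta r Δ, m' < sS r n + 1 → m' ≤ sS r (n-1)) ∧
      (∀ m' ∈ Fdelta r Δ, ¬(sS r (n-1) < m' ∧ m' ≤ sS r n)) := by
  classical
  have hn35 : 3 * r + 5 ≤ n := by have := rcube r n hr hbig; omega
  have hE4 := E4 r n hr hbig
  have hcardA : mS r n / (n+1) ≤ (powersetCard (r-3) (range (n-r))).card := by
    rw [card_powersetCard, card_range]; exact hE4
  obtain ⟨AA, hAAsub, hAAcard⟩ := Finset.exists_subset_card_eq hcardA
  have hAA : ∀ A ∈ AA, A ∈ powersetCard (r-3) (range (n-r)) := fun A hA => hAAsub hA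
  set k := sS r n with hk
  set C := bigC r n AA with hCdef
  have hcc : C.card = k := by
    rw [hCdef, bigC_card hr hn35 hAA, hAAcard, hk, E1 r n hr]
    have := Nat.div_add_mod' (mS r n) (n+1)
    omega
  have hcov : ∀ z, z < n + 1 → sS' r (n-1) + 1 ≤ (C.filter (fun S => z ∈ S)).card := by
    intro z hz
    have h1 := cov_bigC hr hn35 hAA hz
    rw [← hCdef, hAAcard] at h1
    have h2 := E3 r n hr hbig
    have h3 := pascal_r1 r n hr (by omega)
    have h4 := E2split r (n-1) hr
    omega
  set code : Finset ℕ → ℕ :=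
    fun S => if h : S ∈ C then ((C.equivFin ⟨S, h⟩ : Fin C.card) : ℕ) + 1 else 0 with hcode
  have code_le : ∀ S ∈ C, 1 ≤ code S ∧ code S ≤ k := by
    intro S hS
    rw [hcode]
    simp only [dif_pos hS]
    have h9 := (C.equivFin ⟨S, hS⟩).isLt
    omega
  have code_inj : ∀ S ∈ C, ∀ S' ∈ C, code S = code S' → S = S' := by
    intro S hS S' hS' h
    rw [hcode] at h
    simp only [dif_pos hS, dif_pos hS'] at h
    have h2 : C.equivFin ⟨S, hS⟩ = C.equivFin ⟨S', hS'⟩ := by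
      apply Fin.ext; omega
    have h3 := C.equivFin.injective h2
    exact Subtype.ext_iff.mp h3
  have code_surj : ∀ c, 1 ≤ c → c ≤ k → ∃ S, ∃ _ : S ∈ C, code S = c := by
    intro c h1 h2
    have hlt : c - 1 < C.card := by omega
    refine ⟨(C.equivFin.symm ⟨c-1, hlt⟩ : {S // S ∈ C}).1,
      (C.equivFin.symm ⟨c-1, hlt⟩).2, ?_⟩
    rw [hcode]
    simp only [dif_pos (C.equivFin.symm ⟨c-1, hlt⟩).2]
    have heta : (⟨(C.equivFin.symm ⟨c-1, hlt⟩).1, (C.equivFin.symm ⟨c-1, hlt⟩).2⟩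
        : {S // S ∈ C}) = C.equivFin.symm ⟨c-1, hlt⟩ := rfl
    rw [heta, C.equivFin.apply_symm_apply]
    simp only [Fin.val_mk]
    omega
  set Δ : Finset ℕ → ℕ :=
    fun e => if e.card = r then
      (if e ∩ range (n+1) ∈ C then code (e ∩ range (n+1)) else k + 1)
      else 1 with hΔ
  have empty_not_mem : (∅ : Finset ℕ) ∉ C := by
    intro h
    rcases bigC_card_mem hr hn35 hAA h with h1 | h1 <;> rw [card_empty] at h1 <;> omega
  have hCsub : ∀ S ∈ C, S ⊆ range (n+1) := fun S hS => bigC_subset_range hr hn35 hAA hS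
  have hCle : ∀ S ∈ C, S.card ≤ r := by
    intro S hS; rcases bigC_card_mem hr hn35 hAA hS with h | h <;> omega
  have pad_mem : ∀ S ∈ C, ∃ e : Finset ℕ, e.card = r ∧ e ∩ range (n+1) = S := by
    intro S hS
    set t := (range (r - S.card)).image (fun i => (n+1) + i) with ht
    have htcard : t.card = r - S.card := by
      rw [ht, card_image_of_injective _ (fun a b h => by omega), card_range]
    have htge : ∀ x ∈ t, n+1 ≤ x := by
      intro x hx; rw [ht, mem_image] at hx; obtain ⟨i, _, rfl⟩ := hx; omega
    obtain ⟨h1, h2⟩ := pad_trace (hCsub S hS) htge htcard (hCle S hS)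
    exact ⟨S ∪ t, h1, h2⟩
  have hIsCol : IsColouring r (k+1) Δ := by
    constructor
    · intro e hcard
      rw [hΔ]; simp only [if_pos hcard]
      by_cases hin : e ∩ range (n+1) ∈ C
      · rw [if_pos hin]
        have := code_le _ hin
        exact mem_Icc.mpr ⟨this.1, by omega⟩
      · rw [if_neg hin]
        exact mem_Icc.mpr ⟨by omega, le_refl _⟩
    · intro c hc
      obtain ⟨hc1, hc2⟩ := mem_Icc.mp hc
      by_cases hck : c ≤ k
      · obtain ⟨S, hS, hcodeS⟩ := code_surj c hc1 hck
        obtain ⟨e, he1, he2⟩ := pad_mem S hS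
        refine ⟨e, he1, ?_⟩
        rw [hΔ]; simp only [if_pos he1, he2, if_pos hS]
        exact hcodeS
      · have hceq : c = k + 1 := by omega
        set e := (range r).image (fun i => (n+1) + i) with he
        have he1 : e.card = r := by
          rw [he, card_image_of_injective _ (fun a b h => by omega), card_range]
        have he2 : e ∩ range (n+1) = ∅ := by
          rw [he]; ext z
          simp only [mem_inter, mem_image, mem_range, notMem_empty, iff_false, not_and]
          rintro ⟨i, hi, rfl⟩ hz
          omega
        refine ⟨e, he1, ?_⟩
        rw [hΔ]; simp only [if_pos he1, he2, if_neg empty_not_mem]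
        omega
  have key : ∀ X : Set ℕ, X.Infinite →
      gamma r Δ X = (C.filter (fun S => ↑S ⊆ X)).card + 1 := by
    intro X hX
    have hXd : (X \ ↑(range (n+1))).Infinite := hX.diff (finite_toSet _)
    have hset : coloursOn r Δ X
        = ↑((C.filter (fun S => ↑S ⊆ X)).image code ∪ {k+1}) := by
      ext y
      rw [Finset.mem_coe, Finset.mem_union, Finset.mem_image, Finset.mem_singleton]
      constructor
      · rintro ⟨e, ⟨heX, hecard⟩, rfl⟩
        rw [hΔ]; simp only [if_pos hecard]
        by_cases hin : e ∩ range (n+1) ∈ C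
        · rw [if_pos hin]
          left
          refine ⟨e ∩ range (n+1), mem_filter.mpr ⟨hin, ?_⟩, rfl⟩
          intro z hz
          have hz2 : z ∈ e := mem_of_mem_inter_left (Finset.mem_coe.mp hz)
          exact heX (Finset.mem_coe.mpr hz2)
        · rw [if_neg hin]
          right; rfl
      · rintro (⟨S, hSf, rfl⟩ | rfl)
        · obtain ⟨hSC, hSX⟩ := mem_filter.mp hSf
          obtain ⟨t, htsub, htcard⟩ := hXd.exists_subset_card_eq (r - S.card)
          have htge : ∀ x ∈ t, n+1 ≤ x := by
            intro x hx
            have h3 := htsub (Finset.mem_coe.mpr hx)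
            have hx2 : x ∉ range (n+1) := fun hc => h3.2 (Finset.mem_coe.mpr hc)
            rw [mem_range] at hx2; omega
          obtain ⟨h1, h2⟩ := pad_trace (hCsub S hSC) htge htcard (hCle S hSC)
          refine ⟨S ∪ t, ⟨?_, h1⟩, ?_⟩
          · intro z hz
            rw [Finset.coe_union, Set.mem_union] at hz
            rcases hz with hz | hz
            · exact hSX hz
            · exact (htsub hz).1
          · rw [hΔ]; simp only [if_pos h1, h2, if_pos hSC]
        · obtain ⟨t, htsub, htcard⟩ := hXd.exists_subset_card_eq r
          have hte : t ∩ range (n+1) = ∅ := by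
            ext z; simp only [mem_inter, notMem_empty, iff_false, not_and]
            intro hz1 hz2
            exact (htsub (Finset.mem_coe.mpr hz1)).2 (Finset.mem_coe.mpr hz2)
          refine ⟨t, ⟨fun z hz => (htsub hz).1, htcard⟩, ?_⟩
          rw [hΔ]; simp only [if_pos htcard, hte, if_neg empty_not_mem]
    have hinj : Set.InjOn code ↑(C.filter (fun S => ↑S ⊆ X)) := by
      intro S hS S' hS' h
      exact code_inj S (mem_filter.mp (Finset.mem_coe.mp hS)).1
        S' (mem_filter.mp (Finset.mem_coe.mp hS')).1 h
    have hdisj9 : Disjoint ((C.filter (fun S => ↑S ⊆ X)).image code) ({k+1} : Finset ℕ) := by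
      rw [disjoint_singleton_right, mem_image]
      rintro ⟨S, hSf, hcS⟩
      have := code_le S (mem_filter.mp hSf).1
      omega
    rw [gamma, hset, Set.ncard_coe_finset, card_union_of_disjoint hdisj9,
      Finset.card_image_of_injOn hinj, card_singleton]
  have dico : ∀ m', m' ∈ Fdelta r Δ → m' = k + 1 ∨ m' ≤ sS r (n-1) := by
    intro m' hm'
    obtain ⟨X, hXinf, hgam⟩ := hm'
    rw [key X hXinf] at hgam
    by_cases hfull : ↑(range (n+1)) ⊆ X
    · left
      have hfil : C.filter (fun S => ↑S ⊆ X) = C := by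
        apply filter_true_of_mem
        intro S hS z hz
        exact hfull (Finset.mem_coe.mpr (hCsub S hS (Finset.mem_coe.mp hz)))
      rw [hfil, hcc] at hgam
      omega
    · right
      rw [Set.not_subset] at hfull
      obtain ⟨z, hz1, hz2⟩ := hfull
      have hzlt : z < n + 1 := mem_range.mp (Finset.mem_coe.mp hz1)
      have hsub2 : C.filter (fun S => ↑S ⊆ X) ⊆ C.filter (fun S => ¬ z ∈ S) := by
        intro S hS
        obtain ⟨h1, h2⟩ := mem_filter.mp hS
        exact mem_filter.mpr ⟨h1, fun hzS => hz2 (h2 (Finset.mem_coe.mpr hzS))⟩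
      have h5 := Finset.card_le_card hsub2
      have h6 := Finset.card_filter_add_card_filter_not
        (s := C) (p := fun S => z ∈ S)
      have h7 := hcov z hzlt
      have h8 := I1 r n (by omega)
      omega
  refine ⟨Δ, hIsCol, ?_, ?_⟩
  · intro m' hm' hlt
    rcases dico m' hm' with rfl | h
    · omega
    · exact h
  · intro m' hm'
    rcases dico m' hm' with rfl | h
    · rintro ⟨h1, h2⟩; omega
    · rintro ⟨h1, h2⟩; omega

end AP

/-- **Theorem 4, explicit form.** For every `r ≥ 3` there is `N` such that for every `n ≥ N`
with `(r-1) ∣ (n+1)` there is a surjective colouring `Δ : ℕ^(r) ↠ [k]` with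
`k = Σ_{i=0}^{r} C(n,i) + 1` such that every `m' ∈ F_Δ` with `m' < k` satisfies
`m' ≤ Σ_{i=0}^{r} C(n-1,i)`; in particular `F_Δ` avoids
`(Σ_{i=0}^{r} C(n-1,i), Σ_{i=0}^{r} C(n,i)]`. -/
theorem Fdelta_avoids_J_explicit (r : ℕ) (hr : 3 ≤ r) :
    ∃ N : ℕ, ∀ n : ℕ, N ≤ n → (r - 1) ∣ (n + 1) →
      ∃ Δ : Finset ℕ → ℕ,
        IsColouring r ((∑ i ∈ Finset.range (r + 1), Nat.choose n i) + 1) Δ ∧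
        (∀ m' ∈ Fdelta r Δ,
          m' < (∑ i ∈ Finset.range (r + 1), Nat.choose n i) + 1 →
            m' ≤ ∑ i ∈ Finset.range (r + 1), Nat.choose (n - 1) i) ∧
        ∀ m' ∈ Fdelta r Δ,
          ¬((∑ i ∈ Finset.range (r + 1), Nat.choose (n - 1) i) < m' ∧
            m' ≤ ∑ i ∈ Finset.range (r + 1), Nat.choose n i) := by
  refine ⟨100 * (r*r*r), ?_⟩
  intro n hn _
  obtain ⟨Δ, h1, h2, h3⟩ := AP.master r n hr hn
  simp only [AP.sS] at h1 h2 h3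
  exact ⟨Δ, h1, h2, h3⟩
end

section
/- For every integer r ≥ 2 there exists a constant C_r such that for every natural number k ≥ 1 and every surjective colouring Δ: ℕ^(r) ↠ [k], one has |F_Δ| ≥ (r!·k)^{1/r} - C_r. -/
open Finset

namespace FdeltaAux

lemma exists_infinite_fiber_of_bounded (f : ℕ → ℕ) (N : ℕ) (hf : ∀ n, f n ≤ N) :
    ∃ c ≤ N, {n | f n = c}.Infinite := by
  by_contra h
  push_neg at h
  have hfin : (Set.univ : Set ℕ).Finite := by
    have hsub : (Set.univ : Set ℕ) ⊆ ⋃ c ∈ Finset.range (N + 1), {n | f n = c} := by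
      intro n _
      simp only [Set.mem_iUnion]
      exact ⟨f n, by simpa using Nat.lt_succ_of_le (hf n), rfl⟩
    refine Set.Finite.subset ?_ hsub
    refine Set.Finite.biUnion (Finset.range (N+1)).finite_toSet ?_
    intro c hc
    exact (h c (Nat.lt_succ_iff.mp (by simpa using hc)))
  exact Set.infinite_univ hfin

lemma infinite_exists_finset (s : Set ℕ) (hs : s.Infinite) (n : ℕ) :
    ∃ T : Finset ℕ, ↑T ⊆ s ∧ T.card = n := by
  obtain ⟨t, hts, htfin, htcard⟩ := hs.exists_subset_ncard_eq n
  refine ⟨htfin.toFinset, by simpa using hts, ?_⟩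
  rw [← Set.ncard_coe_finset]
  simpa using htcard

/-- Infinite Ramsey theorem: any colouring of the `s`-element subsets of an infinite set
`W ⊆ ℕ` with colours bounded by `N` admits an infinite subset on which it is constant. -/
theorem infRamsey (N : ℕ) : ∀ (s : ℕ) (f : Finset ℕ → ℕ), (∀ T, f T ≤ N) →
    ∀ (W : Set ℕ), W.Infinite →
    ∃ W' : Set ℕ, W' ⊆ W ∧ W'.Infinite ∧
      ∃ c ≤ N, ∀ T : Finset ℕ, ↑T ⊆ W' → T.card = s → f T = c := by
  intro s
  induction s with
  | zero =>
    intro f hf W hW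
    refine ⟨W, le_refl _, hW, f ∅, hf ∅, ?_⟩
    intro T hT hcard
    rw [Finset.card_eq_zero.mp hcard]
  | succ s IH =>
    intro f hf W hW
    -- step lemma
    have key : ∀ (A : Set ℕ), A.Infinite →
        ∃ z B c, z ∈ A ∧ B ⊆ A ∧ B.Infinite ∧ (∀ b ∈ B, z < b) ∧ c ≤ N ∧
          (∀ T : Finset ℕ, ↑T ⊆ B → T.card = s → f (insert z T) = c) := by
      intro A hA
      obtain ⟨z, hz⟩ := hA.nonempty
      have hA' : (A ∩ {x | z < x}).Infinite := by
        have : A \ {x | x ≤ z} = A ∩ {x | z < x} := by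
          ext x; simp [Set.mem_diff, not_le]
        rw [← this]
        exact hA.diff (Set.finite_Iic z)
      obtain ⟨B, hBsub, hBinf, c, hcN, hc⟩ := IH (fun T => f (insert z T)) (fun T => hf _) _ hA'
      exact ⟨z, B, c, hz, fun x hx => (hBsub hx).1, hBinf, fun b hb => (hBsub hb).2, hcN, hc⟩
    choose zf Bf cf hz hBsub hBinf hlt hcN hmono using key
    -- the recursive sequence of states
    let S : ℕ → {A : Set ℕ // A.Infinite} := fun n =>
      Nat.rec ⟨W, hW⟩ (fun _ p => ⟨Bf p.1 p.2, hBinf p.1 p.2⟩) n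
    have hSsucc : ∀ n, (S (n+1)).1 = Bf (S n).1 (S n).2 := fun n => rfl
    have hSsub : ∀ n, (S (n+1)).1 ⊆ (S n).1 := by
      intro n
      rw [hSsucc n]; exact hBsub _ _
    have hSmono : ∀ n m, n ≤ m → (S m).1 ⊆ (S n).1 := by
      intro n m hnm
      induction m with
      | zero => simp_all
      | succ m ih =>
        rcases Nat.lt_or_ge n (m+1) with h | h
        · exact (hSsub m).trans (ih (Nat.lt_succ_iff.mp h))
        · have : n = m + 1 := le_antisymm hnm h
          subst this; exact fun _ h => h
    have hSW : ∀ n, (S n).1 ⊆ W := by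
      intro n
      induction n with
      | zero => exact fun _ h => h
      | succ n ih => exact (hSsub n).trans ih
    let z : ℕ → ℕ := fun n => zf (S n).1 (S n).2
    let col : ℕ → ℕ := fun n => cf (S n).1 (S n).2
    have hzmem : ∀ n, z n ∈ (S n).1 := fun n => hz _ _
    have hzlt : ∀ n, z n < z (n+1) := by
      intro n
      have h1 : z (n+1) ∈ (S (n+1)).1 := hzmem (n+1)
      rw [hSsucc n] at h1
      exact hlt _ _ _ h1
    have hzsm : StrictMono z := strictMono_nat_of_lt_succ hzlt
    obtain ⟨c, hcNle, hcinf⟩ := exists_infinite_fiber_of_bounded col N (fun n => hcN _ _)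
    refine ⟨z '' {n | col n = c}, ?_, ?_, c, hcNle, ?_⟩
    · rintro x ⟨n, _, rfl⟩
      exact hSW n (hzmem n)
    · exact Set.Infinite.image (Set.injOn_of_injective hzsm.injective) hcinf
    · intro T hT hcard
      have hne : T.Nonempty := Finset.card_pos.mp (by omega)
      set t₀ := T.min' hne with ht₀
      have ht₀T : t₀ ∈ T := T.min'_mem hne
      obtain ⟨n₀, hn₀c, hn₀z⟩ := hT ht₀T
      have hT' : ↑(T.erase t₀) ⊆ (S (n₀+1)).1 := by
        intro y hy
        simp only [Finset.coe_erase, Set.mem_diff, Set.mem_singleton_iff] at hy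
        obtain ⟨hyT, hyne⟩ := hy
        obtain ⟨m, hmc, hmz⟩ := hT hyT
        have hym : t₀ < y := lt_of_le_of_ne (T.min'_le y hyT) (Ne.symm hyne)
        have hmgt : n₀ < m := by
          by_contra hle
          push_neg at hle
          have := hzsm.monotone hle
          omega
        have hzm : z m ∈ (S m).1 := hzmem m
        rw [hmz] at hzm
        exact hSmono (n₀+1) m hmgt hzm
      have hcard' : (T.erase t₀).card = s := by
        rw [Finset.card_erase_of_mem ht₀T, hcard]
        omega
      have hfinal := hmono (S n₀).1 (S n₀).2 (T.erase t₀) hT' hcard'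
      have h2 : f (insert t₀ (T.erase t₀)) = col n₀ := by
        calc f (insert t₀ (T.erase t₀)) = f (insert (z n₀) (T.erase t₀)) := by rw [hn₀z]
        _ = col n₀ := hfinal
      rw [Finset.insert_erase ht₀T] at h2
      rw [h2]
      exact hn₀c


/-- Simultaneous Ramsey for a list of base sets `S`. -/
lemma multiRamsey (N r : ℕ) (g : Finset ℕ → Finset ℕ → ℕ) (hg : ∀ S T, g S T ≤ N)
    (L : List (Finset ℕ)) : ∀ (W : Set ℕ), W.Infinite →
    ∃ W' : Set ℕ, W' ⊆ W ∧ W'.Infinite ∧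
      ∀ S ∈ L, ∃ c, ∀ T : Finset ℕ, ↑T ⊆ W' → T.card = r - S.card → g S T = c := by
  induction L with
  | nil => exact fun W hW => ⟨W, le_refl _, hW, by simp⟩
  | cons S L ih =>
    intro W hW
    obtain ⟨W1, hW1sub, hW1inf, c, _, hc⟩ := infRamsey N (r - S.card) (g S) (hg S) W hW
    obtain ⟨W2, hW2sub, hW2inf, hrest⟩ := ih W1 hW1inf
    refine ⟨W2, hW2sub.trans hW1sub, hW2inf, ?_⟩
    intro S' hS'
    rcases List.mem_cons.mp hS' with h | h
    · subst h
      exact ⟨c, fun T hT hcard => hc T (hT.trans hW2sub) hcard⟩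
    · exact hrest S' h


/-- The canonical system: a colour function `φ` on finite sets (of size ≤ r) so that
(a) on r-sets it agrees with `Δ`, and (b) for every finite `B`, the number of `φ`-colours
on subsets of `B` of size at most `r` belongs to `F_Δ`. -/
lemma canonical_system (r k : ℕ) (Δ : Finset ℕ → ℕ) (hΔ : IsColouring r k Δ) :
    ∃ (φ : Finset ℕ → ℕ),
      (∀ S : Finset ℕ, S.card = r → φ S = Δ S) ∧
      (∀ B : Finset ℕ,
        (((B.powerset.filter (fun S => S.card ≤ r)).image φ).card) ∈ Fdelta r Δ) := by
  classical
  set g : Finset ℕ → Finset ℕ → ℕ :=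
    fun S T => if (S ∪ T).card = r then Δ (S ∪ T) else 0 with hg_def
  have hg : ∀ S T, g S T ≤ k := by
    intro S T
    simp only [hg_def]
    split
    · next h => exact (Finset.mem_Icc.mp (hΔ.1 _ h)).2
    · exact Nat.zero_le k
  -- stage existence
  have stage_ex : ∀ (n : ℕ) (A : Set ℕ), A.Infinite →
      ∃ B : Set ℕ, B ⊆ A ∧ B.Infinite ∧ (∀ x ∈ B, n < x) ∧
        ∀ S : Finset ℕ, S ⊆ Finset.range (n+1) →
          ∃ c, ∀ T : Finset ℕ, ↑T ⊆ B → T.card = r - S.card → g S T = c := by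
    intro n A hA
    have hA' : (A ∩ {x | n < x}).Infinite := by
      have : A \ {x | x ≤ n} = A ∩ {x | n < x} := by
        ext x; simp [Set.mem_diff, not_le]
      rw [← this]
      exact hA.diff (Set.finite_Iic n)
    obtain ⟨B, hBsub, hBinf, hB⟩ :=
      multiRamsey k r g hg (Finset.range (n+1)).powerset.toList _ hA'
    refine ⟨B, fun x hx => (hBsub hx).1, hBinf, fun x hx => (hBsub hx).2, ?_⟩
    intro S hS
    exact hB S (by rw [Finset.mem_toList, Finset.mem_powerset]; exact hS)
  choose Bf hsub hinf hgt hstage using stage_ex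
  -- the stage sequence
  let Z : ℕ → {A : Set ℕ // A.Infinite} := fun n =>
    Nat.rec ⟨Set.univ, Set.infinite_univ⟩ (fun m p => ⟨Bf m p.1 p.2, hinf m p.1 p.2⟩) n
  have hZsucc : ∀ n, (Z (n+1)).1 = Bf n (Z n).1 (Z n).2 := fun n => rfl
  have hZsub : ∀ n, (Z (n+1)).1 ⊆ (Z n).1 := fun n => hsub _ _ _
  have hZmono : ∀ n m, n ≤ m → (Z m).1 ⊆ (Z n).1 := by
    intro n m hnm
    induction m with
    | zero => simp_all
    | succ m ih =>
      rcases Nat.lt_or_ge n (m+1) with h | h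
      · exact (hZsub m).trans (ih (Nat.lt_succ_iff.mp h))
      · have : n = m + 1 := le_antisymm hnm h
        subst this; exact fun _ h => h
  have hZgt : ∀ n, ∀ x ∈ (Z (n+1)).1, n < x := fun n => hgt _ _ _
  have hZstage : ∀ n, ∀ S : Finset ℕ, S ⊆ Finset.range (n+1) →
      ∃ c, ∀ T : Finset ℕ, ↑T ⊆ (Z (n+1)).1 → T.card = r - S.card → g S T = c :=
    fun n => hstage _ _ _
  choose cf hcf using hZstage
  have hsup_mem : ∀ (S : Finset ℕ), S ⊆ Finset.range (S.sup id + 1) := by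
    intro S a ha
    exact Finset.mem_range.mpr (Nat.lt_succ_of_le (Finset.le_sup (f := id) ha))
  set φ : Finset ℕ → ℕ := fun S => cf (S.sup id) S (hsup_mem S) with hφ_def
  -- stage independence
  have phi_eq : ∀ (S : Finset ℕ) (n : ℕ) (hn : S ⊆ Finset.range (n+1)),
      ∀ T : Finset ℕ, ↑T ⊆ (Z (n+1)).1 → T.card = r - S.card → g S T = φ S := by
    intro S n hn T hT hTcard
    set M := max n (S.sup id) with hM
    obtain ⟨T', hT'sub, hT'card⟩ :=
      infinite_exists_finset (Z (M+1)).1 (Z (M+1)).2 (r - S.card)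
    have h1 : g S T' = cf n S hn := by
      refine hcf n S hn T' ?_ hT'card
      exact hT'sub.trans (hZmono (n+1) (M+1) (by omega))
    have h2 : g S T' = φ S := by
      refine hcf (S.sup id) S (hsup_mem S) T' ?_ hT'card
      exact hT'sub.trans (hZmono (S.sup id + 1) (M+1) (by omega))
    have h3 : g S T = cf n S hn := hcf n S hn T hT hTcard
    rw [h3, ← h1, h2]
  have phi_r : ∀ S : Finset ℕ, S.card = r → φ S = Δ S := by
    intro S hS
    have := phi_eq S (S.sup id) (hsup_mem S) ∅ (by simp) (by simp [hS])
    rw [← this]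
    simp only [hg_def, Finset.union_empty, hS, if_pos rfl]
    simp
  refine ⟨φ, phi_r, ?_⟩
  intro B
  set n := B.sup id with hn
  have hBle : ∀ a ∈ B, a ≤ n := fun a ha => Finset.le_sup (f := id) ha
  set X : Set ℕ := ↑B ∪ (Z (n+1)).1 with hX
  have hXinf : X.Infinite := Set.Infinite.mono Set.subset_union_right (Z (n+1)).2
  have hcolours : coloursOn r Δ X =
      ↑((B.powerset.filter (fun S => S.card ≤ r)).image φ) := by
    ext c
    constructor
    · rintro ⟨e, ⟨heX, hecard⟩, rfl⟩
      set S := e.filter (fun x => x ≤ n) with hS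
      set T := e.filter (fun x => ¬ (x ≤ n)) with hT
      have hunion : S ∪ T = e := Finset.filter_union_filter_not_eq _ e
      have hdisj : Disjoint S T := Finset.disjoint_filter_filter_not e e _
      have hTsub : ↑T ⊆ (Z (n+1)).1 := by
        intro x hx
        simp only [hT, Finset.coe_filter, Set.mem_setOf_eq] at hx
        obtain ⟨hxe, hxn⟩ := hx
        rcases heX hxe with h | h
        · exact absurd (hBle x h) hxn
        · exact h
      have hSsub : S ⊆ B := by
        intro x hx
        simp only [hS, Finset.mem_filter] at hx
        obtain ⟨hxe, hxn⟩ := hx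
        rcases heX hxe with h | h
        · exact h
        · exact absurd (hZgt n x h) (by omega)
      have hcards : S.card + T.card = r := by
        rw [← hecard, ← hunion, Finset.card_union_of_disjoint hdisj]
      have hDe : Δ e = g S T := by
        simp only [hg_def, hunion, hecard, if_pos rfl]
        simp
      have hrange : S ⊆ Finset.range (n+1) := by
        intro x hx
        simp only [hS, Finset.mem_filter] at hx
        exact Finset.mem_range.mpr (by omega)
      have : g S T = φ S := phi_eq S n hrange T hTsub (by omega)
      rw [hDe, this]
      simp only [Finset.coe_image, Set.mem_image, Finset.mem_coe, Finset.mem_filter,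
        Finset.mem_powerset]
      exact ⟨S, ⟨hSsub, by omega⟩, rfl⟩
    · intro hc
      simp only [Finset.coe_image, Set.mem_image, Finset.mem_coe, Finset.mem_filter,
        Finset.mem_powerset] at hc
      obtain ⟨S, ⟨hSB, hScard⟩, rfl⟩ := hc
      obtain ⟨T, hTsub, hTcard⟩ :=
        infinite_exists_finset (Z (n+1)).1 (Z (n+1)).2 (r - S.card)
      have hdisj : Disjoint S T := by
        rw [Finset.disjoint_left]
        intro x hxS hxT
        have h1 : x ≤ n := hBle x (hSB hxS)
        have h2 : n < x := hZgt n x (hTsub (by exact hxT))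
        omega
      have hecard : (S ∪ T).card = r := by
        rw [Finset.card_union_of_disjoint hdisj, hTcard]
        omega
      have hrange : S ⊆ Finset.range (n+1) := by
        intro x hx
        exact Finset.mem_range.mpr (Nat.lt_succ_of_le (hBle x (hSB hx)))
      refine ⟨S ∪ T, ⟨?_, hecard⟩, ?_⟩
      · intro x hx
        rcases Finset.mem_union.mp hx with h | h
        · exact Or.inl (hSB h)
        · exact Or.inr (hTsub h)
      · have h1 : g S T = φ S := phi_eq S n hrange T hTsub hTcard
        have h2 : Δ (S ∪ T) = g S T := by
          simp only [hg_def, hecard, if_pos rfl]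
          simp
        rw [h2, h1]
  refine ⟨X, hXinf, ?_⟩
  rw [gamma, hcolours, Set.ncard_coe_finset]

lemma sum_two_pow (t : ℕ) : ∑ x ∈ Finset.range t, 2^x = 2^t - 1 := by
  induction t with
  | zero => simp
  | succ t ih =>
    rw [Finset.sum_range_succ, ih]
    have : 1 ≤ 2^t := Nat.one_le_two_pow
    have h2 : 2^(t+1) = 2^t + 2^t := by ring
    omega

/-- binary encoding of a finset -/
def encode (D : Finset ℕ) : ℕ := ∑ x ∈ D, 2^x

/-- If the largest element where `E` and `D` differ lies in `D`, then `encode E < encode D`. -/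
lemma encode_lt {E D : Finset ℕ} (t : ℕ) (htD : t ∈ D) (htE : t ∉ E)
    (habove : ∀ x, t < x → (x ∈ E ↔ x ∈ D)) : encode E < encode D := by
  classical
  have hEsplit : encode E = ∑ x ∈ E.filter (fun x => ¬ t < x), 2^x
      + ∑ x ∈ E.filter (fun x => t < x), 2^x := by
    rw [encode]
    conv_lhs => rw [← Finset.filter_union_filter_not_eq (fun x => t < x) E]
    rw [Finset.sum_union (Finset.disjoint_filter_filter_not E E _)]
    omega
  have hhigh : E.filter (fun x => t < x) = D.filter (fun x => t < x) := by
    ext w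
    simp only [Finset.mem_filter]
    constructor
    · rintro ⟨hw, hlt⟩; exact ⟨(habove w hlt).mp hw, hlt⟩
    · rintro ⟨hw, hlt⟩; exact ⟨(habove w hlt).mpr hw, hlt⟩
  have hlow : ∑ x ∈ E.filter (fun x => ¬ t < x), 2^x < 2^t := by
    have hsub : E.filter (fun x => ¬ t < x) ⊆ Finset.range t := by
      intro x hx
      simp only [Finset.mem_filter, not_lt] at hx
      have : x ≠ t := fun h => htE (h ▸ hx.1)
      exact Finset.mem_range.mpr (by omega)
    calc ∑ x ∈ E.filter (fun x => ¬ t < x), 2^x ≤ ∑ x ∈ Finset.range t, 2^x :=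
          Finset.sum_le_sum_of_subset hsub
      _ = 2^t - 1 := sum_two_pow t
      _ < 2^t := by have : 1 ≤ 2^t := Nat.one_le_two_pow; omega
  have hDge : 2^t + ∑ x ∈ D.filter (fun x => t < x), 2^x ≤ encode D := by
    have hsub : insert t (D.filter (fun x => t < x)) ⊆ D := by
      intro x hx
      rcases Finset.mem_insert.mp hx with h | h
      · exact h ▸ htD
      · exact Finset.mem_of_mem_filter x h
    have hnotmem : t ∉ D.filter (fun x => t < x) := by simp
    calc 2^t + ∑ x ∈ D.filter (fun x => t < x), 2^x
        = ∑ x ∈ insert t (D.filter (fun x => t < x)), 2^x := by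
          rw [Finset.sum_insert hnotmem]
      _ ≤ encode D := Finset.sum_le_sum_of_subset hsub
  rw [hEsplit, hhigh]
  omega

/-- In a finset, an element is determined by the number of smaller elements. -/
lemma count_lt_inj (S : Finset ℕ) {u v : ℕ} (hu : u ∈ S) (hv : v ∈ S)
    (h : (S.filter (· < u)).card = (S.filter (· < v)).card) : u = v := by
  by_contra hne
  rcases lt_or_gt_of_ne hne with h' | h'
  · have hsub : S.filter (· < u) ⊆ S.filter (· < v) := by
      intro x hx
      simp only [Finset.mem_filter] at hx ⊢
      exact ⟨hx.1, by omega⟩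
    have hmem : u ∈ S.filter (· < v) := Finset.mem_filter.mpr ⟨hu, h'⟩
    have hnot : u ∉ S.filter (· < u) := by simp
    exact absurd h (Nat.ne_of_lt (Finset.card_lt_card ⟨hsub, fun hcc => hnot (hcc hmem)⟩))
  · have hsub : S.filter (· < v) ⊆ S.filter (· < u) := by
      intro x hx
      simp only [Finset.mem_filter] at hx ⊢
      exact ⟨hx.1, by omega⟩
    have hmem : v ∈ S.filter (· < u) := Finset.mem_filter.mpr ⟨hv, h'⟩
    have hnot : v ∉ S.filter (· < v) := by simp
    exact absurd h (Nat.ne_of_gt (Finset.card_lt_card ⟨hsub, fun hcc => hnot (hcc hmem)⟩))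

lemma sum_choose_le (r M : ℕ) : ∑ j ∈ Finset.range (r+1), Nat.choose M j ≤ Nat.choose (M + r) r := by
  induction r with
  | zero => simp
  | succ r ih =>
    rw [Finset.sum_range_succ]
    have h2 : Nat.choose M (r+1) ≤ Nat.choose (M+r) (r+1) :=
      Nat.choose_le_choose _ (by omega)
    have h3 : Nat.choose (M+r) r + Nat.choose (M+r) (r+1) = Nat.choose (M+r+1) (r+1) :=
      (Nat.choose_succ_succ (M+r) r).symm
    have h4 : M + r + 1 = M + (r+1) := by omega
    rw [h4] at h3
    omega

/-- The key counting bound: `k ≤ C(m + 2r, r)` where `m = |F_Δ|`. -/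
lemma count_key (r k : ℕ) (hr : 1 ≤ r) (hk : 1 ≤ k) (Δ : Finset ℕ → ℕ)
    (hΔ : IsColouring r k Δ) :
    k ≤ Nat.choose ((Fdelta r Δ).ncard + 2*r) r := by
  classical
  obtain ⟨φ, hφr, hφF⟩ := canonical_system r k Δ hΔ
  set colB : Finset ℕ → Finset ℕ :=
    fun B => (B.powerset.filter (fun S => S.card ≤ r)).image φ with hcolB_def
  have hcol_mono : ∀ {B B' : Finset ℕ}, B ⊆ B' → colB B ⊆ colB B' := by
    intro B B' h
    apply Finset.image_subset_image
    intro S hS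
    simp only [Finset.mem_filter, Finset.mem_powerset] at hS ⊢
    exact ⟨hS.1.trans h, hS.2⟩
  -- `F_Δ` is finite, with card `m`
  have hFsub : Fdelta r Δ ⊆ Set.Iic k := by
    rintro v ⟨X, hXinf, rfl⟩
    have hsub : coloursOn r Δ X ⊆ ↑(Finset.Icc 1 k) := by
      rintro c ⟨e, ⟨heX, hecard⟩, rfl⟩
      exact hΔ.1 e hecard
    have h1 : gamma r Δ X ≤ (Finset.Icc 1 k).card := by
      rw [gamma, ← Set.ncard_coe_finset]
      exact Set.ncard_le_ncard hsub (Finset.finite_toSet _)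
    have h2 : (Finset.Icc 1 k).card = k := by rw [Nat.card_Icc]; omega
    simp only [Set.mem_Iic]
    omega
  have hFfin : (Fdelta r Δ).Finite := (Set.finite_Iic k).subset hFsub
  set V : Finset ℕ := hFfin.toFinset with hV_def
  set m : ℕ := V.card with hm_def
  have hmF : (Fdelta r Δ).ncard = m := by
    rw [hm_def, hV_def, Set.ncard_eq_toFinset_card _ hFfin]
  set rank : ℕ → ℕ := fun v => (V.filter (· < v)).card with hrank_def
  have hrank_lt : ∀ v ∈ V, rank v < m := by
    intro v hv
    have hsub : V.filter (· < v) ⊆ V.erase v := by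
      intro x hx
      simp only [Finset.mem_filter] at hx
      exact Finset.mem_erase.mpr ⟨by omega, hx.1⟩
    have h1 : rank v ≤ (V.erase v).card := Finset.card_le_card hsub
    have h2 : (V.erase v).card = m - 1 := by rw [Finset.card_erase_of_mem hv]
    have h3 : 1 ≤ m := Finset.card_pos.mpr ⟨v, hv⟩
    omega
  have hrank_inj : ∀ u ∈ V, ∀ v ∈ V, rank u = rank v → u = v :=
    fun u hu v hv h => count_lt_inj V hu hv h
  have hrank_mono : ∀ {u v : ℕ}, u ≤ v → rank u ≤ rank v := by
    intro u v huv
    apply Finset.card_le_card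
    intro x hx
    simp only [Finset.mem_filter] at hx ⊢
    exact ⟨hx.1, by omega⟩
  -- t-values
  set tval : Finset ℕ → ℕ → ℕ :=
    fun D x => (colB (Finset.range (x+1) ∪ D.filter (fun w => x < w))).card with htval_def
  have htval_memV : ∀ D x, tval D x ∈ V := by
    intro D x
    rw [hV_def, Set.Finite.mem_toFinset]
    exact hφF _
  have htval_mono : ∀ (D : Finset ℕ) {x x' : ℕ}, x ≤ x' → tval D x ≤ tval D x' := by
    intro D x x' hxx
    apply Finset.card_le_card
    apply hcol_mono
    intro w hw
    rcases Finset.mem_union.mp hw with h | h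
    · refine Finset.mem_union_left _ ?_
      simp only [Finset.mem_range] at h ⊢
      omega
    · simp only [Finset.mem_filter] at h
      rcases Nat.lt_or_ge x' w with h2 | h2
      · exact Finset.mem_union_right _ (Finset.mem_filter.mpr ⟨h.1, h2⟩)
      · exact Finset.mem_union_left _ (Finset.mem_range.mpr (by omega))
  -- label entries
  set sfun : Finset ℕ → ℕ → ℕ :=
    fun D x => rank (tval D x) + (D.filter (· < x)).card with hsfun_def
  have hs_strict : ∀ (D : Finset ℕ) {x x' : ℕ}, x ∈ D → x' ∈ D → x < x' →
      sfun D x < sfun D x' := by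
    intro D x x' hx hx' hlt
    have h1 : rank (tval D x) ≤ rank (tval D x') := hrank_mono (htval_mono D (le_of_lt hlt))
    have h2 : (D.filter (· < x)).card < (D.filter (· < x')).card := by
      apply Finset.card_lt_card
      constructor
      · intro w hw
        simp only [Finset.mem_filter] at hw ⊢
        exact ⟨hw.1, by omega⟩
      · intro hcc
        have hmem : x ∈ D.filter (· < x') := Finset.mem_filter.mpr ⟨hx, hlt⟩
        have := hcc hmem
        simp at this
    simp only [hsfun_def]
    omega
  set Enc : Finset ℕ → Finset ℕ := fun D => D.image (sfun D) with hEnc_def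
  have hs_injOn : ∀ D : Finset ℕ, Set.InjOn (sfun D) ↑D := by
    intro D x hx y hy hxy
    by_contra hne
    rcases lt_or_gt_of_ne hne with h | h
    · exact absurd hxy (Nat.ne_of_lt (hs_strict D hx hy h))
    · exact absurd hxy (Nat.ne_of_gt (hs_strict D hy hx h))
  have hEnc_card : ∀ D : Finset ℕ, (Enc D).card = D.card := by
    intro D
    exact Finset.card_image_of_injOn (hs_injOn D)
  have hEnc_below : ∀ (D : Finset ℕ), ∀ x ∈ D,
      ((Enc D).filter (· < sfun D x)).card = (D.filter (· < x)).card := by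
    intro D x hx
    have hset : (Enc D).filter (· < sfun D x) = (D.filter (· < x)).image (sfun D) := by
      ext y
      simp only [Finset.mem_filter, hEnc_def, Finset.mem_image]
      constructor
      · rintro ⟨⟨w, hw, rfl⟩, hlt⟩
        refine ⟨w, ⟨hw, ?_⟩, rfl⟩
        by_contra hge
        push_neg at hge
        rcases Nat.eq_or_lt_of_le hge with h | h
        · subst h
          exact absurd hlt (lt_irrefl _)
        · exact absurd hlt (not_lt.mpr (le_of_lt (hs_strict D hx hw h)))
      · rintro ⟨w, hw, rfl⟩
        obtain ⟨hwD, hwx⟩ := hw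
        exact ⟨⟨w, hwD, rfl⟩, hs_strict D hwD hx hwx⟩
    rw [hset]
    apply Finset.card_image_of_injOn
    exact (hs_injOn D).mono (by
      intro w hw
      simp only [Finset.coe_filter, Set.mem_setOf_eq] at hw
      exact hw.1)
  -- minimal representatives
  have hDex : ∀ c ∈ Finset.Icc 1 k, ∃ D : Finset ℕ,
      (D.card ≤ r ∧ φ D = c) ∧
      ∀ E : Finset ℕ, E.card ≤ r → φ E = c → encode D ≤ encode E := by
    intro c hc
    obtain ⟨e, hecard, heΔ⟩ := hΔ.2 c hc
    have hPe : ∃ n : ℕ, ∃ D : Finset ℕ, (D.card ≤ r ∧ φ D = c) ∧ encode D = n :=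
      ⟨encode e, e, ⟨le_of_eq hecard, by rw [hφr e hecard, heΔ]⟩, rfl⟩
    obtain ⟨D, hD, hDenc⟩ := Nat.find_spec hPe
    refine ⟨D, hD, ?_⟩
    intro E hE1 hE2
    rw [hDenc]
    exact Nat.find_min' hPe ⟨E, ⟨hE1, hE2⟩, rfl⟩
  choose Dc hDc_prop hDc_min using hDex
  -- the exchange argument
  have main : ∀ (c : ℕ) (hc : c ∈ Finset.Icc 1 k) (c' : ℕ) (hc' : c' ∈ Finset.Icc 1 k) (x : ℕ),
      x ∈ Dc c' hc' → x ∉ Dc c hc → (∀ w, x < w → (w ∈ Dc c hc ↔ w ∈ Dc c' hc')) →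
      Enc (Dc c hc) = Enc (Dc c' hc') → False := by
    intro c hc c' hc' x hxD' hxD habove hEnceq
    set D := Dc c hc with hD_def
    set D' := Dc c' hc' with hD'_def
    obtain ⟨hDcard, hDφ⟩ := hDc_prop c hc
    obtain ⟨hD'card, hD'φ⟩ := hDc_prop c' hc'
    have hcard_eq : D.card = D'.card := by rw [← hEnc_card D, hEnceq, hEnc_card]
    set T := D'.filter (fun w => x < w) with hT_def
    have hTgt : ∀ w ∈ T, x < w := by
      intro w hw
      exact (Finset.mem_filter.mp hw).2
    have hTD' : T ⊆ D' := Finset.filter_subset _ _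
    have hTD : D.filter (fun w => x < w) = T := by
      ext w
      simp only [hT_def, Finset.mem_filter]
      constructor
      · rintro ⟨hw, hlt⟩; exact ⟨(habove w hlt).mp hw, hlt⟩
      · rintro ⟨hw, hlt⟩; exact ⟨(habove w hlt).mpr hw, hlt⟩
    set i0 := (D'.filter (· < x)).card with hi0_def
    -- counting
    have hD'count : i0 + (T.card + 1) = D'.card := by
      have hpart := Finset.card_filter_add_card_filter_not (s := D') (p := (· < x))
      have hneg : D'.filter (fun w => ¬ w < x) = insert x T := by
        ext w
        simp only [Finset.mem_filter, Finset.mem_insert, hT_def]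
        constructor
        · rintro ⟨hw, hnlt⟩
          rcases Nat.eq_or_lt_of_le (not_lt.mp hnlt) with h | h
          · exact Or.inl h.symm
          · exact Or.inr ⟨hw, h⟩
        · rintro (rfl | ⟨hw, hlt⟩)
          · exact ⟨hxD', by omega⟩
          · exact ⟨hw, by omega⟩
      have hxT : x ∉ T := by
        intro hxt
        exact absurd (hTgt x hxt) (lt_irrefl x)
      rw [hneg, Finset.card_insert_of_notMem hxT] at hpart
      omega
    have hDcount : (D.filter (· < x)).card + T.card = D.card := by
      have hpart := Finset.card_filter_add_card_filter_not (s := D) (p := (· < x))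
      have hneg : D.filter (fun w => ¬ w < x) = T := by
        rw [← hTD]
        ext w
        simp only [Finset.mem_filter]
        constructor
        · rintro ⟨hw, hnlt⟩
          have : w ≠ x := fun h => hxD (h ▸ hw)
          exact ⟨hw, by omega⟩
        · rintro ⟨hw, hlt⟩
          exact ⟨hw, by omega⟩
      rw [hneg] at hpart
      omega
    have hDlow : (D.filter (· < x)).card = i0 + 1 := by omega
    have hlow_ne : (D.filter (· < x)).Nonempty := Finset.card_pos.mp (by omega)
    set a := (D.filter (· < x)).max' hlow_ne with ha_def
    have haD : a ∈ D ∧ a < x := by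
      have := (D.filter (· < x)).max'_mem hlow_ne
      exact Finset.mem_filter.mp this
    have hDa : D.filter (fun w => a < w) = T := by
      ext w
      constructor
      · intro hw
        obtain ⟨hwD, hwa⟩ := Finset.mem_filter.mp hw
        by_cases hwx : w < x
        · have : w ≤ a := Finset.le_max' (D.filter (· < x)) w (Finset.mem_filter.mpr ⟨hwD, hwx⟩)
          omega
        · have hwne : w ≠ x := fun h => hxD (h ▸ hwD)
          rw [← hTD]
          exact Finset.mem_filter.mpr ⟨hwD, by omega⟩
      · intro hw
        rw [← hTD] at hw
        obtain ⟨hwD, hwx⟩ := Finset.mem_filter.mp hw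
        exact Finset.mem_filter.mpr ⟨hwD, by omega⟩
    have hDbelow_a : (D.filter (· < a)).card = i0 := by
      have hset : D.filter (· < a) = (D.filter (· < x)).erase a := by
        ext w
        simp only [Finset.mem_filter, Finset.mem_erase]
        constructor
        · rintro ⟨hw, hwa⟩
          exact ⟨by omega, hw, by omega⟩
        · rintro ⟨hne, hw, hwx⟩
          have : w ≤ a := Finset.le_max' (D.filter (· < x)) w (Finset.mem_filter.mpr ⟨hw, hwx⟩)
          exact ⟨hw, by omega⟩
      have hamem : a ∈ D.filter (· < x) := Finset.mem_filter.mpr ⟨haD.1, haD.2⟩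
      rw [hset, Finset.card_erase_of_mem hamem, hDlow]
      omega
    -- equal t-values
    have hseq : sfun D a = sfun D' x := by
      have h1 : sfun D a ∈ Enc D := Finset.mem_image_of_mem _ haD.1
      have h2 : sfun D' x ∈ Enc D := by
        rw [hEnceq]
        exact Finset.mem_image_of_mem _ hxD'
      apply count_lt_inj (Enc D) h1 h2
      rw [hEnc_below D a haD.1, hDbelow_a]
      conv_rhs => rw [hEnceq]
      rw [hEnc_below D' x hxD']
    have htv : tval D a = tval D' x := by
      have h1 : rank (tval D a) + i0 = rank (tval D' x) + i0 := by
        have := hseq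
        simp only [hsfun_def] at this
        rw [hDbelow_a] at this
        omega
      exact hrank_inj _ (htval_memV D a) _ (htval_memV D' x) (by omega)
    -- the exchange
    set U : Finset ℕ := Finset.range (a+1) ∪ T with hU_def
    set U' : Finset ℕ := Finset.range (x+1) ∪ T with hU'_def
    have hUU' : U ⊆ U' := by
      apply Finset.union_subset_union_left
      exact Finset.range_subset_range.mpr (by omega)
    have htvU : tval D a = (colB U).card := by
      simp only [htval_def, hU_def, hDa]
    have htvU' : tval D' x = (colB U').card := by
      simp only [htval_def, hU'_def, hT_def]
    have hcoleq : colB U = colB U' := by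
      apply Finset.eq_of_subset_of_card_le (hcol_mono hUU')
      rw [← htvU', ← htv, htvU]
    have hc'U' : c' ∈ colB U' := by
      rw [← hD'φ]
      apply Finset.mem_image_of_mem
      refine Finset.mem_filter.mpr ⟨Finset.mem_powerset.mpr ?_, hD'card⟩
      intro w hw
      by_cases hwx : w ≤ x
      · exact Finset.mem_union_left _ (Finset.mem_range.mpr (by omega))
      · refine Finset.mem_union_right _ ?_
        rw [hT_def]
        exact Finset.mem_filter.mpr ⟨hw, by omega⟩
    have hc'U : c' ∈ colB U := by rw [hcoleq]; exact hc'U'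
    obtain ⟨E, hEmem, hEφ⟩ := Finset.mem_image.mp hc'U
    obtain ⟨hEsub', hEcard⟩ := Finset.mem_filter.mp hEmem
    have hEsub : E ⊆ U := Finset.mem_powerset.mp hEsub'
    -- encode E < encode D'
    have hElt : encode E < encode D' := by
      by_cases hTE : T ⊆ E
      · apply encode_lt x hxD'
        · intro hxE
          rcases Finset.mem_union.mp (hEsub hxE) with h | h
          · have := Finset.mem_range.mp h
            omega
          · exact absurd (hTgt x h) (lt_irrefl x)
        · intro w hw
          constructor
          · intro hwE
            rcases Finset.mem_union.mp (hEsub hwE) with h | h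
            · have := Finset.mem_range.mp h
              omega
            · exact hTD' h
          · intro hwD'
            have : w ∈ T := by
              rw [hT_def]
              exact Finset.mem_filter.mpr ⟨hwD', hw⟩
            exact hTE this
      · have hne : (T \ E).Nonempty := by
          rw [Finset.sdiff_nonempty]
          exact hTE
        set t := (T \ E).max' hne with ht_def
        have htmem := (T \ E).max'_mem hne
        obtain ⟨htT, htE⟩ := Finset.mem_sdiff.mp htmem
        have htx : x < t := hTgt t htT
        apply encode_lt t (hTD' htT) htE
        intro w hw
        constructor
        · intro hwE
          rcases Finset.mem_union.mp (hEsub hwE) with h | h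
          · have := Finset.mem_range.mp h
            omega
          · exact hTD' h
        · intro hwD'
          have hwT : w ∈ T := by
            rw [hT_def]
            exact Finset.mem_filter.mpr ⟨hwD', by omega⟩
          by_contra hwE
          have : w ∈ T \ E := Finset.mem_sdiff.mpr ⟨hwT, hwE⟩
          have := Finset.le_max' _ w this
          omega
    have hfin2 : encode D' ≤ encode E := hDc_min c' hc' E hEcard hEφ
    omega
  -- wrap-up: injection into small subsets of `range (m+r)`
  set f : ℕ → Finset ℕ :=
    fun c => if hc : c ∈ Finset.Icc 1 k then Enc (Dc c hc) else ∅ with hf_def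
  have hinjOn : Set.InjOn f ↑(Finset.Icc 1 k) := by
    intro c hcmem c' hcmem' hfe
    have hc : c ∈ Finset.Icc 1 k := hcmem
    have hc' : c' ∈ Finset.Icc 1 k := hcmem'
    rw [hf_def] at hfe
    simp only [dif_pos hc, dif_pos hc'] at hfe
    by_contra hne
    have hDne : Dc c hc ≠ Dc c' hc' := by
      intro h
      apply hne
      rw [← (hDc_prop c hc).2, ← (hDc_prop c' hc').2, h]
    set sd := (Dc c hc \ Dc c' hc') ∪ (Dc c' hc' \ Dc c hc) with hsd_def
    have hsdne : sd.Nonempty := by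
      by_contra h
      rw [Finset.not_nonempty_iff_eq_empty, Finset.union_eq_empty] at h
      apply hDne
      apply Finset.Subset.antisymm
      · rw [← Finset.sdiff_eq_empty_iff_subset]; exact h.1
      · rw [← Finset.sdiff_eq_empty_iff_subset]; exact h.2
    set x := sd.max' hsdne with hx_def
    have hx := sd.max'_mem hsdne
    have habove : ∀ w, x < w → (w ∈ Dc c hc ↔ w ∈ Dc c' hc') := by
      intro w hw
      by_contra hiff
      have hwsd : w ∈ sd := by
        simp only [hsd_def, Finset.mem_union, Finset.mem_sdiff]
        tauto
      have := sd.le_max' w hwsd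
      omega
    rcases Finset.mem_union.mp hx with h | h
    · obtain ⟨hxc, hxc'⟩ := Finset.mem_sdiff.mp h
      exact main c' hc' c hc x hxc hxc' (fun w hw => (habove w hw).symm) hfe.symm
    · obtain ⟨hxc', hxc⟩ := Finset.mem_sdiff.mp h
      exact main c hc c' hc' x hxc' hxc habove hfe
  have hmaps : ∀ c ∈ Finset.Icc 1 k,
      f c ∈ (Finset.range (m+r)).powerset.filter (fun A => A.card ≤ r) := by
    intro c hc
    rw [hf_def]
    simp only [dif_pos hc]
    refine Finset.mem_filter.mpr ⟨Finset.mem_powerset.mpr ?_, ?_⟩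
    · intro y hy
      obtain ⟨w, hwD, rfl⟩ := Finset.mem_image.mp hy
      have h1 : rank (tval (Dc c hc) w) < m := hrank_lt _ (htval_memV _ _)
      have h2 : ((Dc c hc).filter (· < w)).card ≤ r - 1 := by
        have hsub : (Dc c hc).filter (· < w) ⊆ (Dc c hc).erase w := by
          intro u hu
          obtain ⟨huD, hul⟩ := Finset.mem_filter.mp hu
          exact Finset.mem_erase.mpr ⟨by omega, huD⟩
        have := Finset.card_le_card hsub
        rw [Finset.card_erase_of_mem hwD] at this
        have := (hDc_prop c hc).1
        omega
      refine Finset.mem_range.mpr ?_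
      simp only [hsfun_def]
      omega
    · rw [hEnc_card]
      exact (hDc_prop c hc).1
  have hcardk : (Finset.Icc 1 k).card = k := by rw [Nat.card_Icc]; omega
  have hkle : k ≤ ((Finset.range (m+r)).powerset.filter (fun A => A.card ≤ r)).card := by
    rw [← hcardk]
    exact Finset.card_le_card_of_injOn f hmaps hinjOn
  have hPcard : ((Finset.range (m+r)).powerset.filter (fun A => A.card ≤ r)).card
      = ∑ j ∈ Finset.range (r+1), Nat.choose (m+r) j := by
    have hP : (Finset.range (m+r)).powerset.filter (fun A => A.card ≤ r)
        = (Finset.range (r+1)).biUnion (fun j => (Finset.range (m+r)).powersetCard j) := by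
      ext A
      simp only [Finset.mem_filter, Finset.mem_powerset, Finset.mem_biUnion, Finset.mem_range,
        Finset.mem_powersetCard]
      constructor
      · rintro ⟨h1, h2⟩
        exact ⟨A.card, by omega, h1, rfl⟩
      · rintro ⟨j, hj, h1, h2⟩
        exact ⟨h1, by omega⟩
    rw [hP, Finset.card_biUnion]
    · apply Finset.sum_congr rfl
      intro j _
      rw [Finset.card_powersetCard, Finset.card_range]
    · intro j hj j' hj' hne
      rw [Function.onFun, Finset.disjoint_left]
      intro A hA hA'
      rw [Finset.mem_powersetCard] at hA hA'
      exact hne (hA.2 ▸ hA'.2 ▸ rfl)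
  have hfinal : k ≤ Nat.choose (m + r + r) r := by
    calc k ≤ _ := hkle
      _ = ∑ j ∈ Finset.range (r+1), Nat.choose (m+r) j := hPcard
      _ ≤ Nat.choose (m + r + r) r := sum_choose_le r (m+r)
  rw [hmF]
  have : m + 2*r = m + r + r := by omega
  rw [this]
  exact hfinal

end FdeltaAux

/-- For every `r ≥ 2` there is a constant `C_r` such that every surjective colouring
`Δ : ℕ^(r) ↠ [k]` satisfies `|F_Δ| ≥ (r!·k)^(1/r) - C_r`. -/
theorem Fdelta_card_lower_bound (r : ℕ) (hr : 2 ≤ r) :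
    ∃ C : ℝ, ∀ (k : ℕ), 1 ≤ k → ∀ Δ : Finset ℕ → ℕ, IsColouring r k Δ →
      ((Nat.factorial r * k : ℕ) : ℝ) ^ ((1 : ℝ) / (r : ℝ)) - C ≤ ((Fdelta r Δ).ncard : ℝ) := by
  refine ⟨((2*r : ℕ) : ℝ), ?_⟩
  intro k hk Δ hΔ
  set m := (Fdelta r Δ).ncard with hm
  have h1 : k ≤ Nat.choose (m + 2*r) r := FdeltaAux.count_key r k (by omega) hk Δ hΔ
  have h2 : Nat.factorial r * k ≤ (m + 2*r)^r := by
    calc Nat.factorial r * k ≤ Nat.factorial r * Nat.choose (m + 2*r) r :=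
          Nat.mul_le_mul_left _ h1
      _ = (m + 2*r).descFactorial r := (Nat.descFactorial_eq_factorial_mul_choose _ _).symm
      _ ≤ (m + 2*r)^r := Nat.descFactorial_le_pow _ _
  have hrpos : (0:ℝ) < (r:ℝ) := by
    have : 0 < r := by omega
    exact_mod_cast this
  have hxle : ((Nat.factorial r * k : ℕ) : ℝ) ≤ ((m + 2*r : ℕ) : ℝ)^(r:ℕ) := by
    exact_mod_cast h2
  have hexp : (0:ℝ) ≤ 1 / (r:ℝ) := by positivity
  have hrpow : ((Nat.factorial r * k : ℕ) : ℝ) ^ ((1:ℝ)/(r:ℝ))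
      ≤ (((m + 2*r : ℕ) : ℝ)^(r:ℕ)) ^ ((1:ℝ)/(r:ℝ)) :=
    Real.rpow_le_rpow (by positivity) hxle hexp
  have hy : (0:ℝ) ≤ ((m + 2*r : ℕ) : ℝ) := by positivity
  have hsimp : (((m + 2*r : ℕ) : ℝ)^(r:ℕ)) ^ ((1:ℝ)/(r:ℝ)) = ((m + 2*r : ℕ) : ℝ) := by
    rw [← Real.rpow_natCast ((m + 2*r : ℕ) : ℝ) r, ← Real.rpow_mul hy, mul_one_div,
      div_self (ne_of_gt hrpos), Real.rpow_one]
  rw [hsimp] at hrpow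
  push_cast at hrpow ⊢
  linarith
end
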